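/- arXiv:2406.05043 — 7 statements merged into one kernel-verified Lean document; each statement's English description precedes it below -/
import Mathlib

section
/- Let μ > 0 and let q : ℕ → ℝ satisfy q_n ≥ 0 for all n, ∑_{n=0}^∞ q_n = 1, ∑_{n=0}^∞ n·q_n = μ, and ∑_{n=0}^∞ n²·q_n < ∞. Then ∑_{n=0}^∞ F[q]_n = 0 and ∑_{n=0}^∞ n·F[q]_n = 0; in particular the total probability mass and the mean are conserved quantities of the dispersion generator. -/
open Finset Filter Topology

/-- The generator of the mean-field dispersion process. -/
noncomputable def dispGen (μ : ℝ) (q : ℕ → ℝ) : ℕ → ℝ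
  | 0 => -(μ - q 1) * q 0
  | 1 => 2 * q 2 - (μ - q 1) * (q 1 - q 0)
  | n + 2 => ((n : ℝ) + 3) * q (n + 3) - ((n : ℝ) + 2) * q (n + 2)
      - (μ - q 1) * (q (n + 2) - q (n + 1))

lemma dispGen_sum_range (μ : ℝ) (q : ℕ → ℝ) (N : ℕ) :
    ∑ i ∈ Finset.range (N + 3), dispGen μ q i
      = ((N : ℝ) + 3) * q (N + 3) - (μ - q 1) * q (N + 2) := by
  induction N with
  | zero =>
      simp only [show (3:ℕ) = 2 + 1 from rfl, Finset.sum_range_succ]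
      simp [dispGen]
      ring
  | succ n ih =>
      rw [Finset.sum_range_succ, ih]
      have h : dispGen μ q (n + 1 + 2)
          = ((n : ℝ) + 1 + 3) * q (n + 1 + 3) - ((n : ℝ) + 1 + 2) * q (n + 1 + 2)
            - (μ - q 1) * (q (n + 1 + 2) - q (n + 1 + 1)) := by
        simp [dispGen]
      rw [h]
      push_cast
      ring

lemma dispGen_mul_sum_range (μ : ℝ) (q : ℕ → ℝ) (N : ℕ) :
    ∑ i ∈ Finset.range (N + 3), (i : ℝ) * dispGen μ q i
      = ((N : ℝ) + 2) * ((N : ℝ) + 3) * q (N + 3)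
        - ((∑ n ∈ Finset.range (N + 3), (n : ℝ) * q n) - q 1)
        - (μ - q 1) * (((N : ℝ) + 2) * q (N + 2)
            - ∑ n ∈ Finset.range (N + 2), q n) := by
  induction N with
  | zero =>
      simp only [show (3:ℕ) = 2 + 1 from rfl, show (2:ℕ) = 1 + 1 from rfl,
        Finset.sum_range_succ]
      simp [dispGen]
      ring
  | succ n ih =>
      rw [Finset.sum_range_succ, ih]
      have h : dispGen μ q (n + 1 + 2)
          = ((n : ℝ) + 1 + 3) * q (n + 1 + 3) - ((n : ℝ) + 1 + 2) * q (n + 1 + 2)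
            - (μ - q 1) * (q (n + 1 + 2) - q (n + 1 + 1)) := by
        simp [dispGen]
      rw [h, show n + 1 + 3 = (n + 3) + 1 from rfl, show n + 1 + 2 = (n + 2) + 1 from rfl,
        Finset.sum_range_succ (fun m : ℕ => (m : ℝ) * q m) (n + 3),
        Finset.sum_range_succ q (n + 2)]
      push_cast
      ring

theorem mass_and_mean_conservation (μ : ℝ) (hμ : 0 < μ) (q : ℕ → ℝ)
    (hpos : ∀ n, 0 ≤ q n) (hmass : HasSum q 1)
    (hmean : HasSum (fun n : ℕ => (n : ℝ) * q n) μ)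
    (hmom2 : Summable (fun n : ℕ => (n : ℝ) ^ 2 * q n)) :
    HasSum (fun n => dispGen μ q n) 0 ∧
    HasSum (fun n : ℕ => (n : ℝ) * dispGen μ q n) 0 := by
  have s0 : Summable q := hmass.summable
  have s1 : Summable (fun n : ℕ => (n : ℝ) * q n) := hmean.summable
  have sQ : ∀ k : ℕ, Summable (fun n : ℕ => q (n + k)) :=
    fun k => (summable_nat_add_iff k).mpr s0
  have sL : ∀ k : ℕ, Summable (fun n : ℕ => ((n + k : ℕ) : ℝ) * q (n + k)) :=
    fun k => (summable_nat_add_iff (f := fun n : ℕ => (n : ℝ) * q n) k).mpr s1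
  have sS : ∀ k : ℕ, Summable (fun n : ℕ => ((n + k : ℕ) : ℝ) ^ 2 * q (n + k)) :=
    fun k => (summable_nat_add_iff (f := fun n : ℕ => (n : ℝ) ^ 2 * q n) k).mpr hmom2
  -- summability of the generator
  have hsum1 : Summable (dispGen μ q) := by
    rw [← summable_nat_add_iff 2]
    have : Summable (fun n : ℕ =>
        ((n + 3 : ℕ) : ℝ) * q (n + 3) - ((n + 2 : ℕ) : ℝ) * q (n + 2)
          - (μ - q 1) * (q (n + 2) - q (n + 1))) :=
      ((sL 3).sub (sL 2)).sub (((sQ 2).sub (sQ 1)).mul_left (μ - q 1))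
    refine this.congr fun n => ?_
    simp only [dispGen]
    push_cast
    ring
  have hsum2 : Summable (fun n : ℕ => (n : ℝ) * dispGen μ q n) := by
    rw [← summable_nat_add_iff 2]
    have : Summable (fun n : ℕ =>
        (((n + 3 : ℕ) : ℝ) ^ 2 * q (n + 3) - ((n + 3 : ℕ) : ℝ) * q (n + 3))
          - ((n + 2 : ℕ) : ℝ) ^ 2 * q (n + 2)
          - (μ - q 1) * (((n + 2 : ℕ) : ℝ) * q (n + 2)
              - (((n + 1 : ℕ) : ℝ) * q (n + 1) + q (n + 1)))) :=
      (((sS 3).sub (sL 3)).sub (sS 2)).sub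
        (((sL 2).sub ((sL 1).add (sQ 1))).mul_left (μ - q 1))
    refine this.congr fun n => ?_
    simp only [dispGen]
    push_cast
    ring
  -- limits of the building blocks
  have tq : Filter.Tendsto q Filter.atTop (nhds 0) := s0.tendsto_atTop_zero
  have tqk : ∀ k : ℕ, Filter.Tendsto (fun n : ℕ => q (n + k)) Filter.atTop (nhds 0) :=
    fun k => tq.comp (Filter.tendsto_add_atTop_nat k)
  have tlk : ∀ k : ℕ, Filter.Tendsto (fun n : ℕ => ((n + k : ℕ) : ℝ) * q (n + k))
      Filter.atTop (nhds 0) :=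
    fun k => (s1.tendsto_atTop_zero).comp (Filter.tendsto_add_atTop_nat k)
  have tsk : ∀ k : ℕ, Filter.Tendsto (fun n : ℕ => ((n + k : ℕ) : ℝ) ^ 2 * q (n + k))
      Filter.atTop (nhds 0) :=
    fun k => (hmom2.tendsto_atTop_zero).comp (Filter.tendsto_add_atTop_nat k)
  -- first conservation law
  have h1 : HasSum (dispGen μ q) 0 := by
    have hlim : Filter.Tendsto (fun N : ℕ => ∑ i ∈ Finset.range (N + 3), dispGen μ q i)
        Filter.atTop (nhds 0) := by
      have h' : Filter.Tendsto
          (fun N : ℕ => ((N + 3 : ℕ) : ℝ) * q (N + 3) - (μ - q 1) * q (N + 2))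
          Filter.atTop (nhds (0 - (μ - q 1) * 0)) :=
        (tlk 3).sub ((tqk 2).const_mul (μ - q 1))
      simp only [mul_zero, sub_zero] at h'
      refine h'.congr fun N => ?_
      rw [dispGen_sum_range]
      push_cast
      ring
    have hlim' : Filter.Tendsto (fun N : ℕ => ∑ i ∈ Finset.range (N + 3), dispGen μ q i)
        Filter.atTop (nhds (∑' n : ℕ, dispGen μ q n)) :=
      hsum1.hasSum.tendsto_sum_nat.comp (Filter.tendsto_add_atTop_nat 3)
    have ht : ∑' n : ℕ, dispGen μ q n = 0 := tendsto_nhds_unique hlim' hlim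
    have := hsum1.hasSum
    rwa [ht] at this
  refine ⟨h1, ?_⟩
  -- second conservation law
  have hmean3 : Filter.Tendsto (fun N : ℕ => ∑ n ∈ Finset.range (N + 3), (n : ℝ) * q n)
      Filter.atTop (nhds μ) :=
    hmean.tendsto_sum_nat.comp (Filter.tendsto_add_atTop_nat 3)
  have hmass2 : Filter.Tendsto (fun N : ℕ => ∑ n ∈ Finset.range (N + 2), q n)
      Filter.atTop (nhds 1) :=
    hmass.tendsto_sum_nat.comp (Filter.tendsto_add_atTop_nat 2)
  have tprod : Filter.Tendsto (fun N : ℕ => ((N : ℝ) + 2) * ((N : ℝ) + 3) * q (N + 3))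
      Filter.atTop (nhds 0) := by
    have h' : Filter.Tendsto
        (fun N : ℕ => ((N + 3 : ℕ) : ℝ) ^ 2 * q (N + 3) - ((N + 3 : ℕ) : ℝ) * q (N + 3))
        Filter.atTop (nhds (0 - 0)) := (tsk 3).sub (tlk 3)
    simp only [sub_zero] at h'
    refine h'.congr fun N => ?_
    push_cast
    ring
  have hlim : Filter.Tendsto
      (fun N : ℕ => ∑ i ∈ Finset.range (N + 3), (i : ℝ) * dispGen μ q i)
      Filter.atTop (nhds 0) := by
    have h' : Filter.Tendsto (fun N : ℕ =>
        ((N : ℝ) + 2) * ((N : ℝ) + 3) * q (N + 3)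
          - ((∑ n ∈ Finset.range (N + 3), (n : ℝ) * q n) - q 1)
          - (μ - q 1) * (((N + 2 : ℕ) : ℝ) * q (N + 2)
              - ∑ n ∈ Finset.range (N + 2), q n))
        Filter.atTop (nhds (0 - (μ - q 1) - (μ - q 1) * (0 - 1))) :=
      (tprod.sub (hmean3.sub_const (q 1))).sub
        (((tlk 2).sub hmass2).const_mul (μ - q 1))
    have h0 : (0 : ℝ) - (μ - q 1) - (μ - q 1) * (0 - 1) = 0 := by ring
    rw [h0] at h'
    refine h'.congr fun N => ?_
    rw [dispGen_mul_sum_range]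
    push_cast
    ring
  have hlim' : Filter.Tendsto
      (fun N : ℕ => ∑ i ∈ Finset.range (N + 3), (i : ℝ) * dispGen μ q i)
      Filter.atTop (nhds (∑' n : ℕ, (n : ℝ) * dispGen μ q n)) :=
    hsum2.hasSum.tendsto_sum_nat.comp (Filter.tendsto_add_atTop_nat 3)
  have ht : ∑' n : ℕ, (n : ℝ) * dispGen μ q n = 0 := tendsto_nhds_unique hlim' hlim
  have := hsum2.hasSum
  rwa [ht] at this
end

section
/- Let μ ∈ (0,1]. A sequence q ∈ S_μ satisfies F[q]_n = 0 for all n ∈ ℕ if and only if q = p*, where p* is the Bernoulli distribution with mean μ. In other words, p* is the unique equilibrium of the mean-field dispersion system in S_μ when μ ∈ (0,1]. -/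
/-- Membership in the state space `S_μ` of probability distributions on ℕ with mean `μ`. -/
def memS (μ : ℝ) (q : ℕ → ℝ) : Prop :=
  (∀ n, 0 ≤ q n ∧ q n ≤ 1) ∧ HasSum q 1 ∧ HasSum (fun n : ℕ => (n : ℝ) * q n) μ

/-- The Bernoulli distribution with mean `μ`. -/
noncomputable def bern (μ : ℝ) : ℕ → ℝ
  | 0 => 1 - μ
  | 1 => μ
  | _ + 2 => 0

theorem bernoulli_unique_equilibrium (μ : ℝ) (hμ0 : 0 < μ) (hμ1 : μ ≤ 1)
    (q : ℕ → ℝ) (hq : memS μ q) :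
    (∀ n, dispGen μ q n = 0) ↔ q = bern μ := by
  obtain ⟨hpos, hsum, hmean⟩ := hq
  constructor
  · intro h
    by_cases hc0 : μ - q 1 = 0
    · -- q 1 = μ
      have hq1 : q 1 = μ := by linarith
      have hq2 : q 2 = 0 := by
        have h1 := h 1
        simp only [dispGen, hc0] at h1
        linarith
      have hz : ∀ n, q (n + 2) = 0 := by
        intro n
        induction n with
        | zero => exact hq2
        | succ k ih =>
          have hk := h (k + 2)
          simp only [dispGen, hc0] at hk
          have : ((k : ℝ) + 3) * q (k + 3) = 0 := by
            rw [ih] at hk; linarith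
          have hk3 : ((k : ℝ) + 3) ≠ 0 := by positivity
          have := mul_eq_zero.mp this
          rcases this with h' | h'
          · exact absurd h' hk3
          · exact h'
      have hfin : HasSum q (q 0 + q 1) := by
        have := hasSum_sum_of_ne_finset_zero (s := ({0, 1} : Finset ℕ)) (f := q) (L := SummationFilter.unconditional ℕ)
          (by
            intro b hb
            simp only [Finset.mem_insert, Finset.mem_singleton] at hb
            push_neg at hb
            obtain ⟨hb0, hb1⟩ := hb
            match b, hb0, hb1 with
            | (n + 2), _, _ => exact hz n)
        simpa using this
      have hq0 : q 0 = 1 - μ := by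
        have := hfin.unique hsum
        linarith
      funext n
      match n with
      | 0 => simpa [bern] using hq0
      | 1 => simpa [bern] using hq1
      | n + 2 => simpa [bern] using hz n
    · -- derive contradiction
      exfalso
      have hq0 : q 0 = 0 := by
        have h0 := h 0
        simp only [dispGen] at h0
        rcases mul_eq_zero.mp h0 with h' | h'
        · exact absurd (by linarith : μ - q 1 = 0) hc0
        · exact h'
      have hg : HasSum (fun n : ℕ => ((n : ℝ) - 1) * q n) (μ - 1) := by
        have := hmean.sub hsum
        convert this using 2 with n
        · rfl
        ring
      have hgnn : ∀ n : ℕ, 0 ≤ ((n : ℝ) - 1) * q n := by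
        intro n
        match n with
        | 0 => simp [hq0]
        | (m + 1) =>
          apply mul_nonneg
          · push_cast; linarith
          · exact (hpos (m + 1)).1
      have hμeq : μ = 1 := by
        have : (0 : ℝ) ≤ μ - 1 := hasSum_le hgnn hasSum_zero hg
        linarith
      have hg0 : HasSum (fun n : ℕ => ((n : ℝ) - 1) * q n) 0 := by
        rw [hμeq] at hg; simpa using hg
      have hz : ∀ n, q (n + 2) = 0 := by
        intro n
        have hle : ((n : ℝ) + 2 - 1) * q (n + 2) ≤ 0 := by
          have := le_hasSum hg0 (n + 2) (fun j _ => hgnn j)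
          simpa using this
        have hge : 0 ≤ ((n : ℝ) + 2 - 1) * q (n + 2) := by
          have := hgnn (n + 2); push_cast at this ⊢; linarith
        have h0 : ((n : ℝ) + 2 - 1) * q (n + 2) = 0 := le_antisymm hle hge
        have hne : ((n : ℝ) + 2 - 1) ≠ 0 := by
          have : (0:ℝ) ≤ (n:ℝ) := Nat.cast_nonneg n
          intro hh; linarith
        rcases mul_eq_zero.mp h0 with h' | h'
        · exact absurd h' hne
        · exact h'
      have hfin : HasSum q (q 0 + q 1) := by
        have := hasSum_sum_of_ne_finset_zero (s := ({0, 1} : Finset ℕ)) (f := q) (L := SummationFilter.unconditional ℕ)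
          (by
            intro b hb
            simp only [Finset.mem_insert, Finset.mem_singleton] at hb
            push_neg at hb
            obtain ⟨hb0, hb1⟩ := hb
            match b, hb0, hb1 with
            | (n + 2), _, _ => exact hz n)
        simpa using this
      have hq1 : q 1 = 1 := by
        have := hfin.unique hsum
        linarith
      exact hc0 (by rw [hq1, hμeq]; ring)
  · intro h
    subst h
    intro n
    match n with
    | 0 => simp [dispGen, bern]
    | 1 => simp [dispGen, bern]
    | n + 2 => simp [dispGen, bern]
end

section
/- Let μ > 1. There exists a unique real number ν in the open interval (μ−1, μ) satisfying (μ − ν)·e^ν = μ, and a sequence q ∈ S_μ satisfies F[q]_n = 0 for all n ∈ ℕ if and only if q = p̄, the zero-truncated Poisson distribution with parameter ν. In other words, p̄ is the unique equilibrium of the mean-field dispersion system in S_μ when μ > 1. -/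
/-- The zero-truncated Poisson distribution with parameter `ν`. -/
noncomputable def ztPoisson (ν : ℝ) : ℕ → ℝ
  | 0 => 0
  | n + 1 => ν ^ (n + 1) / ((Nat.factorial (n + 1) : ℝ) * (Real.exp ν - 1))

lemma gAnti (μ : ℝ) : StrictAntiOn (fun ν : ℝ => (μ - ν) * Real.exp ν) (Set.Ici (μ - 1)) := by
  apply strictAntiOn_of_deriv_neg (convex_Ici _)
  · fun_prop
  · intro x hx
    rw [interior_Ici] at hx
    have hd : HasDerivAt (fun ν : ℝ => (μ - ν) * Real.exp ν) ((μ - x - 1) * Real.exp x) x := by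
      have h1 : HasDerivAt (fun ν : ℝ => μ - ν) (-1) x := by
        simpa using (hasDerivAt_id x).const_sub μ
      have : HasDerivAt (fun ν : ℝ => (μ - ν) * Real.exp ν) (-1 * Real.exp x + (μ - x) * Real.exp x) x :=
        h1.mul (Real.hasDerivAt_exp x)
      convert this using 1; ring
    rw [hd.deriv]
    have : μ - x - 1 < 0 := by simp at hx; linarith
    nlinarith [Real.exp_pos x]

lemma hasSum_exp_shift (x : ℝ) :
    HasSum (fun n : ℕ => x ^ (n + 1) / (Nat.factorial (n + 1) : ℝ)) (Real.exp x - 1) := by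
  have h : HasSum (fun n : ℕ => x ^ n / (Nat.factorial n : ℝ)) (Real.exp x) := by
    rw [Real.exp_eq_exp_ℝ]
    exact NormedSpace.expSeries_div_hasSum_exp x
  refine (hasSum_nat_add_iff (f := fun n : ℕ => x ^ n / (Nat.factorial n : ℝ)) 1).2 ?_
  simpa using h

lemma zt_rec (ν : ℝ) (hE : Real.exp ν - 1 ≠ 0) (n : ℕ) :
    ((n : ℝ) + 2) * ztPoisson ν (n + 2) = ν * ztPoisson ν (n + 1) := by
  have hf1 : ((Nat.factorial (n + 1) : ℝ)) ≠ 0 := by positivity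
  show ((n : ℝ) + 2) * (ν ^ (n + 2) / ((Nat.factorial (n + 2) : ℝ) * (Real.exp ν - 1)))
      = ν * (ν ^ (n + 1) / ((Nat.factorial (n + 1) : ℝ) * (Real.exp ν - 1)))
  rw [Nat.factorial_succ (n + 1)]
  push_cast
  field_simp
  ring

theorem ztPoisson_unique_equilibrium (μ : ℝ) (hμ : 1 < μ) :
    ∃! ν : ℝ, ν ∈ Set.Ioo (μ - 1) μ ∧ (μ - ν) * Real.exp ν = μ ∧
      ∀ q : ℕ → ℝ, memS μ q → ((∀ n, dispGen μ q n = 0) ↔ q = ztPoisson ν) := by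
  -- existence of the root ν
  have hexp : μ < Real.exp (μ - 1) := by
    have := Real.add_one_lt_exp (x := μ - 1) (by linarith)
    linarith
  obtain ⟨ν, hνmem, hνeq⟩ : ∃ ν ∈ Set.Ioo (μ - 1) μ, (μ - ν) * Real.exp ν = μ := by
    have hc : ContinuousOn (fun ν : ℝ => (μ - ν) * Real.exp ν) (Set.Icc (μ - 1) μ) := by
      fun_prop
    have hsub := intermediate_value_Ioo' (a := μ - 1) (b := μ)
      (f := fun ν : ℝ => (μ - ν) * Real.exp ν) (by linarith) hc
    have hmem : μ ∈ Set.Ioo ((μ - μ) * Real.exp μ) ((μ - (μ - 1)) * Real.exp (μ - 1)) := by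
      constructor
      · simp; linarith
      · simpa using hexp
    obtain ⟨ν, hν1, hν2⟩ := hsub hmem
    exact ⟨ν, hν1, hν2⟩
  have hν0 : 0 < ν := by have := hνmem.1; linarith
  have hE : 1 < Real.exp ν := by
    have := Real.add_one_lt_exp (ne_of_gt hν0); linarith
  have hEne : Real.exp ν - 1 ≠ 0 := by linarith
  -- key: μ - ztPoisson ν 1 = ν
  have hq1 : ztPoisson ν 1 = ν / (Real.exp ν - 1) := by
    show ν ^ (0 + 1) / ((Nat.factorial 1 : ℝ) * (Real.exp ν - 1)) = _
    norm_num
  have hμν : μ - ztPoisson ν 1 = ν := by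
    rw [hq1]
    field_simp
    nlinarith [hνeq]
  refine ⟨ν, ⟨hνmem, hνeq, ?_⟩, ?_⟩
  · -- main characterization
    intro q hq
    constructor
    · -- forward: equilibrium ⇒ q = ztPoisson ν
      intro h
      set l := μ - q 1 with hl
      have hl0 : 0 < l := by have := (hq.1 1).2; simp only [hl]; linarith
      have hq0 : q 0 = 0 := by
        have h0 := h 0
        simp only [dispGen] at h0
        rw [← hl] at h0
        have : l * q 0 = 0 := by linarith [h0, neg_mul l (q 0)]
        rcases mul_eq_zero.1 this with h' | h'
        · exact absurd h' (ne_of_gt hl0)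
        · exact h'
      have hrec : ∀ n : ℕ, ((n : ℝ) + 2) * q (n + 2) = l * q (n + 1) := by
        intro n
        induction n with
        | zero =>
          have h1 := h 1
          simp only [dispGen, hq0] at h1
          rw [← hl] at h1
          push_cast
          linear_combination h1
        | succ m ih =>
          have h2 := h (m + 2)
          simp only [dispGen] at h2
          rw [← hl] at h2
          push_cast
          show ((m : ℝ) + 1 + 2) * q (m + 3) = l * q (m + 2)
          linear_combination h2 + ih
      have hclosed : ∀ n : ℕ, q (n + 1) = q 1 * l ^ n / (Nat.factorial (n + 1) : ℝ) := by
        intro n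
        induction n with
        | zero => simp
        | succ m ih =>
          have hr := hrec m
          have hm2 : ((m : ℝ) + 2) ≠ 0 := by positivity
          have hfne : ((Nat.factorial (m + 1) : ℝ)) ≠ 0 := by positivity
          have : q (m + 2) = l * q (m + 1) / ((m : ℝ) + 2) := by
            field_simp at hr ⊢; linarith
          rw [this, ih, Nat.factorial_succ (m + 1)]
          push_cast
          field_simp
          ring
      -- use sum = 1 to pin down q 1
      have hs1 : HasSum (fun n : ℕ => q (n + 1)) 1 := by
        refine (hasSum_nat_add_iff 1).2 ?_
        simpa [hq0] using hq.2.1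
      have hs2 : HasSum (fun n : ℕ => q (n + 1)) (q 1 / l * (Real.exp l - 1)) := by
        have := (hasSum_exp_shift l).mul_left (q 1 / l)
        refine this.congr_fun fun n => ?_
        rw [hclosed n]
        field_simp
        ring
      have hsum : q 1 / l * (Real.exp l - 1) = 1 := hs2.unique hs1
      have hEl : 1 < Real.exp l := by
        have := Real.add_one_lt_exp (ne_of_gt hl0); linarith
      have hq1l : q 1 * (Real.exp l - 1) = l := by
        field_simp at hsum; linarith
      -- l satisfies the same equation as ν
      have hgl : (μ - l) * Real.exp l = μ := by
        have : μ - l = q 1 := by simp [hl]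
        rw [this]
        nlinarith [hq1l]
      -- hence l = ν by strict antitonicity
      have hlν : l = ν := by
        have h1 : l ∈ Set.Ici (μ - 1) := by
          have := (hq.1 1).2; simp only [Set.mem_Ici, hl]; linarith
        have h2 : ν ∈ Set.Ici (μ - 1) := le_of_lt hνmem.1
        exact (gAnti μ).injOn h1 h2 (by rw [hgl, hνeq])
      -- conclude q = ztPoisson ν
      have hq1ν : q 1 = ν / (Real.exp ν - 1) := by
        rw [hlν] at hq1l
        have hEνne : Real.exp ν - 1 ≠ 0 := by linarith
        field_simp
        linarith
      funext n
      match n with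
      | 0 => simpa [ztPoisson] using hq0
      | n + 1 =>
        show q (n + 1) = ν ^ (n + 1) / ((Nat.factorial (n + 1) : ℝ) * (Real.exp ν - 1))
        rw [hclosed n, hlν, hq1ν]
        have hfne : ((Nat.factorial (n + 1) : ℝ)) ≠ 0 := by positivity
        have hEνne : Real.exp ν - 1 ≠ 0 := by linarith
        field_simp
        ring
    · -- backward: q = ztPoisson ν ⇒ equilibrium
      rintro rfl
      intro n
      match n with
      | 0 => simp [dispGen, ztPoisson]
      | 1 =>
        have := zt_rec ν hEne 0
        simp only [dispGen, hμν]
        show 2 * ztPoisson ν 2 - ν * (ztPoisson ν 1 - ztPoisson ν 0) = 0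
        have h0 : ztPoisson ν 0 = 0 := rfl
        push_cast at this
        rw [h0]
        linarith
      | n + 2 =>
        have h1 := zt_rec ν hEne (n + 1)
        have h2 := zt_rec ν hEne n
        simp only [dispGen, hμν]
        push_cast at h1 h2 ⊢
        linarith
  · -- uniqueness of ν
    rintro ν' ⟨hν'mem, hν'eq, -⟩
    exact (gAnti μ).injOn (le_of_lt hν'mem.1) (le_of_lt hνmem.1) (by rw [hν'eq, hνeq])
end

section
/- Let μ > 0 and let q ∈ S_μ satisfy ∑_{n=0}^∞ n³·q_n < ∞. Then the series ∑_{n=0}^∞ n²·F[q]_n converges absolutely and ∑_{n=0}^∞ n²·F[q]_n = −2·(∑_{n=0}^∞ n²·q_n − μ) + 2μ·(μ − q_1). In particular, along a classical solution p(t) of the mean-field dispersion system the energy E[p(t)] = ∑_{n=0}^∞ n²·p_n(t) − μ satisfies (d/dt)E[p(t)] = −2·E[p(t)] + 2μ·(μ − p_1(t)). -/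
/-- A classical solution of the mean-field dispersion system with mean `μ`. -/
def IsSol (μ : ℝ) (p : ℝ → ℕ → ℝ) : Prop :=
  (∀ t, 0 ≤ t → ∀ n, 0 ≤ p t n) ∧
  (∀ t, 0 ≤ t → HasSum (fun n => p t n) 1) ∧
  (∀ t, 0 ≤ t → HasSum (fun n : ℕ => (n : ℝ) * p t n) μ) ∧
  (∀ t, 0 ≤ t → ∀ n, HasDerivWithinAt (fun s => p s n) (dispGen μ (p t) n) (Set.Ici 0) t)

open Finset Filter Set MeasureTheory intervalIntegral Topology

lemma sum_weight (μ : ℝ) (q w : ℕ → ℝ) (hw0 : w 0 = 0) (j : ℕ) :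
    ∑ n ∈ Finset.range (j+3), w n * dispGen μ q n =
      w 1 * q 1
      + ∑ k ∈ Finset.range (j+2),
          (((k:ℝ)+1) * q (k+1) * (w k - w (k+1)) + (μ - q 1) * ((w (k+1) - w k) * q k))
      + w (j+2) * (((j:ℝ)+3) * q (j+3))
      - (μ - q 1) * (w (j+2) * q (j+2)) := by
  induction j with
  | zero =>
    simp [Finset.sum_range_succ, dispGen, hw0]; ring
  | succ j ih =>
    have hd : dispGen μ q (j+3) = ((j:ℝ)+4) * q (j+4) - ((j:ℝ)+3) * q (j+3)
        - (μ - q 1) * (q (j+3) - q (j+2)) := by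
      show dispGen μ q ((j+1)+2) = _
      simp only [dispGen, add_assoc, Nat.reduceAdd]
      push_cast; ring
    conv_lhs => rw [show j+1+3 = (j+3)+1 from rfl, Finset.sum_range_succ]
    rw [ih, hd]
    conv_rhs => rw [show j+1+2 = (j+2)+1 from rfl, Finset.sum_range_succ]
    simp only [add_assoc, Nat.reduceAdd]
    push_cast
    ring


-- truncated square weight
noncomputable def phi (N n : ℕ) : ℝ := (n:ℝ)^2 - ((n - N : ℕ):ℝ)^2

lemma phi_zero (N : ℕ) : phi N 0 = 0 := by simp [phi]

lemma phi_nonneg (N n : ℕ) : 0 ≤ phi N n := by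
  have h : ((n - N : ℕ):ℝ) ≤ (n:ℝ) := by exact_mod_cast Nat.sub_le n N
  have h0 : (0:ℝ) ≤ ((n - N : ℕ):ℝ) := Nat.cast_nonneg _
  have := sq_nonneg ((n:ℝ) - ((n - N : ℕ):ℝ))
  simp only [phi]
  nlinarith

lemma phi_le_sq (N n : ℕ) : phi N n ≤ (n:ℝ)^2 := by
  have := sq_nonneg (((n - N : ℕ):ℝ))
  simp only [phi]; linarith

lemma phi_eq_sq (N n : ℕ) (h : n ≤ N) : phi N n = (n:ℝ)^2 := by
  simp [phi, Nat.sub_eq_zero_of_le h]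

lemma phi_step_nonneg (N k : ℕ) : 0 ≤ phi N (k+1) - phi N k := by
  rcases le_or_gt (k+1) N with h | h
  · rw [phi_eq_sq N (k+1) h, phi_eq_sq N k (le_trans (Nat.le_succ k) h)]
    push_cast; nlinarith [Nat.cast_nonneg (α := ℝ) k]
  · have hNk : N ≤ k := Nat.lt_succ_iff.mp h
    have e1 : (k+1-N : ℕ) = (k - N) + 1 := by omega
    have e2 : ((k - N : ℕ):ℝ) = (k:ℝ) - N := by rw [Nat.cast_sub hNk]
    simp only [phi, e1]
    push_cast [e2]
    have hc : (N:ℝ) ≤ k := by exact_mod_cast hNk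
    nlinarith [Nat.cast_nonneg (α := ℝ) N]

lemma phi_step_le (N k : ℕ) : phi N (k+1) - phi N k ≤ 2*(k:ℝ)+1 := by
  rcases le_or_gt (k+1) N with h | h
  · rw [phi_eq_sq N (k+1) h, phi_eq_sq N k (le_trans (Nat.le_succ k) h)]
    push_cast; nlinarith [Nat.cast_nonneg (α := ℝ) k]
  · have hNk : N ≤ k := Nat.lt_succ_iff.mp h
    have e1 : (k+1-N : ℕ) = (k - N) + 1 := by omega
    have e2 : ((k - N : ℕ):ℝ) = (k:ℝ) - N := by rw [Nat.cast_sub hNk]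
    have hc : (N:ℝ) ≤ k := by exact_mod_cast hNk
    simp only [phi, e1]
    push_cast [e2]
    nlinarith [Nat.cast_nonneg (α := ℝ) N]

lemma phi_le_lin (N n : ℕ) : phi N n ≤ 2*(N:ℝ)*n := by
  rcases le_or_gt n N with h | h
  · rw [phi_eq_sq N n h]
    have hc : (n:ℝ) ≤ N := by exact_mod_cast h
    nlinarith [Nat.cast_nonneg (α := ℝ) n]
  · have hNn : N ≤ n := le_of_lt h
    have e2 : ((n - N : ℕ):ℝ) = (n:ℝ) - N := by rw [Nat.cast_sub hNn]
    simp only [phi, e2]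
    nlinarith [Nat.cast_nonneg (α := ℝ) N]

-- shifted sum inequality
lemma sum_shift_le (g : ℕ → ℝ) (hg : ∀ n, 0 ≤ g n) (m k : ℕ) :
    ∑ i ∈ Finset.range m, g (i+k) ≤ ∑ i ∈ Finset.range (m+k), g i := by
  have hinj : Set.InjOn (· + k) (Finset.range m) := fun x _ y _ h => Nat.add_right_cancel h
  rw [← Finset.sum_image hinj]
  apply Finset.sum_le_sum_of_subset_of_nonneg
  · intro x hx
    simp only [Finset.mem_image, Finset.mem_range] at hx ⊢
    omega
  · intro i _ _; exact hg i

-- frequently small tails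
lemma freq_small (a : ℕ → ℝ) (ha : ∀ n, 0 ≤ a n) (hs : Summable a) {ε : ℝ} (hε : 0 < ε) :
    ∃ᶠ M : ℕ in atTop, (M:ℝ) * a M < ε := by
  by_contra h
  rw [Filter.not_frequently] at h
  simp only [not_lt] at h
  rw [Filter.eventually_atTop] at h
  obtain ⟨N, hN⟩ := h
  have hsum : Summable (fun n : ℕ => a (n + (N+1))) := (summable_nat_add_iff (N+1)).2 hs
  have hle : ∀ n : ℕ, ε * (((n + (N+1) : ℕ)):ℝ)⁻¹ ≤ a (n + (N+1)) := by
    intro n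
    have hpos : (0:ℝ) < (((n + (N+1) : ℕ)):ℝ) := by positivity
    have h1 := hN (n + (N+1)) (by omega)
    rw [← div_le_iff₀' hpos] at h1
    calc ε * (((n + (N+1) : ℕ)):ℝ)⁻¹ = ε / (((n + (N+1) : ℕ)):ℝ) := by ring
      _ ≤ a (n + (N+1)) := h1
  have hsum2 : Summable (fun n : ℕ => ε * (((n + (N+1) : ℕ)):ℝ)⁻¹) :=
    Summable.of_nonneg_of_le (fun n => by positivity) hle hsum
  have hsum3 : Summable (fun n : ℕ => (((n + (N+1) : ℕ)):ℝ)⁻¹) := by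
    have h2 := hsum2.mul_left ε⁻¹
    apply h2.congr
    intro n
    field_simp
  have hsum4 : Summable (fun n : ℕ => ((n:ℕ):ℝ)⁻¹) :=
    (summable_nat_add_iff (f := fun n : ℕ => ((n:ℕ):ℝ)⁻¹) (N+1)).1 hsum3
  have hsum5 : Summable (fun n : ℕ => 1 / ((n:ℕ):ℝ)) := by
    apply hsum4.congr; intro n; rw [one_div]
  exact Real.not_summable_one_div_natCast hsum5


lemma abs3 (x y z : ℝ) : |x - y - z| ≤ |x| + |y| + |z| := by
  calc |x - y - z| ≤ |x - y| + |z| := abs_sub _ _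
    _ ≤ |x| + |y| + |z| := by have := abs_sub x y; linarith

section basics
variable {μ : ℝ} {q : ℕ → ℝ}

lemma summable_sq (hq0 : ∀ n, 0 ≤ q n) (h1 : Summable q)
    (h3 : Summable (fun n : ℕ => (n:ℝ)^3 * q n)) :
    Summable (fun n : ℕ => (n:ℝ)^2 * q n) := by
  have hnn : ∀ n : ℕ, 0 ≤ (n:ℝ)^2 * q n := fun n => mul_nonneg (by positivity) (hq0 n)
  have hle : ∀ n : ℕ, (n:ℝ)^2 * q n ≤ (n:ℝ)^3 * q n + q n := by
    intro n
    have h : (n:ℝ)^2 ≤ (n:ℝ)^3 + 1 := by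
      rcases Nat.eq_zero_or_pos n with h | h
      · simp [h]
      · have : (1:ℝ) ≤ n := by exact_mod_cast h
        nlinarith
    nlinarith [hq0 n]
  exact Summable.of_nonneg_of_le hnn hle (h3.add h1)

lemma abs_c_le (hμ : 0 < μ) (h0 : 0 ≤ q 1) (h1 : q 1 ≤ 1) : |μ - q 1| ≤ μ + 1 := by
  rw [abs_le]; constructor <;> linarith

end basics

set_option maxHeartbeats 1600000 in
lemma part1 (μ : ℝ) (hμ : 0 < μ) (q : ℕ → ℝ) (hq : memS μ q)
    (h3 : Summable fun n : ℕ => (n:ℝ)^3 * q n) :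
    Summable (fun n : ℕ => |(n : ℝ) ^ 2 * dispGen μ q n|) ∧
      ∑' n : ℕ, (n : ℝ) ^ 2 * dispGen μ q n =
        -2 * ((∑' n : ℕ, (n : ℝ) ^ 2 * q n) - μ) + 2 * μ * (μ - q 1) := by
  obtain ⟨hq01, hs1, hsm⟩ := hq
  have hq0 : ∀ n, 0 ≤ q n := fun n => (hq01 n).1
  have h1 : Summable q := hs1.summable
  have hm : Summable (fun n : ℕ => (n:ℝ) * q n) := hsm.summable
  have h2 : Summable (fun n : ℕ => (n:ℝ)^2 * q n) := summable_sq hq0 h1 h3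
  have hc : |μ - q 1| ≤ μ + 1 := abs_c_le hμ (hq01 1).1 (hq01 1).2
  -- components of the dominating series
  have hA : Summable (fun n : ℕ => (n:ℝ)^2 * ((n:ℝ)+1) * q (n+1)) := by
    have hf : Summable (fun m : ℕ => ((m:ℝ)-1)^2 * (m:ℝ) * q m) := by
      have hnn : ∀ m : ℕ, 0 ≤ ((m:ℝ)-1)^2 * (m:ℝ) * q m :=
        fun m => mul_nonneg (mul_nonneg (sq_nonneg _) (Nat.cast_nonneg _)) (hq0 m)
      have hle : ∀ m : ℕ, ((m:ℝ)-1)^2 * (m:ℝ) * q m ≤ (m:ℝ)^3 * q m := by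
        intro m
        have key : ((m:ℝ)-1)^2 * (m:ℝ) ≤ (m:ℝ)^3 := by
          rcases Nat.eq_zero_or_pos m with h | h
          · simp [h]
          · have h1m : (1:ℝ) ≤ m := by exact_mod_cast h
            nlinarith
        exact mul_le_mul_of_nonneg_right key (hq0 m)
      exact Summable.of_nonneg_of_le hnn hle h3
    have h' : Summable (fun n : ℕ => (((n+1:ℕ):ℝ)-1)^2 * ((n+1:ℕ):ℝ) * q (n+1)) :=
      (summable_nat_add_iff 1).2 hf
    apply h'.congr
    intro n; push_cast; ring
  have hD : Summable (fun n : ℕ => (n:ℝ)^2 * q (n-1)) := by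
    have h' : Summable (fun n : ℕ => (n:ℝ)^2 * q n + (2*((n:ℝ)*q n) + q n)) :=
      h2.add ((hm.mul_left 2).add h1)
    have h'' : Summable (fun n : ℕ => ((n+1:ℕ):ℝ)^2 * q (n+1-1)) := by
      apply h'.congr
      intro n
      have e : (n+1-1 : ℕ) = n := rfl
      rw [e]; push_cast; ring
    exact (summable_nat_add_iff (f := fun n : ℕ => (n:ℝ)^2 * q (n-1)) 1).1 h''
  have hbound : Summable (fun n : ℕ =>
      (n:ℝ)^2 * ((n:ℝ)+1) * q (n+1) + (n:ℝ)^3 * q n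
        + (μ+1) * ((n:ℝ)^2 * q n + (n:ℝ)^2 * q (n-1))) :=
    (hA.add h3).add ((h2.add hD).mul_left (μ+1))
  have habs : Summable (fun n : ℕ => |(n : ℝ) ^ 2 * dispGen μ q n|) := by
    apply Summable.of_nonneg_of_le (fun n => abs_nonneg _) (fun n => ?_) hbound
    match n with
    | 0 => simp [dispGen]
    | 1 =>
      simp only [dispGen, Nat.cast_one]
      have h01 : |(1:ℝ)^2 * (2 * q 2 - (μ - q 1) * (q 1 - q 0))|
          ≤ |2 * q 2| + |(μ - q 1) * (q 1 - q 0)| := by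
        rw [one_pow, one_mul]; exact abs_sub _ _
      have h02 : |(μ - q 1) * (q 1 - q 0)| ≤ (μ+1) * (q 1 + q 0) := by
        rw [abs_mul]
        apply mul_le_mul hc _ (abs_nonneg _) (by linarith)
        rw [abs_le]; constructor <;> nlinarith [hq0 0, hq0 1]
      have h2q : |2 * q 2| = 2 * q 2 := abs_of_nonneg (by nlinarith [hq0 2])
      push_cast
      nlinarith [hq0 1, hq0 0, hq0 2]
    | n + 2 =>
      simp only [dispGen]
      have h01 := abs3 (((n:ℝ)+3) * q (n+3) * ((n:ℝ)+2)^2 / ((n:ℝ)+2)^2 * 1) 0 0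
      -- direct estimate
      have key : |((n:ℝ)+2) ^ 2 * (((n : ℝ) + 3) * q (n + 3) - ((n : ℝ) + 2) * q (n + 2)
          - (μ - q 1) * (q (n + 2) - q (n + 1)))|
          ≤ ((n:ℝ)+2)^2 * (((n:ℝ)+3) * q (n+3)) + ((n:ℝ)+2)^2 * (((n:ℝ)+2) * q (n+2))
            + (μ+1) * (((n:ℝ)+2)^2 * (q (n+2) + q (n+1))) := by
        rw [mul_sub, mul_sub]
        refine (abs3 _ _ _).trans ?_
        have e1 : |((n:ℝ)+2)^2 * (((n:ℝ)+3) * q (n+3))| = ((n:ℝ)+2)^2 * (((n:ℝ)+3) * q (n+3)) :=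
          abs_of_nonneg (mul_nonneg (by positivity) (mul_nonneg (by positivity) (hq0 _)))
        have e2 : |((n:ℝ)+2)^2 * (((n:ℝ)+2) * q (n+2))| = ((n:ℝ)+2)^2 * (((n:ℝ)+2) * q (n+2)) :=
          abs_of_nonneg (mul_nonneg (by positivity) (mul_nonneg (by positivity) (hq0 _)))
        have e3 : |((n:ℝ)+2)^2 * ((μ - q 1) * (q (n+2) - q (n+1)))|
            ≤ (μ+1) * (((n:ℝ)+2)^2 * (q (n+2) + q (n+1))) := by
          rw [abs_mul, abs_mul]
          have hq' : |q (n+2) - q (n+1)| ≤ q (n+2) + q (n+1) := by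
            rw [abs_le]; constructor <;> nlinarith [hq0 (n+1), hq0 (n+2)]
          have hnn : |((n:ℝ)+2)^2| = ((n:ℝ)+2)^2 := abs_of_nonneg (by positivity)
          rw [hnn]
          calc ((n:ℝ)+2)^2 * (|μ - q 1| * |q (n+2) - q (n+1)|)
              ≤ ((n:ℝ)+2)^2 * ((μ+1) * (q (n+2) + q (n+1))) := by
                apply mul_le_mul_of_nonneg_left _ (by positivity)
                exact mul_le_mul hc hq' (abs_nonneg _) (by linarith)
            _ = (μ+1) * (((n:ℝ)+2)^2 * (q (n+2) + q (n+1))) := by ring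
        rw [e1, e2]
        linarith
      simp only [show n+2+1 = n+3 from rfl, show n+2-1 = n+1 from rfl]
      push_cast
      refine key.trans (le_of_eq (by ring))
  refine ⟨habs, ?_⟩
  have hF : Summable (fun n : ℕ => (n:ℝ)^2 * dispGen μ q n) := summable_abs_iff.1 habs
  -- the interior series
  set c : ℝ := μ - q 1 with hcdef
  set G : ℕ → ℝ := fun k =>
    ((k:ℝ)+1) * q (k+1) * ((fun n : ℕ => (n:ℝ)^2) k - (fun n : ℕ => (n:ℝ)^2) (k+1))
    + c * (((fun n : ℕ => (n:ℝ)^2) (k+1) - (fun n : ℕ => (n:ℝ)^2) k) * q k) with hGdef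
  have hGeq : G = fun k : ℕ =>
      (-((2*(k:ℝ)+1) * (((k:ℝ)+1) * q (k+1)))) + c * ((2*(k:ℝ)+1) * q k) := by
    funext k; simp only [hGdef]; push_cast; ring
  have hg : Summable (fun m : ℕ => (2*(m:ℝ)-1) * ((m:ℝ) * q m)) := by
    have h' : Summable (fun m : ℕ => 2*((m:ℝ)^2 * q m) - (m:ℝ) * q m) :=
      (h2.mul_left 2).sub hm
    apply h'.congr; intro m; ring
  have hGa : Summable (fun k : ℕ => (2*(k:ℝ)+1) * (((k:ℝ)+1) * q (k+1))) := by
    have h' : Summable (fun k : ℕ => (2*((k+1:ℕ):ℝ)-1) * (((k+1:ℕ):ℝ) * q (k+1))) :=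
      (summable_nat_add_iff 1).2 hg
    apply h'.congr; intro k; push_cast; ring
  have hGb : Summable (fun k : ℕ => (2*(k:ℝ)+1) * q k) := by
    have h' : Summable (fun k : ℕ => 2*((k:ℝ) * q k) + q k) := (hm.mul_left 2).add h1
    apply h'.congr; intro k; ring
  have hG : Summable G := by
    rw [hGeq]; exact hGa.neg.add (hGb.mul_left c)
  -- tsum of G
  have hM2 : ∑' m : ℕ, (2*((m:ℝ)^2 * q m) - (m:ℝ) * q m)
      = 2 * (∑' n : ℕ, (n:ℝ)^2 * q n) - μ := by
    rw [Summable.tsum_sub (h2.mul_left 2) hm, tsum_mul_left, hsm.tsum_eq]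
  have hT1 : ∑' k : ℕ, (2*(k:ℝ)+1) * (((k:ℝ)+1) * q (k+1))
      = 2 * (∑' n : ℕ, (n:ℝ)^2 * q n) - μ := by
    have h0 : ∑' m : ℕ, (2*(m:ℝ)-1) * ((m:ℝ) * q m)
        = (2*((0:ℕ):ℝ)-1) * (((0:ℕ):ℝ) * q 0)
          + ∑' m : ℕ, (2*((m+1:ℕ):ℝ)-1) * (((m+1:ℕ):ℝ) * q (m+1)) := Summable.tsum_eq_zero_add hg
    have e0 : (2*((0:ℕ):ℝ)-1) * (((0:ℕ):ℝ) * q 0) = 0 := by norm_num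
    have e1 : ∑' m : ℕ, (2*((m+1:ℕ):ℝ)-1) * (((m+1:ℕ):ℝ) * q (m+1))
        = ∑' k : ℕ, (2*(k:ℝ)+1) * (((k:ℝ)+1) * q (k+1)) := by
      apply tsum_congr; intro k; push_cast; ring
    have e2 : ∑' m : ℕ, (2*(m:ℝ)-1) * ((m:ℝ) * q m)
        = 2 * (∑' n : ℕ, (n:ℝ)^2 * q n) - μ := by
      rw [show (fun m : ℕ => (2*(m:ℝ)-1) * ((m:ℝ) * q m))
          = fun m : ℕ => 2*((m:ℝ)^2 * q m) - (m:ℝ) * q m from funext fun m => by ring, hM2]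
    linarith [h0, e0, e1, e2]
  have hT2 : ∑' k : ℕ, (2*(k:ℝ)+1) * q k = 2 * μ + 1 := by
    have : ∑' k : ℕ, (2*((k:ℝ) * q k) + q k) = 2 * μ + 1 := by
      rw [Summable.tsum_add (hm.mul_left 2) h1, tsum_mul_left, hsm.tsum_eq, hs1.tsum_eq]
    rw [← this]; apply tsum_congr; intro k; ring
  have hGsum : ∑' k, G k
      = -(2 * (∑' n : ℕ, (n:ℝ)^2 * q n) - μ) + c * (2 * μ + 1) := by
    rw [hGeq, Summable.tsum_add hGa.neg (hGb.mul_left c), tsum_neg, tsum_mul_left, hT1, hT2]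
  -- limits of both sides of sum_weight
  have hLHS : Tendsto (fun j : ℕ => ∑ n ∈ Finset.range (j+3), (n:ℝ)^2 * dispGen μ q n)
      atTop (𝓝 (∑' n : ℕ, (n:ℝ)^2 * dispGen μ q n)) :=
    (hF.hasSum.tendsto_sum_nat).comp (tendsto_add_atTop_nat 3)
  have hTG : Tendsto (fun j : ℕ => ∑ k ∈ Finset.range (j+2), G k)
      atTop (𝓝 (∑' k, G k)) :=
    (hG.hasSum.tendsto_sum_nat).comp (tendsto_add_atTop_nat 2)
  have h3z : Tendsto (fun m : ℕ => (m:ℝ)^3 * q m) atTop (𝓝 0) := h3.tendsto_atTop_zero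
  have h2z : Tendsto (fun m : ℕ => (m:ℝ)^2 * q m) atTop (𝓝 0) := h2.tendsto_atTop_zero
  have hb1 : Tendsto (fun j : ℕ => ((j+2:ℕ):ℝ)^2 * (((j:ℝ)+3) * q (j+3))) atTop (𝓝 0) := by
    have ht3 : Tendsto (fun j : ℕ => ((j+3:ℕ):ℝ)^3 * q (j+3)) atTop (𝓝 0) :=
      h3z.comp (tendsto_add_atTop_nat 3)
    apply squeeze_zero (fun j => ?_) (fun j => ?_) ht3
    · have := hq0 (j+3); positivity
    · have h1j : ((j+2:ℕ):ℝ)^2 * ((j:ℝ)+3) ≤ ((j+3:ℕ):ℝ)^3 := by push_cast; nlinarith [Nat.cast_nonneg (α := ℝ) j]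
      have := hq0 (j+3)
      calc ((j+2:ℕ):ℝ)^2 * (((j:ℝ)+3) * q (j+3)) = (((j+2:ℕ):ℝ)^2 * ((j:ℝ)+3)) * q (j+3) := by ring
        _ ≤ ((j+3:ℕ):ℝ)^3 * q (j+3) := mul_le_mul_of_nonneg_right h1j this
  have hb2 : Tendsto (fun j : ℕ => c * (((j+2:ℕ):ℝ)^2 * q (j+2))) atTop (𝓝 0) := by
    have ht2 : Tendsto (fun j : ℕ => ((j+2:ℕ):ℝ)^2 * q (j+2)) atTop (𝓝 0) :=
      h2z.comp (tendsto_add_atTop_nat 2)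
    have := ht2.const_mul c
    simpa using this
  have hRHS : Tendsto (fun j : ℕ =>
      (fun n : ℕ => (n:ℝ)^2) 1 * q 1 + ∑ k ∈ Finset.range (j+2), G k
        + (fun n : ℕ => (n:ℝ)^2) (j+2) * (((j:ℝ)+3) * q (j+3))
        - c * ((fun n : ℕ => (n:ℝ)^2) (j+2) * q (j+2)))
      atTop (𝓝 ((1:ℝ)^2 * q 1 + ∑' k, G k + 0 - 0)) := by
    refine Tendsto.sub (Tendsto.add (Tendsto.add ?_ hTG) ?_) ?_
    · simpa using tendsto_const_nhds
    · exact hb1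
    · exact hb2
  have hEq : (fun j : ℕ => ∑ n ∈ Finset.range (j+3), (n:ℝ)^2 * dispGen μ q n)
      = fun j : ℕ =>
      (fun n : ℕ => (n:ℝ)^2) 1 * q 1 + ∑ k ∈ Finset.range (j+2), G k
        + (fun n : ℕ => (n:ℝ)^2) (j+2) * (((j:ℝ)+3) * q (j+3))
        - c * ((fun n : ℕ => (n:ℝ)^2) (j+2) * q (j+2)) := by
    funext j
    exact sum_weight μ q (fun n : ℕ => (n:ℝ)^2) (by norm_num) j
  rw [hEq] at hLHS
  have := tendsto_nhds_unique hLHS hRHS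
  rw [this, hGsum]
  ring


lemma Gprops (μ : ℝ) (q : ℕ → ℝ)
    (hs1 : HasSum q 1) (hsm : HasSum (fun n : ℕ => (n:ℝ) * q n) μ)
    (h2 : Summable (fun n : ℕ => (n:ℝ)^2 * q n)) :
    HasSum (fun k : ℕ =>
      ((k:ℝ)+1) * q (k+1) * ((fun n : ℕ => (n:ℝ)^2) k - (fun n : ℕ => (n:ℝ)^2) (k+1))
      + (μ - q 1) * (((fun n : ℕ => (n:ℝ)^2) (k+1) - (fun n : ℕ => (n:ℝ)^2) k) * q k))
      (-(2 * (∑' n : ℕ, (n:ℝ)^2 * q n) - μ) + (μ - q 1) * (2*μ+1)) := by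
  have h1 : Summable q := hs1.summable
  have hm : Summable (fun n : ℕ => (n:ℝ) * q n) := hsm.summable
  set c : ℝ := μ - q 1 with hcdef
  have hg : Summable (fun m : ℕ => (2*(m:ℝ)-1) * ((m:ℝ) * q m)) := by
    have h' : Summable (fun m : ℕ => 2*((m:ℝ)^2 * q m) - (m:ℝ) * q m) :=
      (h2.mul_left 2).sub hm
    apply h'.congr; intro m; ring
  have hGa : Summable (fun k : ℕ => (2*(k:ℝ)+1) * (((k:ℝ)+1) * q (k+1))) := by
    have h' : Summable (fun k : ℕ => (2*((k+1:ℕ):ℝ)-1) * (((k+1:ℕ):ℝ) * q (k+1))) :=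
      (summable_nat_add_iff 1).2 hg
    apply h'.congr; intro k; push_cast; ring
  have hGb : Summable (fun k : ℕ => (2*(k:ℝ)+1) * q k) := by
    have h' : Summable (fun k : ℕ => 2*((k:ℝ) * q k) + q k) := (hm.mul_left 2).add h1
    apply h'.congr; intro k; ring
  have hM2 : ∑' m : ℕ, (2*((m:ℝ)^2 * q m) - (m:ℝ) * q m)
      = 2 * (∑' n : ℕ, (n:ℝ)^2 * q n) - μ := by
    rw [Summable.tsum_sub (h2.mul_left 2) hm, tsum_mul_left, hsm.tsum_eq]
  have hT1 : ∑' k : ℕ, (2*(k:ℝ)+1) * (((k:ℝ)+1) * q (k+1))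
      = 2 * (∑' n : ℕ, (n:ℝ)^2 * q n) - μ := by
    have h0 : ∑' m : ℕ, (2*(m:ℝ)-1) * ((m:ℝ) * q m)
        = (2*((0:ℕ):ℝ)-1) * (((0:ℕ):ℝ) * q 0)
          + ∑' m : ℕ, (2*((m+1:ℕ):ℝ)-1) * (((m+1:ℕ):ℝ) * q (m+1)) := Summable.tsum_eq_zero_add hg
    have e0 : (2*((0:ℕ):ℝ)-1) * (((0:ℕ):ℝ) * q 0) = 0 := by norm_num
    have e1 : ∑' m : ℕ, (2*((m+1:ℕ):ℝ)-1) * (((m+1:ℕ):ℝ) * q (m+1))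
        = ∑' k : ℕ, (2*(k:ℝ)+1) * (((k:ℝ)+1) * q (k+1)) := by
      apply tsum_congr; intro k; push_cast; ring
    have e2 : ∑' m : ℕ, (2*(m:ℝ)-1) * ((m:ℝ) * q m)
        = 2 * (∑' n : ℕ, (n:ℝ)^2 * q n) - μ := by
      rw [show (fun m : ℕ => (2*(m:ℝ)-1) * ((m:ℝ) * q m))
          = fun m : ℕ => 2*((m:ℝ)^2 * q m) - (m:ℝ) * q m from funext fun m => by ring, hM2]
    linarith [h0, e0, e1, e2]
  have hT2 : ∑' k : ℕ, (2*(k:ℝ)+1) * q k = 2 * μ + 1 := by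
    have h' : ∑' k : ℕ, (2*((k:ℝ) * q k) + q k) = 2 * μ + 1 := by
      rw [Summable.tsum_add (hm.mul_left 2) h1, tsum_mul_left, hsm.tsum_eq, hs1.tsum_eq]
    rw [← h']; apply tsum_congr; intro k; ring
  have hGeq : (fun k : ℕ =>
      ((k:ℝ)+1) * q (k+1) * ((fun n : ℕ => (n:ℝ)^2) k - (fun n : ℕ => (n:ℝ)^2) (k+1))
      + (μ - q 1) * (((fun n : ℕ => (n:ℝ)^2) (k+1) - (fun n : ℕ => (n:ℝ)^2) k) * q k))
      = fun k : ℕ =>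
      (-((2*(k:ℝ)+1) * (((k:ℝ)+1) * q (k+1)))) + c * ((2*(k:ℝ)+1) * q k) := by
    funext k; simp only []; push_cast; ring
  rw [hGeq]
  have hsum : Summable (fun k : ℕ =>
      (-((2*(k:ℝ)+1) * (((k:ℝ)+1) * q (k+1)))) + c * ((2*(k:ℝ)+1) * q k)) :=
    hGa.neg.add (hGb.mul_left c)
  rw [Summable.hasSum_iff hsum]
  rw [Summable.tsum_add hGa.neg (hGb.mul_left c), tsum_neg, tsum_mul_left, hT1, hT2]


section Part2
variable {μ : ℝ} {p : ℝ → ℕ → ℝ}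

-- continuity of coordinates
lemma pcont (hpd : ∀ t, 0 ≤ t → ∀ n, HasDerivWithinAt (fun s => p s n) (dispGen μ (p t) n) (Set.Ici 0) t)
    (n : ℕ) : ContinuousOn (fun s => p s n) (Ici 0) :=
  fun t ht => (hpd t ht n).continuousWithinAt

-- continuity of the generator coordinates in time
lemma Fcont (hpd : ∀ t, 0 ≤ t → ∀ n, HasDerivWithinAt (fun s => p s n) (dispGen μ (p t) n) (Set.Ici 0) t)
    (n : ℕ) : ContinuousOn (fun u => dispGen μ (p u) n) (Ici 0) := by
  have hc := pcont (μ := μ) hpd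
  match n with
  | 0 =>
    simp only [dispGen]
    exact ((continuousOn_const.sub (hc 1)).neg).mul (hc 0)
  | 1 =>
    simp only [dispGen]
    exact (continuousOn_const.mul (hc 2)).sub
      ((continuousOn_const.sub (hc 1)).mul ((hc 1).sub (hc 0)))
  | (n+2) =>
    simp only [dispGen]
    exact ((continuousOn_const.mul (hc (n+3))).sub (continuousOn_const.mul (hc (n+2)))).sub
      ((continuousOn_const.sub (hc 1)).mul ((hc (n+2)).sub (hc (n+1))))

-- FTC for finite weighted sums
lemma ftc_finite (hpd : ∀ t, 0 ≤ t → ∀ n, HasDerivWithinAt (fun s => p s n) (dispGen μ (p t) n) (Set.Ici 0) t)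
    (w : ℕ → ℝ) (M : ℕ) {a b : ℝ} (ha : 0 ≤ a) (hab : a ≤ b) :
    ∫ u in a..b, (∑ n ∈ Finset.range M, w n * dispGen μ (p u) n)
      = ∑ n ∈ Finset.range M, w n * p b n - ∑ n ∈ Finset.range M, w n * p a n := by
  have hIcc : Icc a b ⊆ Ici 0 := fun x hx => le_trans ha hx.1
  have huIcc : uIcc a b ⊆ Ici 0 := by rw [uIcc_of_le hab]; exact hIcc
  have hF : IntervalIntegrable (fun u => ∑ n ∈ Finset.range M, w n * dispGen μ (p u) n)
      volume a b := by
    apply ContinuousOn.intervalIntegrable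
    apply continuousOn_finset_sum
    intro n _
    exact (continuousOn_const.mul ((Fcont hpd n).mono huIcc))
  have key := integral_eq_sub_of_hasDeriv_right_of_le
    (f := fun s => ∑ n ∈ Finset.range M, w n * p s n) hab ?_ ?_ hF
  · simpa using key
  · apply continuousOn_finset_sum
    intro n _
    exact continuousOn_const.mul ((pcont hpd n).mono hIcc)
  · intro x hx
    have hx0 : 0 ≤ x := le_trans ha (le_of_lt hx.1)
    apply HasDerivWithinAt.fun_sum
    intro n _
    exact ((hpd x hx0 n).const_mul (w n)).mono
      (fun y hy => le_trans hx0 (le_of_lt hy))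

lemma key_split (hpd : ∀ t, 0 ≤ t → ∀ n, HasDerivWithinAt (fun s => p s n) (dispGen μ (p t) n) (Set.Ici 0) t)
    (w : ℕ → ℝ) (hw0 : w 0 = 0) (j : ℕ) {a b : ℝ} (ha : 0 ≤ a) (hab : a ≤ b) :
    ∑ n ∈ Finset.range (j+3), w n * p b n - ∑ n ∈ Finset.range (j+3), w n * p a n
      = (∫ u in a..b, w 1 * p u 1)
        + (∫ u in a..b, ∑ k ∈ Finset.range (j+2),
            (((k:ℝ)+1) * p u (k+1) * (w k - w (k+1)) + (μ - p u 1) * ((w (k+1) - w k) * p u k)))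
        + (∫ u in a..b, w (j+2) * (((j:ℝ)+3) * p u (j+3)))
        - (∫ u in a..b, (μ - p u 1) * (w (j+2) * p u (j+2))) := by
  have huIcc : uIcc a b ⊆ Ici 0 := by
    rw [uIcc_of_le hab]; exact fun x hx => le_trans ha hx.1
  have hcu : ∀ n, ContinuousOn (fun u => p u n) (uIcc a b) :=
    fun n => (pcont hpd n).mono huIcc
  have h1i : IntervalIntegrable (fun u => w 1 * p u 1) volume a b :=
    (continuousOn_const.mul (hcu 1)).intervalIntegrable
  have h2i : IntervalIntegrable (fun u => ∑ k ∈ Finset.range (j+2),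
      (((k:ℝ)+1) * p u (k+1) * (w k - w (k+1)) + (μ - p u 1) * ((w (k+1) - w k) * p u k)))
      volume a b := by
    apply ContinuousOn.intervalIntegrable
    apply continuousOn_finset_sum
    intro k _
    exact ((continuousOn_const.mul (hcu (k+1))).mul continuousOn_const).add
      ((continuousOn_const.sub (hcu 1)).mul (continuousOn_const.mul (hcu k)))
  have h3i : IntervalIntegrable (fun u => w (j+2) * (((j:ℝ)+3) * p u (j+3))) volume a b :=
    (continuousOn_const.mul (continuousOn_const.mul (hcu (j+3)))).intervalIntegrable
  have h4i : IntervalIntegrable (fun u => (μ - p u 1) * (w (j+2) * p u (j+2))) volume a b :=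
    ((continuousOn_const.sub (hcu 1)).mul (continuousOn_const.mul (hcu (j+2)))).intervalIntegrable
  have e1 : (fun u => ∑ n ∈ Finset.range (j+3), w n * dispGen μ (p u) n)
      = fun u => (w 1 * p u 1
        + ∑ k ∈ Finset.range (j+2),
            (((k:ℝ)+1) * p u (k+1) * (w k - w (k+1)) + (μ - p u 1) * ((w (k+1) - w k) * p u k))
        + w (j+2) * (((j:ℝ)+3) * p u (j+3)))
        - (μ - p u 1) * (w (j+2) * p u (j+2)) :=
    funext fun u => sum_weight μ (p u) w hw0 j
  rw [← ftc_finite hpd w (j+3) ha hab, e1,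
    integral_sub (((h1i.add h2i).add h3i)) h4i,
    integral_add (h1i.add h2i) h3i, integral_add h1i h2i]


lemma sum21 (hp0 : ∀ t, 0 ≤ t → ∀ n, 0 ≤ p t n)
    (hp1 : ∀ t, 0 ≤ t → HasSum (fun n => p t n) 1)
    (hpm : ∀ t, 0 ≤ t → HasSum (fun n : ℕ => (n : ℝ) * p t n) μ)
    {u : ℝ} (hu : 0 ≤ u) (m : ℕ) :
    ∑ k ∈ Finset.range m, (2*(k:ℝ)+1) * p u k ≤ 2*μ+1 := by
  have e : ∑ k ∈ Finset.range m, (2*(k:ℝ)+1) * p u k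
      = 2*(∑ k ∈ Finset.range m, (k:ℝ) * p u k) + ∑ k ∈ Finset.range m, p u k := by
    rw [Finset.mul_sum, ← Finset.sum_add_distrib]
    exact Finset.sum_congr rfl fun k _ => by ring
  have h1 := sum_le_hasSum (Finset.range m) (fun k _ => mul_nonneg (Nat.cast_nonneg k) (hp0 u hu k)) (hpm u hu)
  have h2 := sum_le_hasSum (Finset.range m) (fun k _ => hp0 u hu k) (hp1 u hu)
  linarith

set_option maxHeartbeats 2000000 in
lemma stepA (hμ : 0 < μ) (hp0 : ∀ t, 0 ≤ t → ∀ n, 0 ≤ p t n)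
    (hp1 : ∀ t, 0 ≤ t → HasSum (fun n => p t n) 1)
    (hpm : ∀ t, 0 ≤ t → HasSum (fun n : ℕ => (n : ℝ) * p t n) μ)
    (hpd : ∀ t, 0 ≤ t → ∀ n, HasDerivWithinAt (fun s => p s n) (dispGen μ (p t) n) (Set.Ici 0) t)
    (h2 : ∀ t, 0 ≤ t → Summable (fun n : ℕ => (n:ℝ)^2 * p t n))
    {a b : ℝ} (ha : 0 ≤ a) (hab : a ≤ b) :
    ∑' n : ℕ, (n:ℝ)^2 * p b n
      ≤ (∑' n : ℕ, (n:ℝ)^2 * p a n) + (1 + (μ+1)*(2*μ+1)) * (b - a) := by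
  have hb : 0 ≤ b := le_trans ha hab
  have huIcc : uIcc a b ⊆ Ici 0 := by
    rw [uIcc_of_le hab]; exact fun x hx => le_trans ha hx.1
  have hu0 : ∀ u ∈ Icc a b, (0:ℝ) ≤ u := fun u hu => le_trans ha hu.1
  have hcu : ∀ n, ContinuousOn (fun u => p u n) (uIcc a b) :=
    fun n => (pcont hpd n).mono huIcc
  have hp01 : ∀ u ∈ Icc a b, ∀ n, p u n ≤ 1 := by
    intro u hu n
    exact le_hasSum (hp1 u (hu0 u hu)) n (fun j _ => hp0 u (hu0 u hu) j)
  -- summable weighted tails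
  have hphiS : ∀ (N : ℕ) (t : ℝ), 0 ≤ t → Summable (fun n : ℕ => phi N n * p t n) := by
    intro N t ht
    apply Summable.of_nonneg_of_le
      (fun n => mul_nonneg (phi_nonneg N n) (hp0 t ht n)) (fun n => ?_) (h2 t ht)
    exact mul_le_mul_of_nonneg_right (phi_le_sq N n) (hp0 t ht n)
  set K : ℝ := 1 + (μ+1)*(2*μ+1) with hK
  -- the two tail integral sequences
  set α : ℕ → ℝ := fun j : ℕ => ∫ u in a..b, (((j:ℝ)+3) * p u (j+3)) with hα
  set κ : ℕ → ℝ := fun j : ℕ => ∫ u in a..b, (((j:ℝ)+2) * p u (j+2)) with hκ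
  have iiα : ∀ j : ℕ, IntervalIntegrable (fun u => ((j:ℝ)+3) * p u (j+3)) volume a b :=
    fun j => (continuousOn_const.mul (hcu (j+3))).intervalIntegrable
  have iiκ : ∀ j : ℕ, IntervalIntegrable (fun u => ((j:ℝ)+2) * p u (j+2)) volume a b :=
    fun j => (continuousOn_const.mul (hcu (j+2))).intervalIntegrable
  have hαnn : ∀ j, 0 ≤ α j := by
    intro j
    apply intervalIntegral.integral_nonneg hab
    intro u hu
    exact mul_nonneg (by positivity) (hp0 u (hu0 u hu) (j+3))
  have hκnn : ∀ j, 0 ≤ κ j := by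
    intro j
    apply intervalIntegral.integral_nonneg hab
    intro u hu
    exact mul_nonneg (by positivity) (hp0 u (hu0 u hu) (j+2))
  have hsum_shift : ∀ (c : ℕ) (m : ℕ) (u : ℝ), u ∈ Icc a b →
      ∑ j ∈ Finset.range m, ((j:ℝ)+c) * p u (j+c) ≤ μ := by
    intro c m u hu
    have e : ∑ j ∈ Finset.range m, ((j:ℝ)+c) * p u (j+c)
        = ∑ j ∈ Finset.range m, (fun i : ℕ => (i:ℝ) * p u i) (j+c) :=
      Finset.sum_congr rfl fun j _ => by push_cast; ring
    rw [e]
    refine le_trans (sum_shift_le _ (fun n => mul_nonneg (Nat.cast_nonneg n) (hp0 u (hu0 u hu) n)) m c) ?_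
    exact sum_le_hasSum _ (fun k _ => mul_nonneg (Nat.cast_nonneg k) (hp0 u (hu0 u hu) k)) (hpm u (hu0 u hu))
  have hαsum : Summable α := by
    apply summable_of_sum_range_le hαnn
    intro m
    rw [hα, ← intervalIntegral.integral_finset_sum (fun j _ => iiα j)]
    calc ∫ u in a..b, ∑ j ∈ Finset.range m, ((j:ℝ)+3) * p u (j+3)
        ≤ ∫ _ in a..b, μ := by
          apply intervalIntegral.integral_mono_on hab
            (ContinuousOn.intervalIntegrable (continuousOn_finset_sum _
              (fun j _ => continuousOn_const.mul (hcu (j+3))))) intervalIntegrable_const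
          intro u hu
          simpa using hsum_shift 3 m u hu
      _ = (b-a) * μ := by rw [intervalIntegral.integral_const, smul_eq_mul]
      _ ≤ |(b-a) * μ| + 1 := by
          have := le_abs_self ((b-a) * μ); linarith [abs_nonneg ((b-a)*μ)]
  have hκsum : Summable κ := by
    apply summable_of_sum_range_le hκnn
    intro m
    rw [hκ, ← intervalIntegral.integral_finset_sum (fun j _ => iiκ j)]
    calc ∫ u in a..b, ∑ j ∈ Finset.range m, ((j:ℝ)+2) * p u (j+2)
        ≤ ∫ _ in a..b, μ := by
          apply intervalIntegral.integral_mono_on hab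
            (ContinuousOn.intervalIntegrable (continuousOn_finset_sum _
              (fun j _ => continuousOn_const.mul (hcu (j+2))))) intervalIntegrable_const
          intro u hu
          simpa using hsum_shift 2 m u hu
      _ = (b-a) * μ := by rw [intervalIntegral.integral_const, smul_eq_mul]
      _ ≤ |(b-a) * μ| + 1 := by
          have := le_abs_self ((b-a) * μ); linarith [abs_nonneg ((b-a)*μ)]
  -- main estimate for each N
  have main : ∀ N : ℕ, ∑' n : ℕ, phi N n * p b n ≤ (∑' n : ℕ, phi N n * p a n) + K * (b - a) := by
    intro N
    apply le_of_forall_pos_le_add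
    intro ε hε
    set D : ℝ := 2 + 6*(N:ℝ) + 2*(N:ℝ)*(μ+1) with hD
    have hDpos : 0 < D := by positivity
    set δ : ℝ := ε / D with hδ
    have hδpos : 0 < δ := by positivity
    set Tb : ℝ := ∑' n : ℕ, phi N n * p b n with hTb
    set Ta : ℝ := ∑' n : ℕ, phi N n * p a n with hTa
    have ev1 : ∀ᶠ j : ℕ in atTop,
        Tb - δ < ∑ n ∈ Finset.range (j+3), phi N n * p b n := by
      have htd := ((hphiS N b hb).hasSum.tendsto_sum_nat).comp (tendsto_add_atTop_nat 3)
      exact htd.eventually (eventually_gt_nhds (by linarith : Tb - δ < Tb))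
    have evα : ∀ᶠ j : ℕ in atTop, α j < δ :=
      hαsum.tendsto_atTop_zero.eventually (eventually_lt_nhds hδpos)
    have evκ : ∀ᶠ j : ℕ in atTop, κ j < δ :=
      hκsum.tendsto_atTop_zero.eventually (eventually_lt_nhds hδpos)
    have hfreq := freq_small α hαnn hαsum hδpos
    obtain ⟨j, hjα, hj1, hjαs, hjκ⟩ := (hfreq.and_eventually (ev1.and (evα.and evκ))).exists
    -- integrability of the four pieces
    have ii1 : IntervalIntegrable (fun u => phi N 1 * p u 1) volume a b :=
      (continuousOn_const.mul (hcu 1)).intervalIntegrable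
    have ii2 : IntervalIntegrable (fun u => ∑ k ∈ Finset.range (j+2),
        (((k:ℝ)+1) * p u (k+1) * (phi N k - phi N (k+1))
          + (μ - p u 1) * ((phi N (k+1) - phi N k) * p u k))) volume a b := by
      apply ContinuousOn.intervalIntegrable
      apply continuousOn_finset_sum
      intro k _
      exact ((continuousOn_const.mul (hcu (k+1))).mul continuousOn_const).add
        ((continuousOn_const.sub (hcu 1)).mul (continuousOn_const.mul (hcu k)))
    have ii3 : IntervalIntegrable (fun u => phi N (j+2) * (((j:ℝ)+3) * p u (j+3))) volume a b :=
      (continuousOn_const.mul (continuousOn_const.mul (hcu (j+3)))).intervalIntegrable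
    have ii4 : IntervalIntegrable (fun u => (μ - p u 1) * (phi N (j+2) * p u (j+2))) volume a b :=
      ((continuousOn_const.sub (hcu 1)).mul (continuousOn_const.mul (hcu (j+2)))).intervalIntegrable
    -- bounds for the four pieces
    have B1 : (∫ u in a..b, phi N 1 * p u 1) ≤ b - a := by
      calc (∫ u in a..b, phi N 1 * p u 1) ≤ ∫ _ in a..b, (1:ℝ) := by
            apply intervalIntegral.integral_mono_on hab ii1 intervalIntegrable_const
            intro u hu
            have h1 : phi N 1 ≤ 1 := le_trans (phi_le_sq N 1) (by norm_num)
            nlinarith [phi_nonneg N 1, hp0 u (hu0 u hu) 1, hp01 u hu 1]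
        _ = b - a := by simp
    have B2 : (∫ u in a..b, ∑ k ∈ Finset.range (j+2),
        (((k:ℝ)+1) * p u (k+1) * (phi N k - phi N (k+1))
          + (μ - p u 1) * ((phi N (k+1) - phi N k) * p u k)))
        ≤ (μ+1)*(2*μ+1) * (b - a) := by
      calc (∫ u in a..b, ∑ k ∈ Finset.range (j+2),
          (((k:ℝ)+1) * p u (k+1) * (phi N k - phi N (k+1))
            + (μ - p u 1) * ((phi N (k+1) - phi N k) * p u k)))
          ≤ ∫ _ in a..b, ((μ+1)*(2*μ+1)) := by
            apply intervalIntegral.integral_mono_on hab ii2 intervalIntegrable_const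
            intro u hu
            calc ∑ k ∈ Finset.range (j+2),
                (((k:ℝ)+1) * p u (k+1) * (phi N k - phi N (k+1))
                  + (μ - p u 1) * ((phi N (k+1) - phi N k) * p u k))
                ≤ ∑ k ∈ Finset.range (j+2), (μ+1) * ((2*(k:ℝ)+1) * p u k) := by
                  apply Finset.sum_le_sum
                  intro k _
                  have ht1 : ((k:ℝ)+1) * p u (k+1) * (phi N k - phi N (k+1)) ≤ 0 :=
                    mul_nonpos_of_nonneg_of_nonpos
                      (mul_nonneg (by positivity) (hp0 u (hu0 u hu) (k+1)))
                      (by linarith [phi_step_nonneg N k])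
                  have hpk := hp0 u (hu0 u hu) k
                  have hp1u := hp0 u (hu0 u hu) 1
                  have hp1le := hp01 u hu 1
                  have hstep1 := phi_step_nonneg N k
                  have hstep2 := phi_step_le N k
                  have ht2 : (μ - p u 1) * ((phi N (k+1) - phi N k) * p u k)
                      ≤ (μ+1) * ((2*(k:ℝ)+1) * p u k) := by
                    have hx0 : 0 ≤ (phi N (k+1) - phi N k) * p u k := mul_nonneg hstep1 hpk
                    have hx1 : (phi N (k+1) - phi N k) * p u k ≤ (2*(k:ℝ)+1) * p u k :=
                      mul_le_mul_of_nonneg_right hstep2 hpk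
                    nlinarith
                  linarith
              _ = (μ+1) * ∑ k ∈ Finset.range (j+2), ((2*(k:ℝ)+1) * p u k) := by
                  rw [Finset.mul_sum]
              _ ≤ (μ+1)*(2*μ+1) := by
                  have := sum21 hp0 hp1 hpm (hu0 u hu) (j+2)
                  nlinarith
        _ = (μ+1)*(2*μ+1) * (b - a) := by rw [intervalIntegral.integral_const, smul_eq_mul]; ring
    have B3 : (∫ u in a..b, phi N (j+2) * (((j:ℝ)+3) * p u (j+3)))
        ≤ (2*(N:ℝ)*((j:ℝ)+2)) * α j := by
      have e : (2*(N:ℝ)*((j:ℝ)+2)) * α j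
          = ∫ u in a..b, (2*(N:ℝ)*((j:ℝ)+2)) * (((j:ℝ)+3) * p u (j+3)) := by
        rw [hα]
        exact (intervalIntegral.integral_const_mul _ _).symm
      rw [e]
      apply intervalIntegral.integral_mono_on hab ii3 ((iiα j).const_mul _)
      intro u hu
      have hlin : phi N (j+2) ≤ 2*(N:ℝ)*((j:ℝ)+2) := by
        have := phi_le_lin N (j+2)
        have ecast : ((j+2:ℕ):ℝ) = (j:ℝ)+2 := by push_cast; ring
        rw [ecast] at this
        linarith
      exact mul_le_mul_of_nonneg_right hlin
        (mul_nonneg (by positivity) (hp0 u (hu0 u hu) (j+3)))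
    have B4 : (-((μ+1)*(2*(N:ℝ)))) * κ j
        ≤ ∫ u in a..b, (μ - p u 1) * (phi N (j+2) * p u (j+2)) := by
      have e : (-((μ+1)*(2*(N:ℝ)))) * κ j
          = ∫ u in a..b, (-((μ+1)*(2*(N:ℝ)))) * (((j:ℝ)+2) * p u (j+2)) := by
        rw [hκ]
        exact (intervalIntegral.integral_const_mul _ _).symm
      rw [e]
      apply intervalIntegral.integral_mono_on hab ((iiκ j).const_mul _) ii4
      intro u hu
      have hpk := hp0 u (hu0 u hu) (j+2)
      have hp1u := hp0 u (hu0 u hu) 1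
      have hp1le := hp01 u hu 1
      have hphinn := phi_nonneg N (j+2)
      have hlin : phi N (j+2) ≤ 2*(N:ℝ)*((j:ℝ)+2) := by
        have := phi_le_lin N (j+2)
        have ecast : ((j+2:ℕ):ℝ) = (j:ℝ)+2 := by push_cast; ring
        rw [ecast] at this
        linarith
      have hx0 : 0 ≤ phi N (j+2) * p u (j+2) := mul_nonneg hphinn hpk
      have hx1 : phi N (j+2) * p u (j+2) ≤ (2*(N:ℝ)*((j:ℝ)+2)) * p u (j+2) :=
        mul_le_mul_of_nonneg_right hlin hpk
      nlinarith
    -- assemble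
    have base := key_split hpd (phi N) (phi_zero N) j ha hab
    have hSa : ∑ n ∈ Finset.range (j+3), phi N n * p a n ≤ Ta :=
      Summable.sum_le_tsum _ (fun i _ => mul_nonneg (phi_nonneg N i) (hp0 a ha i)) (hphiS N a ha)
    have hjfin : 2*(N:ℝ)*((j:ℝ)+2) * α j ≤ 6*(N:ℝ)*δ + δ := by
      have hN0 : (0:ℝ) ≤ (N:ℝ) := Nat.cast_nonneg N
      have k1 : (N:ℝ)*((j:ℝ)*α j) ≤ (N:ℝ)*δ :=
        mul_le_mul_of_nonneg_left (le_of_lt hjα) hN0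
      have k2 : (N:ℝ)*α j ≤ (N:ℝ)*δ :=
        mul_le_mul_of_nonneg_left (le_of_lt hjαs) hN0
      nlinarith [k1, k2]
    have hκfin : ((μ+1)*(2*(N:ℝ))) * κ j ≤ 2*(N:ℝ)*(μ+1)*δ := by
      have hN0 : (0:ℝ) ≤ (N:ℝ) := Nat.cast_nonneg N
      have k2 : ((μ+1)*(N:ℝ))*κ j ≤ ((μ+1)*(N:ℝ))*δ :=
        mul_le_mul_of_nonneg_left (le_of_lt hjκ) (by positivity)
      nlinarith [k2]
    have hδD : δ * D = ε := by
      rw [hδ]; field_simp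
    have hfin : Tb - δ < ∑ n ∈ Finset.range (j+3), phi N n * p b n := hj1
    rw [hK]
    have : Tb ≤ Ta + (1 + (μ+1)*(2*μ+1)) * (b-a) + δ*(2 + 6*(N:ℝ) + 2*(N:ℝ)*(μ+1)) := by
      nlinarith [base, B1, B2, B3, B4, hSa, hjfin, hκfin, hfin]
    calc Tb ≤ Ta + (1 + (μ+1)*(2*μ+1)) * (b-a) + δ*D := by rw [hD]; linarith
      _ = Ta + (1 + (μ+1)*(2*μ+1)) * (b-a) + ε := by rw [hδD]
  -- conclude
  apply Summable.tsum_le_of_sum_range_le (h2 b hb)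
  intro m
  have e1 : ∑ n ∈ Finset.range m, (n:ℝ)^2 * p b n = ∑ n ∈ Finset.range m, phi m n * p b n :=
    Finset.sum_congr rfl fun n hn =>
      by rw [phi_eq_sq m n (le_of_lt (Finset.mem_range.mp hn))]
  rw [e1]
  calc ∑ n ∈ Finset.range m, phi m n * p b n
      ≤ ∑' n : ℕ, phi m n * p b n :=
        Summable.sum_le_tsum _ (fun i _ => mul_nonneg (phi_nonneg m i) (hp0 b hb i)) (hphiS m b hb)
    _ ≤ (∑' n : ℕ, phi m n * p a n) + K * (b - a) := main m
    _ ≤ (∑' n : ℕ, (n:ℝ)^2 * p a n) + (1 + (μ+1)*(2*μ+1)) * (b - a) := by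
        rw [hK]
        have : ∑' n : ℕ, phi m n * p a n ≤ ∑' n : ℕ, (n:ℝ)^2 * p a n := by
          apply Summable.tsum_le_tsum _ (hphiS m a ha) (h2 a ha)
          intro i
          exact mul_le_mul_of_nonneg_right (phi_le_sq m i) (hp0 a ha i)
        linarith



set_option maxHeartbeats 4000000 in
lemma stepB (hμ : 0 < μ) (hp0 : ∀ t, 0 ≤ t → ∀ n, 0 ≤ p t n)
    (hp1 : ∀ t, 0 ≤ t → HasSum (fun n => p t n) 1)
    (hpm : ∀ t, 0 ≤ t → HasSum (fun n : ℕ => (n : ℝ) * p t n) μ)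
    (hpd : ∀ t, 0 ≤ t → ∀ n, HasDerivWithinAt (fun s => p s n) (dispGen μ (p t) n) (Set.Ici 0) t)
    (h2 : ∀ t, 0 ≤ t → Summable (fun n : ℕ => (n:ℝ)^2 * p t n))
    {a b : ℝ} (ha : 0 ≤ a) (hab : a ≤ b) :
    (∑' n : ℕ, (n:ℝ)^2 * p b n) - (∑' n : ℕ, (n:ℝ)^2 * p a n)
      = ∫ u in a..b, (-2 * ((∑' n : ℕ, (n:ℝ)^2 * p u n) - μ) + 2 * μ * (μ - p u 1)) := by
  have hb : 0 ≤ b := le_trans ha hab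
  have huIcc : uIcc a b ⊆ Ici 0 := by
    rw [uIcc_of_le hab]; exact fun x hx => le_trans ha hx.1
  have hIocIci : Ioc a b ⊆ Ici 0 := fun x hx => le_trans ha hx.1.le
  have hu0 : ∀ u ∈ Icc a b, (0:ℝ) ≤ u := fun u hu => le_trans ha hu.1
  have hcu : ∀ n, ContinuousOn (fun u => p u n) (uIcc a b) :=
    fun n => (pcont hpd n).mono huIcc
  have hp01 : ∀ u, 0 ≤ u → ∀ n, p u n ≤ 1 := by
    intro u hu n
    exact le_hasSum (hp1 u hu) n (fun j _ => hp0 u hu j)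
  set K : ℝ := 1 + (μ+1)*(2*μ+1) with hK
  have hKnn : 0 ≤ K := by rw [hK]; positivity
  set E : ℝ → ℝ := fun u => ∑' n : ℕ, (n:ℝ)^2 * p u n with hE
  set CE : ℝ := E 0 + K * b with hCE
  have hEnn : ∀ u, 0 ≤ u → 0 ≤ E u := fun u hu =>
    tsum_nonneg (fun n => mul_nonneg (by positivity) (hp0 u hu n))
  have hEb : ∀ u, 0 ≤ u → u ≤ b → E u ≤ CE := by
    intro u hu hub
    have h' := stepA hμ hp0 hp1 hpm hpd h2 (le_refl (0:ℝ)) hu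
    have hK' : K * u ≤ K * b := mul_le_mul_of_nonneg_left hub hKnn
    rw [hCE, hK] at *
    simp only [hE]
    calc (∑' n : ℕ, (n:ℝ)^2 * p u n)
        ≤ (∑' n : ℕ, (n:ℝ)^2 * p 0 n) + (1 + (μ+1)*(2*μ+1)) * (u - 0) := h'
      _ ≤ (∑' n : ℕ, (n:ℝ)^2 * p 0 n) + (1 + (μ+1)*(2*μ+1)) * b := by linarith
  have hCEnn : 0 ≤ CE := le_trans (hEnn 0 le_rfl) (hEb 0 le_rfl hb)
  -- measurability of E and g on Ioc a b
  have hSMpart : ∀ m : ℕ, AEStronglyMeasurable (fun u => ∑ n ∈ Finset.range m, (n:ℝ)^2 * p u n)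
      (volume.restrict (Ioc a b)) := by
    intro m
    have hcont : ContinuousOn (fun u => ∑ n ∈ Finset.range m, (n:ℝ)^2 * p u n) (Ici 0) :=
      continuousOn_finset_sum _ (fun n _ => continuousOn_const.mul (pcont hpd n))
    exact (hcont.aestronglyMeasurable measurableSet_Ici).mono_measure
      (Measure.restrict_mono hIocIci le_rfl)
  have hSME : AEStronglyMeasurable E (volume.restrict (Ioc a b)) := by
    apply aestronglyMeasurable_of_tendsto_ae atTop hSMpart
    rw [ae_restrict_iff' measurableSet_Ioc]
    apply ae_of_all
    intro u hu
    exact ((h2 u (hIocIci hu)).hasSum.tendsto_sum_nat)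
  have hSM1 : AEStronglyMeasurable (fun u => p u 1) (volume.restrict (Ioc a b)) :=
    ((pcont hpd 1).aestronglyMeasurable measurableSet_Ici).mono_measure
      (Measure.restrict_mono hIocIci le_rfl)
  set g : ℝ → ℝ := fun u => -2 * (E u - μ) + 2 * μ * (μ - p u 1) with hg
  have hgSM : AEStronglyMeasurable g (volume.restrict (Ioc a b)) :=
    (((hSME.sub aestronglyMeasurable_const).const_mul (-2)).add
      ((aestronglyMeasurable_const.sub hSM1).const_mul (2*μ)))
  set CG : ℝ := 2*(CE + μ) + 2*μ*(μ+1) with hCG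
  have hgbd : ∀ u, u ∈ Ioc a b → ‖g u‖ ≤ CG := by
    intro u hu
    have hu0' : 0 ≤ u := hIocIci hu
    have h1' := hEnn u hu0'
    have h2' := hEb u hu0' hu.2
    have h3 := hp0 u hu0' 1
    have h4 := hp01 u hu0' 1
    rw [Real.norm_eq_abs, hg, hCG, abs_le]
    constructor <;> simp only [] <;>
      nlinarith [mul_nonneg hμ.le h3, mul_le_mul_of_nonneg_left h4 hμ.le, hCEnn]
  have hgInt : IntervalIntegrable g volume a b := by
    rw [intervalIntegrable_iff_integrableOn_Ioc_of_le hab]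
    apply Integrable.mono' (integrable_const CG) hgSM
    rw [ae_restrict_iff' measurableSet_Ioc]
    exact ae_of_all _ hgbd
  -- the sequence of interior integrands
  set F : ℕ → ℝ → ℝ := fun j u =>
    (fun n : ℕ => (n:ℝ)^2) 1 * p u 1 + ∑ k ∈ Finset.range (j+2),
      (((k:ℝ)+1) * p u (k+1) * ((fun n : ℕ => (n:ℝ)^2) k - (fun n : ℕ => (n:ℝ)^2) (k+1))
        + (μ - p u 1) * (((fun n : ℕ => (n:ℝ)^2) (k+1) - (fun n : ℕ => (n:ℝ)^2) k) * p u k))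
    with hF
  have hFcontOn : ∀ j, ContinuousOn (F j) (Ici 0) := by
    intro j
    apply ContinuousOn.add
    · exact continuousOn_const.mul (pcont hpd 1)
    · apply continuousOn_finset_sum
      intro k _
      exact ((continuousOn_const.mul (pcont hpd (k+1))).mul continuousOn_const).add
        ((continuousOn_const.sub (pcont hpd 1)).mul
          (continuousOn_const.mul (pcont hpd k)))
  set CB : ℝ := 1 + 2*CE + (μ+1)*(2*μ+1) with hCB
  have hFbd : ∀ j, ∀ u, 0 ≤ u → u ≤ b → |F j u| ≤ CB := by
    intro j u hu hub
    have hEu := hEb u hu hub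
    have hp1u := hp0 u hu 1
    have hp1le := hp01 u hu 1
    have hS1 : ∑ k ∈ Finset.range (j+2),
        |((k:ℝ)+1) * p u (k+1) * ((k:ℝ)^2 - ((k+1:ℕ):ℝ)^2)| ≤ 2 * E u := by
      calc ∑ k ∈ Finset.range (j+2), |((k:ℝ)+1) * p u (k+1) * ((k:ℝ)^2 - ((k+1:ℕ):ℝ)^2)|
          ≤ ∑ k ∈ Finset.range (j+2), 2 * (fun i : ℕ => (i:ℝ)^2 * p u i) (k+1) := by
            apply Finset.sum_le_sum
            intro k _
            have hpk := hp0 u hu (k+1)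
            rw [abs_le]
            constructor <;> simp only [] <;> push_cast <;>
              nlinarith [Nat.cast_nonneg (α := ℝ) k]
        _ = 2 * ∑ k ∈ Finset.range (j+2), (fun i : ℕ => (i:ℝ)^2 * p u i) (k+1) := by
            rw [Finset.mul_sum]
        _ ≤ 2 * ∑ i ∈ Finset.range (j+2+1), (i:ℝ)^2 * p u i := by
            have := sum_shift_le (fun i : ℕ => (i:ℝ)^2 * p u i)
              (fun i => mul_nonneg (by positivity) (hp0 u hu i)) (j+2) 1
            linarith
        _ ≤ 2 * E u := by
            have := Summable.sum_le_tsum (Finset.range (j+2+1))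
              (fun i _ => mul_nonneg (by positivity) (hp0 u hu i)) (h2 u hu)
            rw [hE]
            linarith
    have hS2 : ∑ k ∈ Finset.range (j+2),
        |(μ - p u 1) * ((((k+1:ℕ):ℝ)^2 - (k:ℝ)^2) * p u k)| ≤ (μ+1)*(2*μ+1) := by
      calc ∑ k ∈ Finset.range (j+2), |(μ - p u 1) * ((((k+1:ℕ):ℝ)^2 - (k:ℝ)^2) * p u k)|
          ≤ ∑ k ∈ Finset.range (j+2), (μ+1) * ((2*(k:ℝ)+1) * p u k) := by
            apply Finset.sum_le_sum
            intro k _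
            have hpk := hp0 u hu k
            have hc1 : -(μ+1) ≤ μ - p u 1 := by linarith
            have hc2 : μ - p u 1 ≤ μ + 1 := by linarith
            have hx0 : (0:ℝ) ≤ (2*(k:ℝ)+1) * p u k := by positivity
            have e : (((k+1:ℕ):ℝ)^2 - (k:ℝ)^2) = 2*(k:ℝ)+1 := by push_cast; ring
            rw [e, abs_le]
            constructor
            · have := mul_le_mul_of_nonneg_right hc1 hx0
              nlinarith
            · have := mul_le_mul_of_nonneg_right hc2 hx0
              nlinarith
        _ = (μ+1) * ∑ k ∈ Finset.range (j+2), ((2*(k:ℝ)+1) * p u k) := by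
            rw [Finset.mul_sum]
        _ ≤ (μ+1)*(2*μ+1) := by
            have := sum21 hp0 hp1 hpm hu (j+2)
            nlinarith
    have htri : |F j u| ≤ (fun n : ℕ => (n:ℝ)^2) 1 * p u 1
        + (∑ k ∈ Finset.range (j+2),
            |((k:ℝ)+1) * p u (k+1) * ((k:ℝ)^2 - ((k+1:ℕ):ℝ)^2)|
          + ∑ k ∈ Finset.range (j+2),
            |(μ - p u 1) * ((((k+1:ℕ):ℝ)^2 - (k:ℝ)^2) * p u k)|) := by
      rw [hF]
      simp only []
      refine (abs_add_le _ _).trans ?_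
      have e1 : |((1:ℕ):ℝ) ^ 2 * p u 1| = ((1:ℕ):ℝ)^2 * p u 1 := by
        rw [abs_of_nonneg]; positivity
      rw [e1]
      gcongr
      refine (Finset.abs_sum_le_sum_abs _ _).trans ?_
      rw [← Finset.sum_add_distrib]
      apply Finset.sum_le_sum
      intro k _
      exact abs_add_le _ _
    have e2 : (fun n : ℕ => (n:ℝ)^2) 1 * p u 1 ≤ 1 := by
      simp only []
      norm_num
      exact hp1le
    rw [hCB]
    calc |F j u| ≤ _ := htri
      _ ≤ 1 + (2 * E u + (μ+1)*(2*μ+1)) := by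
          have := hS1; have := hS2; linarith [e2]
      _ ≤ 1 + 2*CE + (μ+1)*(2*μ+1) := by linarith
  -- DCT
  have hIab : Set.uIoc a b = Ioc a b := uIoc_of_le hab
  have hDCT : Tendsto (fun j => ∫ u in a..b, F j u) atTop (𝓝 (∫ u in a..b, g u)) := by
    apply intervalIntegral.tendsto_integral_filter_of_dominated_convergence
      (bound := fun _ => CB)
    · apply Eventually.of_forall
      intro j
      rw [hIab]
      exact ((hFcontOn j).aestronglyMeasurable measurableSet_Ici).mono_measure
        (Measure.restrict_mono hIocIci le_rfl)
    · apply Eventually.of_forall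
      intro j
      apply ae_of_all
      intro u hu
      rw [hIab] at hu
      rw [Real.norm_eq_abs]
      exact hFbd j u (hIocIci hu) hu.2
    · exact intervalIntegrable_const
    · apply ae_of_all
      intro u hu
      rw [hIab] at hu
      have hu0' : 0 ≤ u := hIocIci hu
      have hGs := Gprops μ (p u) (hp1 u hu0') (hpm u hu0') (h2 u hu0')
      have htd := (hGs.tendsto_sum_nat).comp (tendsto_add_atTop_nat 2)
      have hlim := (tendsto_const_nhds (x := (fun n : ℕ => (n:ℝ)^2) 1 * p u 1)
        (f := atTop (α := ℕ))).add htd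
      have eg : g u = (fun n : ℕ => (n:ℝ)^2) 1 * p u 1
          + (-(2 * (∑' n : ℕ, (n:ℝ)^2 * p u n) - μ) + (μ - p u 1) * (2*μ+1)) := by
        rw [hg]
        simp only [hE]
        push_cast
        ring
      rw [eg]
      exact hlim
  -- boundary sequences
  have hσii : ∀ m : ℕ, IntervalIntegrable (fun u => (m:ℝ)^2 * p u m) volume a b :=
    fun m => (continuousOn_const.mul (hcu m)).intervalIntegrable
  set σ : ℕ → ℝ := fun m : ℕ => ∫ u in a..b, ((m:ℝ)^2 * p u m) with hσ
  have hσnn : ∀ m, 0 ≤ σ m := by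
    intro m
    apply intervalIntegral.integral_nonneg hab
    intro u hu
    exact mul_nonneg (by positivity) (hp0 u (hu0 u hu) m)
  have hσsum : Summable σ := by
    apply summable_of_sum_range_le hσnn
    intro m
    rw [hσ, ← intervalIntegral.integral_finset_sum (fun i _ => hσii i)]
    calc ∫ u in a..b, ∑ i ∈ Finset.range m, (i:ℝ)^2 * p u i
        ≤ ∫ _ in a..b, CE := by
          apply intervalIntegral.integral_mono_on hab
            (ContinuousOn.intervalIntegrable (continuousOn_finset_sum _
              (fun i _ => continuousOn_const.mul (hcu i)))) intervalIntegrable_const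
          intro u hu
          have := Summable.sum_le_tsum (Finset.range m)
            (fun i _ => mul_nonneg (by positivity) (hp0 u (hu0 u hu) i)) (h2 u (hu0 u hu))
          have hEu := hEb u (hu0 u hu) hu.2
          rw [hE] at hEu
          simp only [Pi.mul_apply] at hEu ⊢
          linarith
      _ = (b-a) * CE := by rw [intervalIntegral.integral_const, smul_eq_mul]
      _ ≤ (b-a) * CE + 1 := by linarith
  have hσ3sum : Summable (fun j : ℕ => σ (j+3)) := (summable_nat_add_iff 3).2 hσsum
  -- boundary bounds
  have hbb1 : ∀ j : ℕ, (∫ u in a..b, (fun n : ℕ => (n:ℝ)^2) (j+2) * (((j:ℝ)+3) * p u (j+3)))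
      ≤ ((j:ℝ)+2) * σ (j+3) := by
    intro j
    have e : ((j:ℝ)+2) * σ (j+3)
        = ∫ u in a..b, ((j:ℝ)+2) * (((j+3:ℕ):ℝ)^2 * p u (j+3)) := by
      rw [hσ]
      exact (intervalIntegral.integral_const_mul _ _).symm
    rw [e]
    apply intervalIntegral.integral_mono_on hab
      ((continuousOn_const.mul (continuousOn_const.mul (hcu (j+3)))).intervalIntegrable)
      ((hσii (j+3)).const_mul _)
    intro u hu
    have hpk := hp0 u (hu0 u hu) (j+3)
    simp only [Pi.mul_apply]
    push_cast
    nlinarith [Nat.cast_nonneg (α := ℝ) j]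
  have hbb1nn : ∀ j : ℕ, 0 ≤ (∫ u in a..b, (fun n : ℕ => (n:ℝ)^2) (j+2) * (((j:ℝ)+3) * p u (j+3))) := by
    intro j
    apply intervalIntegral.integral_nonneg hab
    intro u hu
    simp only []
    have hpk := hp0 u (hu0 u hu) (j+3)
    positivity
  have hbb2 : ∀ j : ℕ, |∫ u in a..b, (μ - p u 1) * ((fun n : ℕ => (n:ℝ)^2) (j+2) * p u (j+2))|
      ≤ (μ+1) * σ (j+2) := by
    intro j
    have eu : (μ+1) * σ (j+2)
        = ∫ u in a..b, (μ+1) * (((j+2:ℕ):ℝ)^2 * p u (j+2)) := by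
      rw [hσ]
      exact (intervalIntegral.integral_const_mul _ _).symm
    have el : -((μ+1) * σ (j+2))
        = ∫ u in a..b, (-(μ+1)) * (((j+2:ℕ):ℝ)^2 * p u (j+2)) := by
      rw [hσ]
      rw [intervalIntegral.integral_const_mul]
      ring
    rw [abs_le]
    have ii0 : IntervalIntegrable
        (fun u => (μ - p u 1) * ((fun n : ℕ => (n:ℝ)^2) (j+2) * p u (j+2))) volume a b :=
      ((continuousOn_const.sub (hcu 1)).mul (continuousOn_const.mul (hcu (j+2)))).intervalIntegrable
    constructor
    · rw [el]
      apply intervalIntegral.integral_mono_on hab ((hσii (j+2)).const_mul _) ii0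
      intro u hu
      have hpk := hp0 u (hu0 u hu) (j+2)
      have hp1u := hp0 u (hu0 u hu) 1
      have hp1le := hp01 u (hu0 u hu) 1
      simp only []
      nlinarith [sq_nonneg (((j+2:ℕ):ℝ)), mul_nonneg (sq_nonneg (((j+2:ℕ):ℝ))) hpk]
    · rw [eu]
      apply intervalIntegral.integral_mono_on hab ii0 ((hσii (j+2)).const_mul _)
      intro u hu
      have hpk := hp0 u (hu0 u hu) (j+2)
      have hp1u := hp0 u (hu0 u hu) 1
      have hp1le := hp01 u (hu0 u hu) 1
      simp only []
      nlinarith [mul_nonneg (sq_nonneg (((j+2:ℕ):ℝ))) hpk]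
  -- partial sums converge
  have hLHS : Tendsto (fun j : ℕ =>
      ∑ n ∈ Finset.range (j+3), (fun n : ℕ => (n:ℝ)^2) n * p b n
        - ∑ n ∈ Finset.range (j+3), (fun n : ℕ => (n:ℝ)^2) n * p a n)
      atTop (𝓝 (E b - E a)) := by
    apply Tendsto.sub
    · exact ((h2 b hb).hasSum.tendsto_sum_nat).comp (tendsto_add_atTop_nat 3)
    · exact ((h2 a ha).hasSum.tendsto_sum_nat).comp (tendsto_add_atTop_nat 3)
  -- key identity
  have hkey : ∀ j : ℕ,
      ∑ n ∈ Finset.range (j+3), (fun n : ℕ => (n:ℝ)^2) n * p b n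
        - ∑ n ∈ Finset.range (j+3), (fun n : ℕ => (n:ℝ)^2) n * p a n
      = (∫ u in a..b, F j u)
        + (∫ u in a..b, (fun n : ℕ => (n:ℝ)^2) (j+2) * (((j:ℝ)+3) * p u (j+3)))
        - (∫ u in a..b, (μ - p u 1) * ((fun n : ℕ => (n:ℝ)^2) (j+2) * p u (j+2))) := by
    intro j
    have hks := key_split hpd (fun n : ℕ => (n:ℝ)^2) (by norm_num) j ha hab
    rw [hks]
    have eF : (∫ u in a..b, F j u)
        = (∫ u in a..b, (fun n : ℕ => (n:ℝ)^2) 1 * p u 1)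
          + (∫ u in a..b, ∑ k ∈ Finset.range (j+2),
              (((k:ℝ)+1) * p u (k+1) * ((fun n : ℕ => (n:ℝ)^2) k - (fun n : ℕ => (n:ℝ)^2) (k+1))
                + (μ - p u 1) * (((fun n : ℕ => (n:ℝ)^2) (k+1) - (fun n : ℕ => (n:ℝ)^2) k) * p u k))) := by
      rw [hF]
      apply intervalIntegral.integral_add
      · exact (continuousOn_const.mul (hcu 1)).intervalIntegrable
      · apply ContinuousOn.intervalIntegrable
        apply continuousOn_finset_sum
        intro k _
        exact ((continuousOn_const.mul (hcu (k+1))).mul continuousOn_const).add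
          ((continuousOn_const.sub (hcu 1)).mul (continuousOn_const.mul (hcu k)))
    rw [eF]
  -- epsilon argument
  have hfinal : ∀ ε : ℝ, 0 < ε → |(E b - E a) - ∫ u in a..b, g u| ≤ ε := by
    intro ε hε
    have hδpos : 0 < ε/4 := by linarith
    have ev1 := hLHS.eventually (Metric.ball_mem_nhds _ hδpos)
    have ev2 := hDCT.eventually (Metric.ball_mem_nhds _ hδpos)
    have ev3 : ∀ᶠ j : ℕ in atTop,
        |∫ u in a..b, (μ - p u 1) * ((fun n : ℕ => (n:ℝ)^2) (j+2) * p u (j+2))| < ε/4 := by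
      have hto : Tendsto (fun j : ℕ => (μ+1) * σ (j+2)) atTop (𝓝 0) := by
        have h0 : Tendsto (fun j : ℕ => σ (j+2)) atTop (𝓝 0) :=
          hσsum.tendsto_atTop_zero.comp (tendsto_add_atTop_nat 2)
        have := h0.const_mul (μ+1)
        simpa using this
      filter_upwards [hto.eventually (eventually_lt_nhds hδpos)] with j hj
      exact lt_of_le_of_lt (hbb2 j) hj
    have hfreq : ∃ᶠ j : ℕ in atTop,
        (∫ u in a..b, (fun n : ℕ => (n:ℝ)^2) (j+2) * (((j:ℝ)+3) * p u (j+3))) < ε/4 := by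
      have hfr := freq_small (fun j => σ (j+3)) (fun j => hσnn (j+3)) hσ3sum
        (show (0:ℝ) < ε/16 by linarith)
      have evσ : ∀ᶠ j : ℕ in atTop, σ (j+3) < ε/16 :=
        hσ3sum.tendsto_atTop_zero.eventually (eventually_lt_nhds (by linarith))
      apply (hfr.and_eventually evσ).mono
      rintro j ⟨h1', h2'⟩
      have := hbb1 j
      have h3' := hσnn (j+3)
      calc (∫ u in a..b, (fun n : ℕ => (n:ℝ)^2) (j+2) * (((j:ℝ)+3) * p u (j+3)))
          ≤ ((j:ℝ)+2) * σ (j+3) := this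
        _ = (j:ℝ) * σ (j+3) + 2 * σ (j+3) := by ring
        _ < ε/16 + 2*(ε/16) := by
            have := h1'
            have := h2'
            nlinarith
        _ < ε/4 := by linarith
    obtain ⟨j, hj1', hj2', hj3', hj4'⟩ :=
      (hfreq.and_eventually (ev1.and (ev2.and ev3))).exists
    simp only [Metric.mem_ball, Real.dist_eq] at hj2' hj3'
    have hid := hkey j
    have h1'' := abs_lt.mp hj2'
    have h2'' := abs_lt.mp hj3'
    have h3'' := abs_le.mp (hbb2 j)
    have h4'' := abs_lt.mp hj4'
    have h5'' := hbb1nn j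
    rw [abs_le]
    constructor <;> linarith [hid]
  have hzero : (E b - E a) - (∫ u in a..b, g u) = 0 := by
    by_contra hcon
    have habs : 0 < |(E b - E a) - ∫ u in a..b, g u| := abs_pos.mpr hcon
    have := hfinal (|(E b - E a) - ∫ u in a..b, g u|/2) (by linarith)
    linarith
  calc (∑' n : ℕ, (n:ℝ)^2 * p b n) - (∑' n : ℕ, (n:ℝ)^2 * p a n)
      = E b - E a := by simp only [hE]
    _ = ∫ u in a..b, g u := by linarith
    _ = ∫ u in a..b, (-2 * ((∑' n : ℕ, (n:ℝ)^2 * p u n) - μ) + 2 * μ * (μ - p u 1)) := by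
        simp only [hg, hE]


set_option maxHeartbeats 1000000 in
lemma stepC (hμ : 0 < μ) (hp0 : ∀ t, 0 ≤ t → ∀ n, 0 ≤ p t n)
    (hp1 : ∀ t, 0 ≤ t → HasSum (fun n => p t n) 1)
    (hpm : ∀ t, 0 ≤ t → HasSum (fun n : ℕ => (n : ℝ) * p t n) μ)
    (hpd : ∀ t, 0 ≤ t → ∀ n, HasDerivWithinAt (fun s => p s n) (dispGen μ (p t) n) (Set.Ici 0) t)
    (h2 : ∀ t, 0 ≤ t → Summable (fun n : ℕ => (n:ℝ)^2 * p t n))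
    (t : ℝ) (ht : 0 ≤ t) :
    HasDerivWithinAt (fun s => (∑' n : ℕ, (n : ℝ) ^ 2 * p s n) - μ)
      (-2 * ((∑' n : ℕ, (n : ℝ) ^ 2 * p t n) - μ) + 2 * μ * (μ - p t 1))
      (Set.Ici 0) t := by
  set E : ℝ → ℝ := fun u => ∑' n : ℕ, (n:ℝ)^2 * p u n with hE
  set g : ℝ → ℝ := fun u => -2 * ((∑' n : ℕ, (n:ℝ)^2 * p u n) - μ) + 2 * μ * (μ - p u 1) with hg
  set K : ℝ := 1 + (μ+1)*(2*μ+1) with hK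
  have hKnn : 0 ≤ K := by rw [hK]; positivity
  have hEnn : ∀ u, 0 ≤ u → 0 ≤ E u := fun u hu =>
    tsum_nonneg (fun n => mul_nonneg (by positivity) (hp0 u hu n))
  have hEub : ∀ T u, 0 ≤ u → u ≤ T → E u ≤ E 0 + K * T := by
    intro T u hu huT
    have h' := stepA hμ hp0 hp1 hpm hpd h2 (le_refl (0:ℝ)) hu
    have hK' : K * u ≤ K * T := mul_le_mul_of_nonneg_left huT hKnn
    simp only [hE, hK] at *
    linarith
  have hp01 : ∀ u, 0 ≤ u → ∀ n, p u n ≤ 1 := by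
    intro u hu n
    exact le_hasSum (hp1 u hu) n (fun j _ => hp0 u hu j)
  have hgb : ∀ T u, 0 ≤ u → u ≤ T → |g u| ≤ 2*((E 0 + K*T) + μ) + 2*μ*(μ+1) := by
    intro T u hu huT
    have h1 := hEnn u hu
    have h2' := hEub T u hu huT
    have h3 := hp0 u hu 1
    have h4 := hp01 u hu 1
    rw [hg, abs_le]
    constructor <;> simp only [hE] at h1 h2' ⊢ <;>
      nlinarith [mul_nonneg hμ.le h3, mul_le_mul_of_nonneg_left h4 hμ.le]
  -- the fundamental identity
  have hid : ∀ {a b : ℝ}, 0 ≤ a → a ≤ b → E b - E a = ∫ u in a..b, g u := by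
    intro a b ha hab
    have := stepB hμ hp0 hp1 hpm hpd h2 ha hab
    simp only [hE, hg]
    exact this
  -- Lipschitz bound hence continuity of E on Ici 0
  have hlip : ∀ T a b, 0 ≤ a → a ≤ b → b ≤ T →
      |E b - E a| ≤ (2*((E 0 + K*T) + μ) + 2*μ*(μ+1)) * |b - a| := by
    intro T a b ha hab hbT
    rw [hid ha hab, show |∫ (u : ℝ) in a..b, g u| = ‖∫ (u : ℝ) in a..b, g u‖ from
      (Real.norm_eq_abs _).symm]
    apply intervalIntegral.norm_integral_le_of_norm_le_const
    intro x hx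
    rw [uIoc_of_le hab] at hx
    rw [Real.norm_eq_abs]
    exact hgb T x (le_trans ha hx.1.le) (le_trans hx.2 hbT)
  have hEcont : ContinuousOn E (Ici 0) := by
    intro t0 ht0
    rw [Metric.continuousWithinAt_iff]
    intro ε hε
    set C : ℝ := 2*((E 0 + K*(t0+1)) + μ) + 2*μ*(μ+1) + 1 with hC
    have hKt : 0 ≤ K*(t0+1) := by
      apply mul_nonneg hKnn
      have : (0:ℝ) ≤ t0 := ht0
      linarith
    have hE0 := hEnn 0 le_rfl
    have hCpos : 0 < C := by
      rw [hC]; nlinarith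
    refine ⟨min (ε/C) 1, lt_min (div_pos hε hCpos) one_pos, ?_⟩
    intro s hs hdist
    rw [Real.dist_eq] at hdist ⊢
    have hd1 : |s - t0| < ε/C := lt_of_lt_of_le hdist (min_le_left _ _)
    have hd2 : |s - t0| < 1 := lt_of_lt_of_le hdist (min_le_right _ _)
    have habs := abs_lt.mp hd2
    have hkey : |E s - E t0| ≤ (C-1) * |s - t0| := by
      rcases le_total s t0 with h | h
      · have := hlip (t0+1) s t0 hs h (by linarith)
        rw [hC]
        have e : |t0 - s| = |s - t0| := abs_sub_comm _ _
        calc |E s - E t0| = |E t0 - E s| := abs_sub_comm _ _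
          _ ≤ (2*((E 0 + K*(t0+1)) + μ) + 2*μ*(μ+1)) * |t0 - s| := this
          _ = (2*((E 0 + K*(t0+1)) + μ) + 2*μ*(μ+1) + 1 - 1) * |s - t0| := by rw [e]; ring
      · have := hlip (t0+1) t0 s ht0 h (by linarith)
        rw [hC]
        calc |E s - E t0| ≤ (2*((E 0 + K*(t0+1)) + μ) + 2*μ*(μ+1)) * |s - t0| := this
          _ = (2*((E 0 + K*(t0+1)) + μ) + 2*μ*(μ+1) + 1 - 1) * |s - t0| := by ring
    have hC1 : 0 ≤ C - 1 := by
      rw [hC]; nlinarith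
    calc |E s - E t0| ≤ (C-1) * |s - t0| := hkey
      _ ≤ (C-1) * (ε/C) := mul_le_mul_of_nonneg_left hd1.le hC1
      _ < C * (ε/C) := by
          apply mul_lt_mul_of_pos_right _ (by positivity)
          linarith
      _ = ε := by field_simp
  have hgcont : ContinuousOn g (Ici 0) := by
    have h1 : ContinuousOn (fun u => E u - μ) (Ici 0) := hEcont.sub continuousOn_const
    have h2' : ContinuousOn (fun u => μ - p u 1) (Ici 0) :=
      continuousOn_const.sub (pcont hpd 1)
    have : ContinuousOn (fun u => -2 * (E u - μ) + 2 * μ * (μ - p u 1)) (Ici 0) :=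
      (continuousOn_const.mul h1).add (continuousOn_const.mul h2')
    apply this.congr
    intro u _
    rw [hg]
  -- measurability of g on Ici 0
  have hSMpart : ∀ m : ℕ, AEStronglyMeasurable (fun u => ∑ n ∈ Finset.range m, (n:ℝ)^2 * p u n)
      (volume.restrict (Ici 0)) := by
    intro m
    have hcont : ContinuousOn (fun u => ∑ n ∈ Finset.range m, (n:ℝ)^2 * p u n) (Ici 0) :=
      continuousOn_finset_sum _ (fun n _ => continuousOn_const.mul (pcont hpd n))
    exact hcont.aestronglyMeasurable measurableSet_Ici
  have hSME : AEStronglyMeasurable E (volume.restrict (Ici 0)) := by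
    apply aestronglyMeasurable_of_tendsto_ae atTop hSMpart
    rw [ae_restrict_iff' measurableSet_Ici]
    apply ae_of_all
    intro u hu
    exact ((h2 u hu).hasSum.tendsto_sum_nat)
  have hSM1 : AEStronglyMeasurable (fun u => p u 1) (volume.restrict (Ici 0)) :=
    (pcont hpd 1).aestronglyMeasurable measurableSet_Ici
  have hgSM : AEStronglyMeasurable g (volume.restrict (Ici 0)) := by
    have : AEStronglyMeasurable (fun u => -2 * (E u - μ) + 2 * μ * (μ - p u 1))
        (volume.restrict (Ici 0)) :=
      ((hSME.sub aestronglyMeasurable_const).const_mul (-2)).add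
        ((aestronglyMeasurable_const.sub hSM1).const_mul (2*μ))
    apply this.congr
    apply ae_of_all
    intro u
    rw [hg]
  -- interval integrability of g from 0
  have hgInt : ∀ s : ℝ, 0 ≤ s → IntervalIntegrable g volume 0 s := by
    intro s hs
    rw [intervalIntegrable_iff_integrableOn_Ioc_of_le hs]
    have hsub : Ioc (0:ℝ) s ⊆ Ici 0 := fun x hx => hx.1.le
    apply Integrable.mono' (integrable_const (2*((E 0 + K*s) + μ) + 2*μ*(μ+1)))
      (hgSM.mono_measure (Measure.restrict_mono hsub le_rfl))
    rw [ae_restrict_iff' measurableSet_Ioc]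
    apply ae_of_all
    intro u hu
    rw [Real.norm_eq_abs]
    exact hgb s u hu.1.le hu.2
  -- derivative of the integral
  have hd : HasDerivWithinAt (fun s => ∫ u in (0:ℝ)..s, g u) (g t) (Ici 0) t := by
    rcases eq_or_lt_of_le ht with h0 | h0
    · -- t = 0
      subst h0
      have hmeas : StronglyMeasurableAtFilter g (𝓝[Ioi (0:ℝ)] 0) volume :=
        ⟨Ici 0, mem_of_superset self_mem_nhdsWithin Ioi_subset_Ici_self, hgSM⟩
      have hcw : ContinuousWithinAt g (Ioi (0:ℝ)) 0 :=
        (hgcont 0 Set.self_mem_Ici).mono Ioi_subset_Ici_self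
      exact intervalIntegral.integral_hasDerivWithinAt_right
        (hgInt 0 le_rfl) (s := Ici (0:ℝ)) (t := Ioi (0:ℝ)) hmeas hcw
    · -- t > 0
      have hIci : Ici (0:ℝ) ∈ 𝓝 t := mem_of_superset (isOpen_Ioi.mem_nhds h0) Ioi_subset_Ici_self
      have hmeas : StronglyMeasurableAtFilter g (𝓝 t) volume := ⟨Ici 0, hIci, hgSM⟩
      have hca : ContinuousAt g t := (hgcont t (Set.mem_Ici.mpr ht)).continuousAt hIci
      exact (intervalIntegral.integral_hasDerivAt_right (hgInt t ht) hmeas hca).hasDerivWithinAt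
  -- transfer to E
  have hd2 : HasDerivWithinAt (fun s => (E 0 - μ) + ∫ u in (0:ℝ)..s, g u) (g t) (Ici 0) t :=
    hd.const_add (E 0 - μ)
  have hfinal : HasDerivWithinAt (fun s => E s - μ) (g t) (Ici 0) t := by
    apply hd2.congr
    · intro s hs
      have := hid (le_refl (0:ℝ)) hs
      linarith
    · have := hid (le_refl (0:ℝ)) ht
      linarith
  exact hfinal

end Part2

theorem energy_dissipation_identity (μ : ℝ) (hμ : 0 < μ) :
    (∀ q : ℕ → ℝ, memS μ q → Summable (fun n : ℕ => (n : ℝ) ^ 3 * q n) →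
      Summable (fun n : ℕ => |(n : ℝ) ^ 2 * dispGen μ q n|) ∧
      ∑' n : ℕ, (n : ℝ) ^ 2 * dispGen μ q n =
        -2 * ((∑' n : ℕ, (n : ℝ) ^ 2 * q n) - μ) + 2 * μ * (μ - q 1)) ∧
    (∀ p : ℝ → ℕ → ℝ, IsSol μ p →
      (∀ t, 0 ≤ t → Summable (fun n : ℕ => (n : ℝ) ^ 3 * p t n)) →
      ∀ t, 0 ≤ t →
        HasDerivWithinAt (fun s => (∑' n : ℕ, (n : ℝ) ^ 2 * p s n) - μ)
          (-2 * ((∑' n : ℕ, (n : ℝ) ^ 2 * p t n) - μ) + 2 * μ * (μ - p t 1))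
          (Set.Ici 0) t) := by
  constructor
  · intro q hq h3
    exact part1 μ hμ q hq h3
  · intro p hsol h3 t ht
    obtain ⟨hp0, hp1, hpm, hpd⟩ := hsol
    have h2 : ∀ t, 0 ≤ t → Summable (fun n : ℕ => (n:ℝ)^2 * p t n) := fun t ht =>
      summable_sq (hp0 t ht) (hp1 t ht).summable (h3 t ht)
    exact stepC hμ hp0 hp1 hpm hpd h2 t ht
end

section
/- Let μ = 1 and let p be a classical solution of the mean-field dispersion system with mean 1 whose initial datum has finite second moment E[p(0)] < ∞ and satisfies p_0(0) > 0. Then for all t ≥ 0, E[p(t)] ≤ E[p(0)]·e^{−2t} + 4/(t + 2/p_0(0)) + 2·p_0(0)·e^{−t}. -/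
lemma tail_hasSum {q : ℕ → ℝ} {a : ℝ} (h : HasSum q a) :
    HasSum (fun n => q (n + 2)) (a - (q 0 + q 1)) := by
  rw [hasSum_nat_add_iff 2]
  simpa [Finset.sum_range_succ] using h

lemma stat1 {q : ℕ → ℝ} (hq0 : ∀ n, 0 ≤ q n) (hq1 : HasSum q 1)
    (hqm : HasSum (fun n : ℕ => (n : ℝ) * q n) 1) :
    0 ≤ 1 - q 1 ∧ q 0 ≤ 1 - q 1 ∧ 1 - q 1 ≤ 2 * q 0 := by
  have htail : HasSum (fun n => ((n : ℕ) + 2 : ℝ) * q (n + 2)) (1 - q 1) := by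
    have := tail_hasSum (q := fun n : ℕ => (n : ℝ) * q n) hqm
    simpa [add_comm] using this.congr_fun (by intro n; push_cast; ring)
  have htailq : HasSum (fun n => q (n + 2)) (1 - (q 0 + q 1)) := tail_hasSum hq1
  have h1 : 0 ≤ 1 - q 1 :=
    htail.nonneg fun n => by
      have := hq0 (n + 2); have := (Nat.cast_nonneg n : (0:ℝ) ≤ n); nlinarith
  have h2 : 1 - (q 0 + q 1) ≤ 1 - q 1 := by
    refine hasSum_le (fun n => ?_) htailq htail
    nlinarith [hq0 (n + 2), (Nat.cast_nonneg n : (0:ℝ) ≤ n)]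
  have h3 : 2 * (1 - (q 0 + q 1)) ≤ 1 - q 1 := by
    refine hasSum_le (fun n => ?_) (htailq.mul_left 2) htail
    nlinarith [hq0 (n + 2), (Nat.cast_nonneg n : (0:ℝ) ≤ n)]
  have h4 : q 0 + q 1 ≤ 1 := by
    have := sum_le_hasSum ({0, 1} : Finset ℕ) (fun i _ => hq0 i) hq1
    norm_num at this; exact this
  exact ⟨h1, by linarith, by linarith⟩

lemma stat2 {q : ℕ → ℝ} (hq1 : HasSum q 1)
    (hqm : HasSum (fun n : ℕ => (n : ℝ) * q n) 1) :
    HasSum (fun n : ℕ => (2 * (n : ℝ) + 1) * q n) 3 := by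
  have h := (hqm.mul_left 2).add hq1
  have : HasSum (fun n : ℕ => (2 * (n : ℝ) + 1) * q n) (2 * 1 + 1) :=
    h.congr_fun (by intro n; ring)
  norm_num at this; exact this

lemma sum_gen (q : ℕ → ℝ) : ∀ m : ℕ, ∑ n ∈ Finset.range (m + 2), dispGen 1 q n
    = ((m : ℝ) + 2) * q (m + 2) - (1 - q 1) * q (m + 1) := by
  intro m
  induction m with
  | zero => simp [Finset.sum_range_succ, dispGen]; ring
  | succ m ih =>
      rw [show m + 1 + 2 = (m + 2) + 1 from rfl, Finset.sum_range_succ, ih]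
      have hgen : dispGen 1 q (m + 2) = ((m : ℝ) + 3) * q (m + 3)
          - ((m : ℝ) + 2) * q (m + 2) - (1 - q 1) * (q (m + 2) - q (m + 1)) := rfl
      rw [hgen]
      push_cast
      ring

lemma sum_weighted_gen (q : ℕ → ℝ) : ∀ m : ℕ,
    ∑ n ∈ Finset.range (m + 2), (((n : ℝ)) ^ 2 - ((m : ℝ) + 1) ^ 2) * dispGen 1 q n
    = (∑ n ∈ Finset.range (m + 2), (n : ℝ) * (1 - 2 * (n : ℝ)) * q n) + q 1
      + (1 - q 1) * ∑ n ∈ Finset.range (m + 1), (2 * (n : ℝ) + 1) * q n := by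
  intro m
  induction m with
  | zero =>
      simp [Finset.sum_range_succ, dispGen]; ring
  | succ m ih =>
      have hsplit : ∀ n ∈ Finset.range (m + 2),
          (((n : ℝ)) ^ 2 - (((m + 1 : ℕ) : ℝ) + 1) ^ 2) * dispGen 1 q n
          = (((n : ℝ)) ^ 2 - ((m : ℝ) + 1) ^ 2) * dispGen 1 q n
            - (2 * (m : ℝ) + 3) * dispGen 1 q n := by
        intro n _; push_cast; ring
      rw [show m + 1 + 2 = (m + 2) + 1 from rfl, Finset.sum_range_succ,
        Finset.sum_congr rfl hsplit, Finset.sum_sub_distrib, ← Finset.mul_sum, ih,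
        sum_gen q m, show (m + 2) + 1 = (m + 1) + 2 from rfl, Finset.sum_range_succ,
        show (m + 1) + 1 = m + 2 from rfl, Finset.sum_range_succ (n := m + 1)]
      rw [Finset.sum_range_succ (f := fun n : ℕ => (n : ℝ) * (1 - 2 * (n : ℝ)) * q n) (n := m + 2),
        Finset.sum_range_succ (f := fun n : ℕ => (n : ℝ) * (1 - 2 * (n : ℝ)) * q n) (n := m + 1)]
      have hgen : dispGen 1 q (m + 2) = ((m : ℝ) + 3) * q (m + 3)
          - ((m : ℝ) + 2) * q (m + 2) - (1 - q 1) * (q (m + 2) - q (m + 1)) := rfl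
      rw [hgen]
      push_cast
      ring
open MeasureTheory intervalIntegral Set Filter Topology in
lemma monoIci {f f' : ℝ → ℝ} (hc : ContinuousOn f (Set.Ici 0))
    (hd : ∀ x : ℝ, 0 < x → HasDerivAt f (f' x) x)
    (h0 : ∀ x : ℝ, 0 < x → 0 ≤ f' x) : MonotoneOn f (Set.Ici 0) := by
  apply monotoneOn_of_deriv_nonneg (convex_Ici 0) hc
  · rw [interior_Ici]
    intro x hx
    exact (hd x hx).differentiableAt.differentiableWithinAt
  · rw [interior_Ici]
    intro x hx
    rw [(hd x hx).deriv]
    exact h0 x hx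

lemma tail_hasSum_k {q : ℕ → ℝ} {a : ℝ} (k : ℕ) (h : HasSum q a) :
    HasSum (fun n => q (n + k)) (a - ∑ i ∈ Finset.range k, q i) := by
  rw [hasSum_nat_add_iff k]
  simpa using h

noncomputable def Tfun (p : ℝ → ℕ → ℝ) (m : ℕ) (s : ℝ) : ℝ :=
  (∑ n ∈ Finset.range (m + 2), (((n : ℝ)) ^ 2 - ((m : ℝ) + 1) ^ 2) * p s n) + ((m : ℝ) + 1) ^ 2

noncomputable def Ifun (p : ℝ → ℕ → ℝ) (m : ℕ) (s : ℝ) : ℝ :=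
  (∑ n ∈ Finset.range (m + 2), (n : ℝ) * (1 - 2 * (n : ℝ)) * p s n) + p s 1
    + (1 - p s 1) * ∑ n ∈ Finset.range (m + 1), (2 * (n : ℝ) + 1) * p s n

noncomputable def Mom2 (p : ℝ → ℕ → ℝ) (t : ℝ) : ℝ := ∑' n : ℕ, (n : ℝ) ^ 2 * p t n

lemma T_eq (p : ℝ → ℕ → ℝ) (m : ℕ) (s : ℝ) :
    Tfun p m s = (∑ n ∈ Finset.range (m + 2), (n : ℝ) ^ 2 * p s n)
      + ((m : ℝ) + 1) ^ 2 * (1 - ∑ n ∈ Finset.range (m + 2), p s n) := by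
  simp only [Tfun]
  have h : ∀ n ∈ Finset.range (m + 2), (((n : ℝ)) ^ 2 - ((m : ℝ) + 1) ^ 2) * p s n
      = (n : ℝ) ^ 2 * p s n - ((m : ℝ) + 1) ^ 2 * p s n := fun n _ => by ring
  rw [Finset.sum_congr rfl h, Finset.sum_sub_distrib, ← Finset.mul_sum]
  ring
open MeasureTheory intervalIntegral Set Filter Topology

section Dyn
variable {p : ℝ → ℕ → ℝ}

lemma contP (hder : ∀ t, 0 ≤ t → ∀ n, HasDerivWithinAt (fun s => p s n) (dispGen 1 (p t) n) (Set.Ici 0) t)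
    (n : ℕ) : ContinuousOn (fun s => p s n) (Set.Ici 0) :=
  fun x hx => (hder x hx n).continuousWithinAt

lemma contT (hder : ∀ t, 0 ≤ t → ∀ n, HasDerivWithinAt (fun s => p s n) (dispGen 1 (p t) n) (Set.Ici 0) t)
    (m : ℕ) : ContinuousOn (fun s => Tfun p m s) (Set.Ici 0) := by
  apply ContinuousOn.add _ continuousOn_const
  exact continuousOn_finset_sum _ fun n _ => continuousOn_const.mul (contP hder n)

lemma contI (hder : ∀ t, 0 ≤ t → ∀ n, HasDerivWithinAt (fun s => p s n) (dispGen 1 (p t) n) (Set.Ici 0) t)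
    (m : ℕ) : ContinuousOn (fun s => Ifun p m s) (Set.Ici 0) := by
  apply ContinuousOn.add
  apply ContinuousOn.add
  · exact continuousOn_finset_sum _ fun n _ => continuousOn_const.mul (contP hder n)
  · exact contP hder 1
  · exact (continuousOn_const.sub (contP hder 1)).mul
      (continuousOn_finset_sum _ fun n _ => continuousOn_const.mul (contP hder n))

lemma hasDerivT (hder : ∀ t, 0 ≤ t → ∀ n, HasDerivWithinAt (fun s => p s n) (dispGen 1 (p t) n) (Set.Ici 0) t)
    (m : ℕ) {t : ℝ} (ht : 0 ≤ t) :
    HasDerivWithinAt (fun s => Tfun p m s) (Ifun p m t) (Set.Ici 0) t := by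
  have h1 : HasDerivWithinAt
      (fun s => ∑ n ∈ Finset.range (m + 2), (((n : ℝ)) ^ 2 - ((m : ℝ) + 1) ^ 2) * p s n)
      (∑ n ∈ Finset.range (m + 2), (((n : ℝ)) ^ 2 - ((m : ℝ) + 1) ^ 2) * dispGen 1 (p t) n)
      (Set.Ici 0) t := by
    apply HasDerivWithinAt.fun_sum
    intro n _
    exact (hder t ht n).const_mul _
  have h2 := h1.add_const (((m : ℝ) + 1) ^ 2)
  rw [sum_weighted_gen (p t) m] at h2
  exact h2

end Dyn
section Dyn2
open MeasureTheory intervalIntegral Set Filter Topology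
variable {p : ℝ → ℕ → ℝ}
  (hpos : ∀ t, 0 ≤ t → ∀ n, 0 ≤ p t n)
  (hsum1 : ∀ t, 0 ≤ t → HasSum (fun n => p t n) 1)
  (hsumm : ∀ t, 0 ≤ t → HasSum (fun n : ℕ => (n : ℝ) * p t n) 1)
  (hder : ∀ t, 0 ≤ t → ∀ n, HasDerivWithinAt (fun s => p s n) (dispGen 1 (p t) n) (Set.Ici 0) t)

include hpos hsum1 in
lemma T_nonneg (m : ℕ) {t : ℝ} (ht : 0 ≤ t) : 0 ≤ Tfun p m t := by
  rw [T_eq]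
  have h1 : ∑ n ∈ Finset.range (m + 2), p t n ≤ 1 :=
    sum_le_hasSum _ (fun n _ => hpos t ht n) (hsum1 t ht)
  have h2 : 0 ≤ ∑ n ∈ Finset.range (m + 2), (n : ℝ) ^ 2 * p t n :=
    Finset.sum_nonneg fun n _ => mul_nonneg (by positivity) (hpos t ht n)
  nlinarith [sq_nonneg ((m : ℝ) + 1)]

include hpos hsum1 in
lemma sumsq_le_T (m : ℕ) {t : ℝ} (ht : 0 ≤ t) :
    ∑ n ∈ Finset.range (m + 2), (n : ℝ) ^ 2 * p t n ≤ Tfun p m t := by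
  rw [T_eq]
  have h1 : ∑ n ∈ Finset.range (m + 2), p t n ≤ 1 :=
    sum_le_hasSum _ (fun n _ => hpos t ht n) (hsum1 t ht)
  nlinarith [sq_nonneg ((m : ℝ) + 1)]

include hpos hsum1 hsumm in
lemma I_le (m : ℕ) {t : ℝ} (ht : 0 ≤ t) : Ifun p m t ≤ 3 := by
  obtain ⟨ha0, -, -⟩ := stat1 (hpos t ht) (hsum1 t ht) (hsumm t ht)
  have h1 : (∑ n ∈ Finset.range (m + 2), (n : ℝ) * (1 - 2 * (n : ℝ)) * p t n) ≤ - p t 1 := by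
    have := Finset.sum_le_sum (s := Finset.range (m + 2))
      (g := fun n : ℕ => if n = 1 then -p t 1 else 0)
      (f := fun n : ℕ => (n : ℝ) * (1 - 2 * (n : ℝ)) * p t n) ?_
    · rwa [Finset.sum_ite_eq' (Finset.range (m + 2)) 1, if_pos (by simp)] at this
    · intro n _
      rcases n with _ | _ | n
      · simp
      · norm_num
      · have h := hpos t ht (n + 2)
        have : ((n : ℝ) + 2) * (1 - 2 * ((n : ℝ) + 2)) ≤ 0 := by nlinarith [(Nat.cast_nonneg n : (0:ℝ) ≤ n)]
        simp only [if_neg (by omega : ¬ n + 2 = 1)]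
        push_cast
        nlinarith [(Nat.cast_nonneg n : (0:ℝ) ≤ n), hpos t ht (n+2)]
  have h2 : ∑ n ∈ Finset.range (m + 1), (2 * (n : ℝ) + 1) * p t n ≤ 3 :=
    sum_le_hasSum (Finset.range (m + 1))
      (fun n _ => mul_nonneg (by positivity) (hpos t ht n)) (stat2 (hsum1 t ht) (hsumm t ht))
  have h3 : 0 ≤ ∑ n ∈ Finset.range (m + 1), (2 * (n : ℝ) + 1) * p t n :=
    Finset.sum_nonneg fun n _ => mul_nonneg (by positivity) (hpos t ht n)
  have h4 : 1 - p t 1 ≤ 1 := by have := hpos t ht 1; linarith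
  simp only [Ifun]
  nlinarith [mul_le_mul h4 h2 h3 (by norm_num : (0:ℝ) ≤ 1)]

include hpos hsum1 hsumm in
lemma I_ge (m : ℕ) {t : ℝ} (ht : 0 ≤ t) :
    - 2 * Tfun p m t ≤ Ifun p m t := by
  obtain ⟨ha0, -, -⟩ := stat1 (hpos t ht) (hsum1 t ht) (hsumm t ht)
  have h1 : ∑ n ∈ Finset.range (m + 2), (-2 * ((n : ℝ) ^ 2 * p t n))
      ≤ ∑ n ∈ Finset.range (m + 2), (n : ℝ) * (1 - 2 * (n : ℝ)) * p t n := by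
    apply Finset.sum_le_sum
    intro n _
    nlinarith [(Nat.cast_nonneg n : (0:ℝ) ≤ n), hpos t ht n]
  rw [← Finset.mul_sum] at h1
  have h2 : 0 ≤ (1 - p t 1) * ∑ n ∈ Finset.range (m + 1), (2 * (n : ℝ) + 1) * p t n :=
    mul_nonneg ha0 (Finset.sum_nonneg fun n _ => mul_nonneg (by positivity) (hpos t ht n))
  have h3 := sumsq_le_T hpos hsum1 m ht
  have h4 := hpos t ht 1
  simp only [Ifun]
  nlinarith

include hder in
lemma ftcT (m : ℕ) {t : ℝ} (ht : 0 ≤ t) :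
    ∫ s in (0:ℝ)..t, Ifun p m s = Tfun p m t - Tfun p m 0 := by
  apply intervalIntegral.integral_eq_sub_of_hasDeriv_right_of_le ht
  · exact (contT hder m).mono (Set.Icc_subset_Ici_self)
  · intro x hx
    exact ((hasDerivT hder m hx.1.le)).mono (fun y hy => le_of_lt (lt_trans hx.1 hy) : Set.Ioi x ⊆ Set.Ici 0)
  · apply ContinuousOn.intervalIntegrable
    rw [Set.uIcc_of_le ht]
    exact (contI hder m).mono (Set.Icc_subset_Ici_self)

include hpos hsum1 hsumm hder in
lemma T_growth (m : ℕ) {t : ℝ} (ht : 0 ≤ t) : Tfun p m t ≤ Tfun p m 0 + 3 * t := by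
  have h := ftcT hder m ht
  have hint : IntervalIntegrable (fun s => Ifun p m s) volume 0 t := by
    apply ContinuousOn.intervalIntegrable
    rw [Set.uIcc_of_le ht]
    exact (contI hder m).mono (Set.Icc_subset_Ici_self)
  have hb : ∫ s in (0:ℝ)..t, Ifun p m s ≤ ∫ s in (0:ℝ)..t, (3:ℝ) := by
    apply intervalIntegral.integral_mono_on ht hint intervalIntegrable_const
    intro x hx
    exact I_le hpos hsum1 hsumm m hx.1
  rw [h] at hb
  rw [intervalIntegral.integral_const] at hb
  simp at hb
  linarith

include hpos in
lemma T0_le (h2 : Summable (fun n : ℕ => (n : ℝ) ^ 2 * p 0 n))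
    (hsum10 : HasSum (fun n => p 0 n) 1) (m : ℕ) : Tfun p m 0 ≤ Mom2 p 0 := by
  rw [T_eq]
  have tail1 : HasSum (fun n => p 0 (n + (m + 2))) (1 - ∑ i ∈ Finset.range (m + 2), p 0 i) :=
    tail_hasSum_k (m + 2) hsum10
  have tail2 : HasSum (fun n : ℕ => ((n + (m + 2) : ℕ) : ℝ) ^ 2 * p 0 (n + (m + 2)))
      (Mom2 p 0 - ∑ i ∈ Finset.range (m + 2), (i : ℝ) ^ 2 * p 0 i) :=
    tail_hasSum_k (m + 2) h2.hasSum
  have key : ((m : ℝ) + 1) ^ 2 * (1 - ∑ i ∈ Finset.range (m + 2), p 0 i)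
      ≤ Mom2 p 0 - ∑ i ∈ Finset.range (m + 2), (i : ℝ) ^ 2 * p 0 i := by
    refine hasSum_le (fun n => ?_) (tail1.mul_left (((m : ℝ) + 1) ^ 2)) tail2
    have hc : ((m : ℝ) + 1) ^ 2 ≤ ((n + (m + 2) : ℕ) : ℝ) ^ 2 := by
      have : ((m : ℝ) + 1) ≤ ((n + (m + 2) : ℕ) : ℝ) := by push_cast; linarith [(Nat.cast_nonneg n : (0:ℝ) ≤ n)]
      nlinarith [(Nat.cast_nonneg m : (0:ℝ) ≤ m)]
    exact mul_le_mul_of_nonneg_right hc (hpos 0 le_rfl _)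
  linarith

include hpos hsum1 hsumm hder in
lemma summable_sq_s6 (h2 : Summable (fun n : ℕ => (n : ℝ) ^ 2 * p 0 n)) {t : ℝ} (ht : 0 ≤ t) :
    Summable (fun n : ℕ => (n : ℝ) ^ 2 * p t n) := by
  apply summable_of_sum_range_le (c := Mom2 p 0 + 3 * t)
    (fun n => mul_nonneg (by positivity) (hpos t ht n))
  intro M
  calc ∑ i ∈ Finset.range M, (i : ℝ) ^ 2 * p t i
      ≤ ∑ i ∈ Finset.range (M + 2), (i : ℝ) ^ 2 * p t i := by
        apply Finset.sum_le_sum_of_subset_of_nonneg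
        · exact Finset.range_subset_range.2 (by omega)
        · intro n _ _; exact mul_nonneg (by positivity) (hpos t ht n)
    _ ≤ Tfun p M t := sumsq_le_T hpos hsum1 M ht
    _ ≤ Tfun p M 0 + 3 * t := T_growth hpos hsum1 hsumm hder M ht
    _ ≤ Mom2 p 0 + 3 * t := by linarith [T0_le hpos h2 (hsum1 0 le_rfl) M]

include hpos hsum1 in
lemma tendsto_T {t : ℝ} (ht : 0 ≤ t) (hS : Summable (fun n : ℕ => (n : ℝ) ^ 2 * p t n)) :
    Filter.Tendsto (fun m => Tfun p m t) Filter.atTop (nhds (Mom2 p t)) := by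
  have hA : Filter.Tendsto (fun m : ℕ => ∑ n ∈ Finset.range (m + 2), (n : ℝ) ^ 2 * p t n)
      Filter.atTop (nhds (Mom2 p t)) :=
    (hS.hasSum.tendsto_sum_nat).comp (Filter.tendsto_add_atTop_nat 2)
  have hR : Filter.Tendsto (fun m : ℕ => ((m : ℝ) + 1) ^ 2 * (1 - ∑ n ∈ Finset.range (m + 2), p t n))
      Filter.atTop (nhds 0) := by
    apply tendsto_of_tendsto_of_tendsto_of_le_of_le (g := fun _ => (0:ℝ))
      (h := fun m => Mom2 p t - ∑ n ∈ Finset.range (m + 2), (n : ℝ) ^ 2 * p t n)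
      tendsto_const_nhds (by simpa using (tendsto_const_nhds (x := Mom2 p t)).sub hA)
    · intro m
      have h1 : ∑ n ∈ Finset.range (m + 2), p t n ≤ 1 :=
        sum_le_hasSum _ (fun n _ => hpos t ht n) (hsum1 t ht)
      have h2 : (0:ℝ) ≤ ((m : ℝ) + 1) ^ 2 := by positivity
      simp only []
      nlinarith
    · intro m
      have tail1 : HasSum (fun n => p t (n + (m + 2))) (1 - ∑ i ∈ Finset.range (m + 2), p t i) :=
        tail_hasSum_k (m + 2) (hsum1 t ht)
      have tail2 : HasSum (fun n : ℕ => ((n + (m + 2) : ℕ) : ℝ) ^ 2 * p t (n + (m + 2)))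
          (Mom2 p t - ∑ i ∈ Finset.range (m + 2), (i : ℝ) ^ 2 * p t i) :=
        tail_hasSum_k (m + 2) hS.hasSum
      refine hasSum_le (fun n => ?_) (tail1.mul_left (((m : ℝ) + 1) ^ 2)) tail2
      have hc : ((m : ℝ) + 1) ^ 2 ≤ ((n + (m + 2) : ℕ) : ℝ) ^ 2 := by
        have : ((m : ℝ) + 1) ≤ ((n + (m + 2) : ℕ) : ℝ) := by push_cast; linarith [(Nat.cast_nonneg n : (0:ℝ) ≤ n)]
        nlinarith [(Nat.cast_nonneg m : (0:ℝ) ≤ m)]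
      exact mul_le_mul_of_nonneg_right hc (hpos t ht _)
  have := hA.add hR
  rw [add_zero] at this
  apply this.congr
  intro m
  rw [T_eq]

include hder in
lemma ftcExpT (m : ℕ) {t : ℝ} (ht : 0 ≤ t) :
    ∫ s in (0:ℝ)..t, Real.exp (2*s) * (2 * Tfun p m s + Ifun p m s)
      = Real.exp (2*t) * Tfun p m t - Tfun p m 0 := by
  have hftc := intervalIntegral.integral_eq_sub_of_hasDeriv_right_of_le ht
    (f := fun s => Real.exp (2*s) * Tfun p m s)
    (f' := fun s => Real.exp (2*s) * (2 * Tfun p m s + Ifun p m s)) ?_ ?_ ?_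
  · rw [hftc]; norm_num
  · exact ((by continuity : Continuous (fun s : ℝ => Real.exp (2*s))).continuousOn.mul
      (contT hder m)).mono Set.Icc_subset_Ici_self
  · intro x hx
    have he : HasDerivAt (fun s : ℝ => Real.exp (2*s)) (2 * Real.exp (2*x)) x := by
      simpa [mul_comm] using ((hasDerivAt_id x).const_mul 2).exp
    have hT := (hasDerivT hder m hx.1.le).mono
      (fun y hy => le_of_lt (lt_trans hx.1 hy) : Set.Ioi x ⊆ Set.Ici 0)
    have := (he.hasDerivWithinAt.mul hT)
    exact this.congr_deriv (by ring)
  · apply ContinuousOn.intervalIntegrable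
    rw [Set.uIcc_of_le ht]
    apply ContinuousOn.mono _ Set.Icc_subset_Ici_self
    exact (by continuity : Continuous (fun s : ℝ => Real.exp (2*s))).continuousOn.mul
      ((continuousOn_const.mul (contT hder m)).add (contI hder m))

include hpos hsum1 hsumm hder in
lemma key_identity (h2 : Summable (fun n : ℕ => (n : ℝ) ^ 2 * p 0 n)) {t : ℝ} (ht : 0 ≤ t) :
    Real.exp (2*t) * Mom2 p t - Mom2 p 0
      = ∫ s in (0:ℝ)..t, Real.exp (2*s) * (4 - 2 * p s 1) := by
  have hM0 : 0 ≤ Mom2 p 0 := tsum_nonneg fun n => mul_nonneg (by positivity) (hpos 0 le_rfl n)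
  have hL : Filter.Tendsto (fun m => Real.exp (2*t) * Tfun p m t - Tfun p m 0)
      Filter.atTop (nhds (Real.exp (2*t) * Mom2 p t - Mom2 p 0)) :=
    ((tendsto_T hpos hsum1 ht (summable_sq_s6 hpos hsum1 hsumm hder h2 ht)).const_mul _).sub
      (tendsto_T hpos hsum1 le_rfl h2)
  have hR : Filter.Tendsto
      (fun m => ∫ s in (0:ℝ)..t, Real.exp (2*s) * (2 * Tfun p m s + Ifun p m s))
      Filter.atTop (nhds (∫ s in (0:ℝ)..t, Real.exp (2*s) * (4 - 2 * p s 1))) := by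
    apply intervalIntegral.tendsto_integral_filter_of_dominated_convergence
      (bound := fun _ => Real.exp (2*t) * (4 * (Mom2 p 0 + 3*t) + 3))
    · apply Filter.Eventually.of_forall
      intro m
      apply ContinuousOn.aestronglyMeasurable _ measurableSet_uIoc
      have hsub : Set.uIoc (0:ℝ) t ⊆ Set.Ici 0 := by
        rw [Set.uIoc_of_le ht]
        exact fun y hy => le_of_lt hy.1
      exact ((by continuity : Continuous (fun s : ℝ => Real.exp (2*s))).continuousOn.mul
        ((continuousOn_const.mul (contT hder m)).add (contI hder m))).mono hsub
    · apply Filter.Eventually.of_forall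
      intro m
      apply MeasureTheory.ae_of_all
      intro x hx
      rw [Set.uIoc_of_le ht] at hx
      have hx0 : 0 ≤ x := le_of_lt hx.1
      have hTb : Tfun p m x ≤ Mom2 p 0 + 3 * t := by
        have := T_growth hpos hsum1 hsumm hder m hx0
        have h0le := T0_le hpos h2 (hsum1 0 le_rfl) m
        linarith [hx.2]
      have hT0 : 0 ≤ Tfun p m x := T_nonneg hpos hsum1 m hx0
      have hIle : Ifun p m x ≤ 3 := I_le hpos hsum1 hsumm m hx0
      have hIge : -2 * Tfun p m x ≤ Ifun p m x := I_ge hpos hsum1 hsumm m hx0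
      rw [Real.norm_eq_abs, abs_mul, Real.abs_exp]
      have h1 : |2 * Tfun p m x + Ifun p m x| ≤ 4 * (Mom2 p 0 + 3*t) + 3 := by
        rw [abs_le]
        constructor <;> nlinarith
      have h2' : Real.exp (2*x) ≤ Real.exp (2*t) :=
        Real.exp_le_exp.2 (by linarith [hx.2])
      have h3 : (0:ℝ) ≤ 4 * (Mom2 p 0 + 3*t) + 3 := by nlinarith
      calc Real.exp (2*x) * |2 * Tfun p m x + Ifun p m x|
          ≤ Real.exp (2*x) * (4 * (Mom2 p 0 + 3*t) + 3) := by
            exact mul_le_mul_of_nonneg_left h1 (Real.exp_pos _).le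
        _ ≤ Real.exp (2*t) * (4 * (Mom2 p 0 + 3*t) + 3) :=
            mul_le_mul_of_nonneg_right h2' h3
    · exact intervalIntegrable_const
    · apply MeasureTheory.ae_of_all
      intro x hx
      rw [Set.uIoc_of_le ht] at hx
      have hx0 : 0 ≤ x := le_of_lt hx.1
      have hSx := summable_sq_s6 hpos hsum1 hsumm hder h2 hx0
      have hT := tendsto_T hpos hsum1 hx0 hSx
      have hs1 : HasSum (fun n : ℕ => (n : ℝ) * (1 - 2 * (n : ℝ)) * p x n)
          (1 - 2 * Mom2 p x) := by
        have := (hsumm x hx0).sub ((hSx.hasSum).mul_left 2)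
        exact this.congr_fun (by intro n; ring)
      have hA : Filter.Tendsto (fun m : ℕ => ∑ n ∈ Finset.range (m + 2),
          (n : ℝ) * (1 - 2 * (n : ℝ)) * p x n) Filter.atTop (nhds (1 - 2 * Mom2 p x)) :=
        hs1.tendsto_sum_nat.comp (Filter.tendsto_add_atTop_nat 2)
      have hB : Filter.Tendsto (fun m : ℕ => ∑ n ∈ Finset.range (m + 1),
          (2 * (n : ℝ) + 1) * p x n) Filter.atTop (nhds 3) :=
        (stat2 (hsum1 x hx0) (hsumm x hx0)).tendsto_sum_nat.comp (Filter.tendsto_add_atTop_nat 1)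
      have hI : Filter.Tendsto (fun m => Ifun p m x) Filter.atTop
          (nhds ((1 - 2 * Mom2 p x) + p x 1 + (1 - p x 1) * 3)) := by
        exact (hA.add tendsto_const_nhds).add (tendsto_const_nhds.mul hB)
      have heq : Real.exp (2*x) * (4 - 2 * p x 1)
          = Real.exp (2*x) * (2 * Mom2 p x + ((1 - 2 * Mom2 p x) + p x 1 + (1 - p x 1) * 3)) := by
        ring
      rw [heq]
      exact tendsto_const_nhds.mul ((hT.const_mul 2).add hI)
  have hR' : Filter.Tendsto (fun m => Real.exp (2*t) * Tfun p m t - Tfun p m 0)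
      Filter.atTop (nhds (∫ s in (0:ℝ)..t, Real.exp (2*s) * (4 - 2 * p s 1))) := by
    apply hR.congr
    intro m
    exact ftcExpT hder m ht
  exact tendsto_nhds_unique hL hR'

include hpos hder in
lemma p0_lower {t : ℝ} (ht : 0 ≤ t) : p 0 0 * Real.exp (-t) ≤ p t 0 := by
  have hmono : MonotoneOn (fun s => Real.exp s * p s 0) (Set.Ici 0) := by
    apply monoIci (f' := fun x => Real.exp x * p x 0 + Real.exp x * dispGen 1 (p x) 0)
    · exact Real.continuous_exp.continuousOn.mul (contP hder 0)
    · intro x hx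
      exact (Real.hasDerivAt_exp x).mul ((hder x hx.le 0).hasDerivAt (Ici_mem_nhds hx))
    · intro x hx
      have h1 := hpos x hx.le 0
      have h2 := hpos x hx.le 1
      have hgen : dispGen 1 (p x) 0 = -(1 - p x 1) * p x 0 := rfl
      rw [hgen]
      have h3 : 0 ≤ Real.exp x * (p x 0 * p x 1) :=
        mul_nonneg (Real.exp_pos x).le (mul_nonneg h1 h2)
      nlinarith
  have h := hmono (Set.self_mem_Ici) ht ht
  simp only [Real.exp_zero, one_mul] at h
  rw [Real.exp_neg, ← div_eq_mul_inv, div_le_iff₀ (Real.exp_pos t)]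
  linarith [mul_comm (p t 0) (Real.exp t)]

include hpos hder in
lemma p0_pos (h0 : 0 < p 0 0) {t : ℝ} (ht : 0 ≤ t) : 0 < p t 0 :=
  lt_of_lt_of_le (by positivity) (p0_lower hpos hder ht)

include hpos hsum1 hsumm hder in
lemma p0_upper (h0 : 0 < p 0 0) {t : ℝ} (ht : 0 ≤ t) :
    p t 0 ≤ 1 / (t + (p 0 0)⁻¹) := by
  have hposx : ∀ x : ℝ, 0 ≤ x → 0 < p x 0 := fun x hx => p0_pos hpos hder h0 hx
  have hmono : MonotoneOn (fun s => (p s 0)⁻¹ - s) (Set.Ici 0) := by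
    apply monoIci (f' := fun x => -(dispGen 1 (p x) 0) / (p x 0) ^ 2 - 1)
    · exact ((contP hder 0).inv₀ fun x hx => (hposx x hx).ne').sub continuousOn_id
    · intro x hx
      exact (((hder x hx.le 0).hasDerivAt (Ici_mem_nhds hx)).inv (hposx x hx.le).ne').sub
        (hasDerivAt_id x)
    · intro x hx
      obtain ⟨-, hq0le, -⟩ := stat1 (hpos x hx.le) (hsum1 x hx.le) (hsumm x hx.le)
      have hp0 := hposx x hx.le
      have hgen : dispGen 1 (p x) 0 = -(1 - p x 1) * p x 0 := rfl
      rw [hgen, sub_nonneg]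
      rw [le_div_iff₀ (by positivity : (0:ℝ) < p x 0 ^ 2)]
      nlinarith
  have h := hmono (Set.self_mem_Ici) ht ht
  simp only [sub_zero] at h
  have hpt := hposx t ht
  have hc0 : 0 < t + (p 0 0)⁻¹ := by positivity
  rw [le_div_iff₀ hc0]
  have h2 := mul_le_mul_of_nonneg_left h hpt.le
  have h3 : p t 0 * ((p t 0)⁻¹ - t) = 1 - p t 0 * t := by
    field_simp
  rw [h3] at h2
  nlinarith

lemma star_ineq {c x : ℝ} (hc : 1 ≤ c) (hx : 0 ≤ x) :
    4 / (x + c) ≤ 8 / (x + 2*c) - 4 / (x + 2*c)^2 + (2/c) * Real.exp (-x) := by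
  have hA : 0 < x + c := by linarith
  have hB : 0 < x + 2*c := by linarith
  have hc0 : 0 < c := by linarith
  rcases le_or_gt 1 x with h1 | h1
  · have hkey : 8 / (x + 2*c) - 4 / (x + 2*c)^2 - 4/(x+c)
        = (4*(x^2 + 2*c*x - x - c)) / ((x+c)*(x+2*c)^2) := by
      field_simp
      ring
    have hnum : 0 ≤ x^2 + 2*c*x - x - c := by nlinarith
    have hpos2 : 0 ≤ (4*(x^2 + 2*c*x - x - c)) / ((x+c)*(x+2*c)^2) := by positivity
    rw [← hkey] at hpos2
    have hexp : 0 ≤ (2/c) * Real.exp (-x) := by positivity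
    linarith
  · have hexp : 1 - x ≤ Real.exp (-x) := by
      have := Real.add_one_le_exp (-x); linarith
    have hstep : (2/c) * (1 - x) ≤ (2/c) * Real.exp (-x) :=
      mul_le_mul_of_nonneg_left hexp (by positivity)
    have expand : 8 / (x + 2*c) - 4 / (x + 2*c)^2 + (2/c)*(1-x) - 4/(x+c)
        = (2*(1-x)*(x+c)*(x+2*c)^2 + 4*c*(x^2 + 2*c*x - x - c)) / (c*(x+c)*(x+2*c)^2) := by
      field_simp
      ring
    have hnum : 0 ≤ 2*(1-x)*(x+c)*(x+2*c)^2 + 4*c*(x^2 + 2*c*x - x - c) := by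
      have h1x : (0:ℝ) ≤ 1 - x := by linarith
      have hd : (0:ℝ) ≤ c - 1 := by linarith
      have hid : 2*(1-x)*(x+c)*(x+2*c)^2 + 4*c*(x^2 + 2*c*x - x - c)
          = 8*(c^2*((c-1)*(1-x))) + 4*(c*((c-1)*(1-x))) + 4*(c*((c-1)*x))
            + 16*(c*((c-1)*(x*(1-x)))) + 4*(c*(1-x)) + 12*(c*(x*(1-x)))
            + 4*(c*x) + 10*(c*(x^2*(1-x))) + 2*(x^3*(1-x)) := by ring
      rw [hid]
      have b1 : (0:ℝ) ≤ c^2*((c-1)*(1-x)) := mul_nonneg (sq_nonneg c) (mul_nonneg hd h1x)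
      have b2 : (0:ℝ) ≤ c*((c-1)*(1-x)) := mul_nonneg hc0.le (mul_nonneg hd h1x)
      have b3 : (0:ℝ) ≤ c*((c-1)*x) := mul_nonneg hc0.le (mul_nonneg hd hx)
      have b4 : (0:ℝ) ≤ c*((c-1)*(x*(1-x))) := mul_nonneg hc0.le (mul_nonneg hd (mul_nonneg hx h1x))
      have b5 : (0:ℝ) ≤ c*(1-x) := mul_nonneg hc0.le h1x
      have b6 : (0:ℝ) ≤ c*(x*(1-x)) := mul_nonneg hc0.le (mul_nonneg hx h1x)
      have b7 : (0:ℝ) ≤ c*x := mul_nonneg hc0.le hx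
      have b8 : (0:ℝ) ≤ c*(x^2*(1-x)) := mul_nonneg hc0.le (mul_nonneg (sq_nonneg x) h1x)
      have b9 : (0:ℝ) ≤ x^3*(1-x) := mul_nonneg (by positivity) h1x
      linarith
    have hpos2 : 0 ≤ (2*(1-x)*(x+c)*(x+2*c)^2 + 4*c*(x^2 + 2*c*x - x - c))
        / (c*(x+c)*(x+2*c)^2) := by positivity
    rw [← expand] at hpos2
    linarith

end Dyn2

noncomputable def wfun (c t : ℝ) : ℝ := 4/(t+2*c) + (2/c)*Real.exp (-t)

noncomputable def Gfun (c t : ℝ) : ℝ :=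
  Real.exp (2*t) * wfun c t - ∫ s in (0:ℝ)..t, 4*Real.exp (2*s)/(s+c)

open MeasureTheory in
lemma hasDerivAt_prim {c : ℝ} (hc : 1 ≤ c) {x : ℝ} (hx : 0 ≤ x) :
    HasDerivAt (fun u => ∫ s in (0:ℝ)..u, 4*Real.exp (2*s)/(s+c))
      (4*Real.exp (2*x)/(x+c)) x := by
  apply intervalIntegral.integral_hasDerivAt_right
  · apply ContinuousOn.intervalIntegrable
    intro s hs
    have hs0 : 0 ≤ s := by
      rcases Set.mem_uIcc.1 hs with h | h
      · exact h.1
      · linarith [h.1]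
    have hne : s + c ≠ 0 := by positivity
    have hnum : Continuous fun s : ℝ => 4*Real.exp (2*s) := by fun_prop
    have hden : Continuous fun s : ℝ => s + c := by fun_prop
    exact (hnum.continuousAt.div hden.continuousAt hne).continuousWithinAt
  · refine ⟨Set.univ, Filter.univ_mem, ?_⟩
    exact ((by fun_prop : Continuous fun s : ℝ => 4*Real.exp (2*s)).measurable.div
      (continuous_id.add continuous_const).measurable).aestronglyMeasurable
  · have hne : x + c ≠ 0 := by positivity
    have hnum : Continuous fun s : ℝ => 4*Real.exp (2*s) := by fun_prop
    have hden : Continuous fun s : ℝ => s + c := by fun_prop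
    exact hnum.continuousAt.div hden.continuousAt hne

lemma wfun_hasDeriv {c : ℝ} (hc : 1 ≤ c) {x : ℝ} (hx : 0 ≤ x) :
    HasDerivAt (wfun c) (-4/(x+2*c)^2 - (2/c)*Real.exp (-x)) x := by
  have hB : (0:ℝ) < x + 2*c := by linarith
  have h1 : HasDerivAt (fun t : ℝ => 4/(t+2*c)) (-4/(x+2*c)^2) x := by
    have hi := ((hasDerivAt_id x).add_const (2*c)).inv hB.ne'
    have h4 := hi.const_mul (4:ℝ)
    have heq : (fun t : ℝ => 4/(t+2*c)) = fun y : ℝ => 4*((y+2*c)⁻¹) := by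
      funext y; rw [div_eq_mul_inv]
    rw [heq]
    refine h4.congr_deriv ?_
    simp only [id]
    field_simp
  have h2 : HasDerivAt (fun t : ℝ => (2/c)*Real.exp (-t)) (-((2/c)*Real.exp (-x))) x := by
    have h5 := ((hasDerivAt_id x).neg).exp.const_mul (2/c)
    refine h5.congr_deriv ?_
    simp only [Pi.neg_apply, id]
    ring
  have h3 := h1.add h2
  show HasDerivAt (fun t => 4/(t+2*c) + (2/c)*Real.exp (-t)) _ x
  exact h3.congr_deriv (by ring)

open MeasureTheory in
lemma G_le {c : ℝ} (hc : 1 ≤ c) {t : ℝ} (ht : 0 ≤ t) :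
    ∫ s in (0:ℝ)..t, 4*Real.exp (2*s)/(s+c) ≤ Real.exp (2*t) * wfun c t := by
  have hc0 : (0:ℝ) < c := by linarith
  have hwcont : ContinuousOn (wfun c) (Set.Ici 0) := by
    apply ContinuousOn.add
    · apply ContinuousOn.div continuousOn_const (by fun_prop)
      intro x hx
      have hx0 : (0:ℝ) ≤ x := hx
      have : (0:ℝ) < x + 2*c := by linarith
      exact this.ne'
    · exact continuousOn_const.mul (by fun_prop)
  have hmono : MonotoneOn (Gfun c) (Set.Ici 0) := by
    apply monoIci (f' := fun x =>
      (2*Real.exp (2*x) * wfun c x + Real.exp (2*x) * (-4/(x+2*c)^2 - (2/c)*Real.exp (-x)))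
        - 4*Real.exp (2*x)/(x+c))
    · rw [show Gfun c = fun u => Real.exp (2*u) * wfun c u
        - ∫ s in (0:ℝ)..u, 4*Real.exp (2*s)/(s+c) from rfl]
      apply ContinuousOn.sub
      · exact (by fun_prop : Continuous fun s : ℝ => Real.exp (2*s)).continuousOn.mul hwcont
      · intro x hx
        exact (hasDerivAt_prim hc hx).continuousAt.continuousWithinAt
    · intro x hx
      have he : HasDerivAt (fun s : ℝ => Real.exp (2*s)) (2*Real.exp (2*x)) x := by
        simpa [mul_comm] using ((hasDerivAt_id x).const_mul 2).exp
      have hfull := (he.mul (wfun_hasDeriv hc hx.le)).sub (hasDerivAt_prim hc hx.le)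
      exact hfull
    · intro x hx
      have hs := star_ineq hc hx.le
      have h := mul_le_mul_of_nonneg_left hs (Real.exp_pos (2*x)).le
      simp only [wfun]
      have key : 2*Real.exp (2*x) * (4/(x+2*c) + 2/c*Real.exp (-x))
            + Real.exp (2*x) * (-4/(x+2*c)^2 - 2/c*Real.exp (-x))
            - 4*Real.exp (2*x)/(x+c)
          = Real.exp (2*x) * ((8/(x+2*c) - 4/(x+2*c)^2 + 2/c*Real.exp (-x)) - 4/(x+c)) := by
        ring
      rw [key]
      exact mul_nonneg (Real.exp_pos (2*x)).le (by linarith [hs])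
  have h := hmono Set.self_mem_Ici ht ht
  have hG0 : Gfun c 0 = wfun c 0 := by
    simp [Gfun]
  have hw0 : 0 ≤ wfun c 0 := by
    simp only [wfun]
    positivity
  rw [hG0] at h
  simp only [Gfun] at h
  linarith

open MeasureTheory in
theorem energy_decay_critical (p : ℝ → ℕ → ℝ) (hp : IsSol 1 p)
    (h2 : Summable (fun n : ℕ => (n : ℝ) ^ 2 * p 0 n)) (h0 : 0 < p 0 0) :
    ∀ t, 0 ≤ t → Summable (fun n : ℕ => (n : ℝ) ^ 2 * p t n) ∧
      (∑' n : ℕ, (n : ℝ) ^ 2 * p t n) - 1 ≤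
        ((∑' n : ℕ, (n : ℝ) ^ 2 * p 0 n) - 1) * Real.exp (-2 * t)
          + 4 / (t + 2 / p 0 0) + 2 * p 0 0 * Real.exp (-t) := by
  obtain ⟨hpos, hsum1, hsumm, hder⟩ := hp
  intro t ht
  have hSt := summable_sq_s6 hpos hsum1 hsumm hder h2 ht
  refine ⟨hSt, ?_⟩
  have hp00_le1 : p 0 0 ≤ 1 := le_hasSum (hsum1 0 le_rfl) 0 (fun j _ => hpos 0 le_rfl j)
  have hinv : 0 < (p 0 0)⁻¹ := inv_pos.2 h0
  have hc : 1 ≤ (p 0 0)⁻¹ := by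
    nlinarith [mul_inv_cancel₀ (ne_of_gt h0),
      mul_nonneg hinv.le (sub_nonneg.2 hp00_le1)]
  have hEpos := Real.exp_pos (2*t)
  have hE : Real.exp (-2*t) * Real.exp (2*t) = 1 := by
    rw [← Real.exp_add, show (-2*t) + (2*t) = 0 by ring, Real.exp_zero]
  have key := key_identity hpos hsum1 hsumm hder h2 ht
  have hcexp : Continuous fun s : ℝ => Real.exp (2*s) := by fun_prop
  have hint2 : IntervalIntegrable (fun s => 2*Real.exp (2*s)) volume 0 t :=
    (continuous_const.mul hcexp).intervalIntegrable 0 t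
  have hint3 : IntervalIntegrable (fun s => Real.exp (2*s) * (2 - 2*p s 1)) volume 0 t := by
    apply ContinuousOn.intervalIntegrable
    rw [Set.uIcc_of_le ht]
    exact (hcexp.continuousOn.mul
      ((continuousOn_const.sub (continuousOn_const.mul (contP hder 1))))).mono
      Set.Icc_subset_Ici_self
  have hint4 : IntervalIntegrable (fun s => 4*Real.exp (2*s)/(s+(p 0 0)⁻¹)) volume 0 t := by
    apply ContinuousOn.intervalIntegrable
    intro s hs
    rw [Set.uIcc_of_le ht] at hs
    have hne : s + (p 0 0)⁻¹ ≠ 0 := by have := hs.1; positivity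
    have hnum : Continuous fun s : ℝ => 4*Real.exp (2*s) := by fun_prop
    have hden : Continuous fun s : ℝ => s + (p 0 0)⁻¹ := by fun_prop
    exact (hnum.continuousAt.div hden.continuousAt hne).continuousWithinAt
  have hsplit : ∫ s in (0:ℝ)..t, Real.exp (2*s) * (4 - 2*p s 1)
      = (∫ s in (0:ℝ)..t, 2*Real.exp (2*s))
        + ∫ s in (0:ℝ)..t, Real.exp (2*s) * (2 - 2*p s 1) := by
    rw [← intervalIntegral.integral_add hint2 hint3]
    apply intervalIntegral.integral_congr
    intro s _
    ring
  have hexp_int : ∫ s in (0:ℝ)..t, 2*Real.exp (2*s) = Real.exp (2*t) - 1 := by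
    have hd : ∀ x ∈ Set.uIcc (0:ℝ) t, HasDerivAt (fun u => Real.exp (2*u)) (2*Real.exp (2*x)) x := by
      intro x _
      simpa [mul_comm] using ((hasDerivAt_id x).const_mul 2).exp
    rw [intervalIntegral.integral_eq_sub_of_hasDerivAt hd hint2]
    norm_num
  have hmono3 : ∫ s in (0:ℝ)..t, Real.exp (2*s) * (2 - 2*p s 1)
      ≤ ∫ s in (0:ℝ)..t, 4*Real.exp (2*s)/(s+(p 0 0)⁻¹) := by
    apply intervalIntegral.integral_mono_on ht hint3 hint4
    intro x hx
    obtain ⟨-, -, ha2⟩ := stat1 (hpos x hx.1) (hsum1 x hx.1) (hsumm x hx.1)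
    have hup := p0_upper hpos hsum1 hsumm hder h0 hx.1
    have hxc : (0:ℝ) < x + (p 0 0)⁻¹ := by have := hx.1; positivity
    have hfrac : 2 - 2*p x 1 ≤ 4/(x+(p 0 0)⁻¹) := by
      have h4 := mul_le_mul_of_nonneg_left hup (by norm_num : (0:ℝ) ≤ 4)
      have he : 4 * (1/(x+(p 0 0)⁻¹)) = 4/(x+(p 0 0)⁻¹) := by ring
      linarith [he ▸ h4]
    calc Real.exp (2*x) * (2 - 2*p x 1) ≤ Real.exp (2*x) * (4/(x+(p 0 0)⁻¹)) :=
          mul_le_mul_of_nonneg_left hfrac (Real.exp_pos _).le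
      _ = 4*Real.exp (2*x)/(x+(p 0 0)⁻¹) := by ring
  have hG := G_le hc ht
  have h5 : ∫ s in (0:ℝ)..t, Real.exp (2*s) * (2 - 2*p s 1)
      ≤ Real.exp (2*t) * wfun (p 0 0)⁻¹ t := le_trans hmono3 hG
  have hkey2 : Mom2 p t - 1 = (Mom2 p 0 - 1)*Real.exp (-2*t)
      + Real.exp (-2*t) * ∫ s in (0:ℝ)..t, Real.exp (2*s) * (2 - 2*p s 1) := by
    have K : Real.exp (2*t) * Mom2 p t - Mom2 p 0
        = (Real.exp (2*t) - 1) + ∫ s in (0:ℝ)..t, Real.exp (2*s) * (2 - 2*p s 1) := by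
      rw [key, hsplit, hexp_int]
    linear_combination Real.exp (-2*t) * K + (1 - Mom2 p t) * hE
  have h6 := mul_le_mul_of_nonneg_left h5 (Real.exp_pos (-2*t)).le
  have h7 : Real.exp (-2*t) * (Real.exp (2*t) * wfun (p 0 0)⁻¹ t) = wfun (p 0 0)⁻¹ t := by
    rw [← mul_assoc, hE, one_mul]
  have hwt : wfun (p 0 0)⁻¹ t = 4/(t + 2/p 0 0) + 2*p 0 0*Real.exp (-t) := by
    have hne := ne_of_gt h0
    simp only [wfun]
    field_simp
  rw [show (∑' n : ℕ, (n:ℝ)^2 * p t n) = Mom2 p t from rfl,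
    show (∑' n : ℕ, (n:ℝ)^2 * p 0 n) = Mom2 p 0 from rfl]
  rw [h7] at h6
  linarith [hkey2, h6, hwt.symm.le, hwt.le]
end

section
/- Let μ = 1 and let p be a classical solution of the mean-field dispersion system with mean 1 whose initial datum has finite second moment ∑_{n=0}^∞ n²·p_n(0) < ∞. Then there exists a constant C > 0, depending only on the initial datum, such that for all t > 0, ∑_{n=0}^∞ |p_n(t) − p*_n| ≤ C/t, where p* is the Bernoulli (Dirac) distribution with mean 1, i.e. p*_1 = 1 and p*_n = 0 for n ≠ 1. -/
/-- Static facts about a solution at a fixed time: `p₀ ≤ 1 - p₁` and the L¹ distance to the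
critical Bernoulli distribution is at most `4 p₀`. -/
lemma sol_facts (p : ℝ → ℕ → ℝ) (hp : IsSol 1 p) (s : ℝ) (hs : 0 ≤ s) :
    p s 0 ≤ 1 - p s 1 ∧ (∑' n : ℕ, |p s n - bern 1 n|) ≤ 4 * p s 0 := by
  obtain ⟨hpos, hsum, hmean, _⟩ := hp
  have h1 : HasSum (fun n => p s n) 1 := hsum s hs
  have hm : HasSum (fun n : ℕ => (n : ℝ) * p s n) 1 := hmean s hs
  have hd : HasSum (fun n : ℕ => ((n : ℝ) - 1) * p s n) 0 := by
    have := hm.sub h1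
    simpa [sub_mul] using this
  -- the tail sum r = ∑_{n≥2} p s n
  have hr : HasSum (fun n : ℕ => p s (n + 2)) (1 - (p s 0 + p s 1)) := by
    have := (hasSum_nat_add_iff' (f := fun n => p s n) 2).mpr h1
    simpa [Finset.sum_range_succ] using this
  have hd2 : HasSum (fun n : ℕ => ((n : ℝ) + 1) * p s (n + 2)) (p s 0) := by
    have := (hasSum_nat_add_iff' (f := fun n : ℕ => ((n : ℝ) - 1) * p s n) 2).mpr hd
    have h' : HasSum (fun n : ℕ => ((n : ℝ) + 2 - 1) * p s (n + 2)) (p s 0) := by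
      convert this using 2 with n
      · rfl
      · push_cast; ring
      · simp [Finset.sum_range_succ]
    convert h' using 2 with n
    ring
  have hrpos : 0 ≤ 1 - (p s 0 + p s 1) :=
    hasSum_le (fun n => hpos s hs (n + 2)) hasSum_zero hr
  have hrle : 1 - (p s 0 + p s 1) ≤ p s 0 := by
    refine hasSum_le (fun n => ?_) hr hd2
    have h0 := hpos s hs (n + 2)
    nlinarith [Nat.cast_nonneg (α := ℝ) n]
  have key1 : p s 0 ≤ 1 - p s 1 := by
    have h0 := hpos s hs 0
    linarith
  refine ⟨key1, ?_⟩
  -- the absolute-difference series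
  have h0 := hpos s hs 0
  have h1' := hpos s hs 1
  have hp1le : p s 1 ≤ 1 := by linarith
  have habs : HasSum (fun n : ℕ => |p s n - bern 1 n|)
      ((1 - (p s 0 + p s 1)) + (p s 0 + (1 - p s 1))) := by
    have htail : HasSum (fun n : ℕ => |p s (n + 2) - bern 1 (n + 2)|)
        (1 - (p s 0 + p s 1)) := by
      refine hr.congr_fun fun n => ?_
      simp [bern, abs_of_nonneg (hpos s hs (n + 2))]
    have := (hasSum_nat_add_iff (f := fun n : ℕ => |p s n - bern 1 n|) 2).mp htail
    have hsum2 : ∑ i ∈ Finset.range 2, |p s i - bern 1 i| = p s 0 + (1 - p s 1) := by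
      simp [Finset.sum_range_succ, bern, abs_of_nonneg h0, abs_of_nonpos (by linarith : p s 1 - 1 ≤ 0)]
    rw [hsum2] at this
    exact this
  rw [habs.tsum_eq]
  linarith
    
/-- The key decay estimate : `p t 0 ≤ 1 / t` for `t > 0`. -/
lemma p0_decay (p : ℝ → ℕ → ℝ) (hp : IsSol 1 p) (t : ℝ) (ht : 0 < t) :
    p t 0 ≤ 1 / t := by
  obtain ⟨hpos, hsum, hmean, hderiv⟩ := hp
  set f : ℝ → ℝ := fun s => p s 0 with hf
  have hkey : ∀ s : ℝ, 0 ≤ s → f s ≤ 1 - p s 1 := fun s hs =>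
    (sol_facts p ⟨hpos, hsum, hmean, hderiv⟩ s hs).1
  have hda : ∀ s : ℝ, 0 < s → HasDerivAt f (-(1 - p s 1) * p s 0) s := by
    intro s hs
    have := (hderiv s hs.le 0).hasDerivAt (Ici_mem_nhds hs)
    simpa [dispGen] using this
  have hcont : ContinuousOn f (Set.Ici (0 : ℝ)) := fun s hs =>
    (hderiv s hs 0).continuousWithinAt
  have hdiff : DifferentiableOn ℝ f (interior (Set.Ici (0 : ℝ))) := by
    rw [interior_Ici]
    intro s hs
    exact (hda s hs).differentiableAt.differentiableWithinAt
  -- f is antitone on [0, ∞)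
  have hanti : AntitoneOn f (Set.Ici (0 : ℝ)) := by
    refine antitoneOn_of_deriv_nonpos (convex_Ici 0) hcont hdiff fun s hs => ?_
    rw [interior_Ici] at hs
    rw [(hda s hs).deriv]
    have h1 := hpos s hs.le 0
    have h2 := hkey s hs.le
    nlinarith
  rcases le_or_gt (f t) 0 with hft | hft
  · have : (0:ℝ) ≤ 1 / t := by positivity
    linarith
  -- f > 0 on [0, t]
  have hposIcc : ∀ s ∈ Set.Icc (0:ℝ) t, 0 < f s := by
    intro s hs
    have := hanti hs.1 (Set.mem_Ici.mpr ht.le) hs.2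
    linarith
  set g : ℝ → ℝ := fun s => (f s)⁻¹ with hg
  have hgcont : ContinuousOn g (Set.Icc 0 t) :=
    (hcont.mono Set.Icc_subset_Ici_self).inv₀ fun s hs => (hposIcc s hs).ne'
  have hIoo : interior (Set.Icc (0:ℝ) t) = Set.Ioo 0 t := interior_Icc
  have hgderiv : ∀ s ∈ interior (Set.Icc (0:ℝ) t),
      HasDerivAt g ((1 - p s 1) * p s 0 / (f s) ^ 2) s := by
    intro s hs
    rw [hIoo] at hs
    have hfne : f s ≠ 0 := (hposIcc s ⟨hs.1.le, hs.2.le⟩).ne'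
    have := (hda s hs.1).inv hfne
    convert this using 1
    · rfl
    · rfl
    · rfl
    · ring
  have hgdiff : DifferentiableOn ℝ g (interior (Set.Icc (0:ℝ) t)) := fun s hs =>
    (hgderiv s hs).differentiableAt.differentiableWithinAt
  have hge : ∀ s ∈ interior (Set.Icc (0:ℝ) t), (1:ℝ) ≤ deriv g s := by
    intro s hs
    rw [(hgderiv s hs).deriv]
    rw [hIoo] at hs
    have hfs := hposIcc s ⟨hs.1.le, hs.2.le⟩
    have h2 := hkey s hs.1.le
    rw [le_div_iff₀ (by positivity)]
    simp only [hf] at hfs ⊢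
    nlinarith
  have := (convex_Icc (0:ℝ) t).mul_sub_le_image_sub_of_le_deriv hgcont hgdiff hge
    0 (Set.left_mem_Icc.mpr ht.le) t (Set.right_mem_Icc.mpr ht.le) ht.le
  -- 1 * (t - 0) ≤ g t - g 0
  have hg0 : 0 ≤ g 0 := by
    have := hposIcc 0 (Set.left_mem_Icc.mpr ht.le)
    positivity
  have hgt : t ≤ g t := by
    simp only [one_mul, sub_zero] at this
    linarith
  have : f t ≤ 1 / t := by
    rw [le_div_iff₀ ht]
    have h := mul_le_mul_of_nonneg_left hgt hft.le
    rw [hg, mul_inv_cancel₀ hft.ne'] at h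
    calc f t * t = t * f t := by ring
    _ ≤ g t * f t := by nlinarith
    _ = 1 := by rw [hg]; field_simp
  exact this

theorem l1_decay_critical (p : ℝ → ℕ → ℝ) (hp : IsSol 1 p)
    (h2 : Summable (fun n : ℕ => (n : ℝ) ^ 2 * p 0 n)) :
    ∃ C > 0, ∀ t : ℝ, 0 < t →
      ∑' n : ℕ, |p t n - bern 1 n| ≤ C / t := by
  refine ⟨4, by norm_num, fun t ht => ?_⟩
  have h1 := (sol_facts p hp t ht.le).2
  have h2' := p0_decay p hp t ht
  calc ∑' n : ℕ, |p t n - bern 1 n| ≤ 4 * p t 0 := h1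
  _ ≤ 4 * (1 / t) := by linarith
  _ = 4 / t := by ring
end

section
/- Let μ > 0 and let p be a classical solution of the mean-field dispersion system with mean μ. Define G(t, z) = ∑_{n=0}^∞ p_n(t)·z^n, a(t) = μ − p_1(t), and v(t) = exp(∫_0^t e^{−t+s}·a(s) ds). Then for every real z ∈ [0, 2] and every t ≥ 0, G(t, 1 − z) = 1 + (G(0, 1 − z·e^{−t}) − 1 − μ·z·∫_0^t v(s)^{z·e^{−t+s}}·e^{−t+s} ds)·v(t)^{−z}. -/
/-- The auxiliary function `v(t) = exp (∫_0^t e^{-t+s} (μ - p_1(s)) ds)`. -/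
noncomputable def auxv (μ : ℝ) (p : ℝ → ℕ → ℝ) (t : ℝ) : ℝ :=
  Real.exp (∫ s in (0:ℝ)..t, Real.exp (-t + s) * (μ - p s 1))

/-- The probability generating function of the solution. -/
noncomputable def pgf (p : ℝ → ℕ → ℝ) (t z : ℝ) : ℝ := ∑' n : ℕ, p t n * z ^ n

open Set MeasureTheory intervalIntegral Filter Topology
open scoped ENNReal NNReal

namespace DispAux

/-- previous-index helper -/
def pprev (P : ℕ → ℝ) : ℕ → ℝ
  | 0 => 0
  | n + 1 => P n

lemma summable_px (P : ℕ → ℝ) (hP1 : Summable P) (x : ℝ) (hx : |x| ≤ 1) :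
    Summable (fun n : ℕ => P n * x ^ n) := by
  refine Summable.of_norm_bounded (g := fun n => ‖P n‖) hP1.norm (fun n => ?_)
  rw [norm_mul, norm_pow]
  calc ‖P n‖ * ‖x‖ ^ n ≤ ‖P n‖ * 1 :=
        mul_le_mul_of_nonneg_left (pow_le_one₀ (norm_nonneg x) (by rwa [Real.norm_eq_abs]))
          (norm_nonneg _)
    _ = ‖P n‖ := mul_one _

lemma summable_npx (P : ℕ → ℝ) (hPn : Summable (fun n : ℕ => (n : ℝ) * P n)) (x : ℝ)
    (hx : |x| ≤ 1) : Summable (fun n : ℕ => (n : ℝ) * P n * x ^ (n - 1)) := by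
  refine Summable.of_norm_bounded (g := fun n => ‖(n : ℝ) * P n‖) hPn.norm (fun n => ?_)
  rw [norm_mul, norm_pow]
  calc ‖(n : ℝ) * P n‖ * ‖x‖ ^ (n - 1) ≤ ‖(n : ℝ) * P n‖ * 1 :=
        mul_le_mul_of_nonneg_left (pow_le_one₀ (norm_nonneg x) (by rwa [Real.norm_eq_abs]))
          (norm_nonneg _)
    _ = ‖(n : ℝ) * P n‖ := mul_one _

/-- shifted sum: `∑ (n+1) P (n+1) x^n = D` -/
lemma hasSum_shift (P : ℕ → ℝ) (x : ℝ) {D : ℝ}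
    (h : HasSum (fun n : ℕ => (n : ℝ) * P n * x ^ (n - 1)) D) :
    HasSum (fun n : ℕ => ((n : ℝ) + 1) * P (n + 1) * x ^ n) D := by
  have h2 : HasSum (fun n : ℕ => ((n + 1 : ℕ) : ℝ) * P (n + 1) * x ^ ((n + 1) - 1)) D :=
    (hasSum_nat_add_iff (f := fun n : ℕ => (n : ℝ) * P n * x ^ (n - 1)) 1).mpr (by simpa using h)
  have : (fun n : ℕ => ((n + 1 : ℕ) : ℝ) * P (n + 1) * x ^ ((n + 1) - 1))
      = fun n : ℕ => ((n : ℝ) + 1) * P (n + 1) * x ^ n := by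
    funext n; push_cast; ring_nf
  rwa [this] at h2

/-- `∑ n P n x^n = x * D` -/
lemma hasSum_npxn (P : ℕ → ℝ) (x : ℝ) {D : ℝ}
    (h : HasSum (fun n : ℕ => (n : ℝ) * P n * x ^ (n - 1)) D) :
    HasSum (fun n : ℕ => (n : ℝ) * P n * x ^ n) (x * D) := by
  have h2 := h.mul_left x
  have : (fun n : ℕ => x * ((n : ℝ) * P n * x ^ (n - 1)))
      = fun n : ℕ => (n : ℝ) * P n * x ^ n := by
    funext n
    cases n with
    | zero => simp
    | succ m =>
        have : (m + 1 : ℕ) - 1 = m := rfl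
        rw [this, pow_succ]
        ring
  rwa [this] at h2

/-- `∑ pprev P n * x^n = x * S` where `HasSum (fun n => P n * x^n) S` -/
lemma hasSum_prev (P : ℕ → ℝ) (x : ℝ) {S : ℝ}
    (h : HasSum (fun n : ℕ => P n * x ^ n) S) :
    HasSum (fun n : ℕ => pprev P n * x ^ n) (x * S) := by
  have h2 : HasSum (fun n : ℕ => pprev P (n + 1) * x ^ (n + 1)) (x * S) := by
    have h3 := h.mul_left x
    have e : (fun n : ℕ => x * (P n * x ^ n)) = fun n : ℕ => pprev P (n + 1) * x ^ (n + 1) := by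
      funext n
      show x * (P n * x ^ n) = P n * x ^ (n + 1)
      rw [pow_succ]; ring
    rwa [e] at h3
  have h4 := (hasSum_nat_add_iff (f := fun n : ℕ => pprev P n * x ^ n) 1).mp h2
  simpa [pprev] using h4


/-- Key pointwise rearrangement of the generator series. -/
lemma hasSum_psi (μ : ℝ) (P : ℕ → ℝ) (hP1 : HasSum P 1)
    (hPn : HasSum (fun n : ℕ => (n : ℝ) * P n) μ) (x m : ℝ) (hx : |x| ≤ 1) (hm : m = 1 - x) :
    HasSum (fun n : ℕ => dispGen μ P n * x ^ n + P n * ((n : ℝ) * x ^ (n - 1) * (-m)))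
      (-m * (P 1 + (μ - P 1) * (∑' n : ℕ, P n * x ^ n))) := by
  set S := ∑' n : ℕ, P n * x ^ n with hS
  have hpx : HasSum (fun n : ℕ => P n * x ^ n) S := (summable_px P hP1.summable x hx).hasSum
  have hnp := summable_npx P hPn.summable x hx
  set D := ∑' n : ℕ, (n : ℝ) * P n * x ^ (n - 1) with hD
  have hDD : HasSum (fun n : ℕ => (n : ℝ) * P n * x ^ (n - 1)) D := hnp.hasSum
  have hA := hasSum_shift P x hDD
  have hB := hasSum_npxn P x hDD
  have hC := hpx.mul_left (μ - P 1)
  have hDrop := (hasSum_prev P x hpx).mul_left (μ - P 1)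
  have hE := (hasSum_ite_eq (0 : ℕ) (P 1)).add (hasSum_ite_eq (1 : ℕ) (-(P 1 * x)))
  have hq : HasSum (fun n : ℕ => dispGen μ P n * x ^ n)
      (D - x * D - ((μ - P 1) * S - (μ - P 1) * (x * S)) - (P 1 + -(P 1 * x))) := by
    have hcomb := (hA.sub hB).sub (hC.sub hDrop) |>.sub hE
    have e : (fun n : ℕ => ((n : ℝ) + 1) * P (n + 1) * x ^ n - (n : ℝ) * P n * x ^ n
        - ((μ - P 1) * (P n * x ^ n) - (μ - P 1) * (pprev P n * x ^ n))
        - ((if n = 0 then P 1 else 0) + (if n = 1 then -(P 1 * x) else 0)))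
        = fun n : ℕ => dispGen μ P n * x ^ n := by
      funext n
      rcases n with _ | _ | n
      · simp only [dispGen, pprev]
        norm_num
        ring
      · simp only [dispGen, pprev]
        norm_num
        ring
      · simp only [dispGen, pprev]
        norm_num
        push_cast
        ring
    rwa [e] at hcomb
  have hsecond : HasSum (fun n : ℕ => P n * ((n : ℝ) * x ^ (n - 1) * (-m))) (-m * D) := by
    have h3 := hDD.mul_left (-m)
    have e : (fun n : ℕ => -m * ((n : ℝ) * P n * x ^ (n - 1)))
        = fun n : ℕ => P n * ((n : ℝ) * x ^ (n - 1) * (-m)) := by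
      funext n; ring
    rwa [e] at h3
  have htot := hq.add hsecond
  have heq : D - x * D - ((μ - P 1) * S - (μ - P 1) * (x * S)) - (P 1 + -(P 1 * x)) + -m * D
      = -m * (P 1 + (μ - P 1) * S) := by rw [hm]; ring
  rwa [heq] at htot

/-- Uniform bound on the series of derivatives. -/
lemma psi_bound (μ : ℝ) (P : ℕ → ℝ) (hpos : ∀ n, 0 ≤ P n) (hP1 : HasSum P 1)
    (hPn : HasSum (fun n : ℕ => (n : ℝ) * P n) μ) (x m : ℝ) (hx : |x| ≤ 1)
    (hm0 : 0 ≤ m) (hm2 : m ≤ 2) :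
    Summable (fun n : ℕ => ‖dispGen μ P n * x ^ n + P n * ((n : ℝ) * x ^ (n - 1) * (-m))‖)
    ∧ ∑' n : ℕ, ‖dispGen μ P n * x ^ n + P n * ((n : ℝ) * x ^ (n - 1) * (-m))‖ ≤ 6 * μ + 2 := by
  have hP1μ : P 1 ≤ μ := by
    have := le_hasSum hPn 1 (fun j _ => mul_nonneg (Nat.cast_nonneg j) (hpos j))
    simpa using this
  have hP11 : P 1 ≤ 1 := le_hasSum hP1 1 (fun j _ => hpos j)
  have haμ : |μ - P 1| ≤ μ := abs_le.2 ⟨by linarith [hpos 1], by linarith [hpos 1]⟩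
  set U : ℕ → ℝ := fun n => ((n : ℝ) + 1) * P (n + 1) + (n : ℝ) * P n + μ * P n
      + μ * pprev P n + ((if n = 0 then P 1 else 0) + (if n = 1 then P 1 else 0))
      + 2 * ((n : ℝ) * P n) with hUdef
  have h1 : HasSum (fun n : ℕ => ((n : ℝ) + 1) * P (n + 1)) μ := by
    have := hasSum_shift P 1 (by simpa using hPn)
    simpa using this
  have hprev : HasSum (pprev P) 1 := by
    have := hasSum_prev P 1 (by simpa using hP1)
    simpa using this
  have hite : HasSum (fun n : ℕ => (if n = 0 then P 1 else 0) + (if n = 1 then P 1 else 0))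
      (P 1 + P 1) := (hasSum_ite_eq (0 : ℕ) (P 1)).add (hasSum_ite_eq (1 : ℕ) (P 1))
  have hU : HasSum U (μ + μ + μ * 1 + μ * 1 + (P 1 + P 1) + 2 * μ) :=
    ((((h1.add hPn).add (hP1.mul_left μ)).add (hprev.mul_left μ)).add hite).add
      (hPn.mul_left 2)
  have habs : ∀ n : ℕ, |dispGen μ P n| ≤ ((n : ℝ) + 1) * P (n + 1) + (n : ℝ) * P n + μ * P n
      + μ * pprev P n + ((if n = 0 then P 1 else 0) + (if n = 1 then P 1 else 0)) := by
    intro n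
    rcases n with _ | _ | n
    · have e : |dispGen μ P 0| = |μ - P 1| * P 0 := by
        show |(-(μ - P 1)) * P 0| = _
        rw [abs_mul, abs_neg, abs_of_nonneg (hpos 0)]
      rw [e]
      have := mul_le_mul_of_nonneg_right haμ (hpos 0)
      simp only [pprev]
      have h10 := hpos 1
      norm_num
      linarith
    · have e : |dispGen μ P 1| ≤ 2 * P 2 + |μ - P 1| * |P 1 - P 0| := by
        show |2 * P 2 - (μ - P 1) * (P 1 - P 0)| ≤ _
        calc |2 * P 2 - (μ - P 1) * (P 1 - P 0)| ≤ |2 * P 2| + |(μ - P 1) * (P 1 - P 0)| :=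
              abs_sub _ _
          _ = 2 * P 2 + |μ - P 1| * |P 1 - P 0| := by
              rw [abs_of_nonneg (by linarith [hpos 2] : (0:ℝ) ≤ 2 * P 2), abs_mul]
      have e2 : |P 1 - P 0| ≤ P 1 + P 0 := by
        have := abs_sub (P 1) (P 0)
        rw [abs_of_nonneg (hpos 1), abs_of_nonneg (hpos 0)] at this
        exact this
      have e3 : |μ - P 1| * |P 1 - P 0| ≤ μ * (P 1 + P 0) :=
        mul_le_mul haμ e2 (abs_nonneg _) (by linarith [hpos 1])
      simp only [pprev]
      have := hpos 1; have := hpos 0; have := hpos 2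
      norm_num
      linarith
    · have e : |dispGen μ P (n + 2)| ≤ ((n : ℝ) + 3) * P (n + 3) + ((n : ℝ) + 2) * P (n + 2)
          + |μ - P 1| * |P (n + 2) - P (n + 1)| := by
        show |((n : ℝ) + 3) * P (n + 3) - ((n : ℝ) + 2) * P (n + 2)
            - (μ - P 1) * (P (n + 2) - P (n + 1))| ≤ _
        calc |((n : ℝ) + 3) * P (n + 3) - ((n : ℝ) + 2) * P (n + 2)
            - (μ - P 1) * (P (n + 2) - P (n + 1))|
            ≤ |((n : ℝ) + 3) * P (n + 3) - ((n : ℝ) + 2) * P (n + 2)|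
              + |(μ - P 1) * (P (n + 2) - P (n + 1))| := abs_sub _ _
          _ ≤ (|((n : ℝ) + 3) * P (n + 3)| + |((n : ℝ) + 2) * P (n + 2)|)
              + |μ - P 1| * |P (n + 2) - P (n + 1)| := by
              rw [abs_mul]
              exact add_le_add (abs_sub _ _) le_rfl
          _ = ((n : ℝ) + 3) * P (n + 3) + ((n : ℝ) + 2) * P (n + 2)
              + |μ - P 1| * |P (n + 2) - P (n + 1)| := by
              rw [abs_of_nonneg (mul_nonneg (by positivity) (hpos (n + 3))),
                abs_of_nonneg (mul_nonneg (by positivity) (hpos (n + 2)))]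
      have e2 : |P (n + 2) - P (n + 1)| ≤ P (n + 2) + P (n + 1) := by
        have := abs_sub (P (n + 2)) (P (n + 1))
        rw [abs_of_nonneg (hpos (n + 2)), abs_of_nonneg (hpos (n + 1))] at this
        exact this
      have e3 : |μ - P 1| * |P (n + 2) - P (n + 1)| ≤ μ * (P (n + 2) + P (n + 1)) :=
        mul_le_mul haμ e2 (abs_nonneg _) (by linarith [hpos 1])
      simp only [pprev]
      push_cast
      norm_num
      linarith
  have hUb : ∀ n : ℕ, ‖dispGen μ P n * x ^ n + P n * ((n : ℝ) * x ^ (n - 1) * (-m))‖ ≤ U n := by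
    intro n
    have hb1 : ‖dispGen μ P n * x ^ n‖ ≤ |dispGen μ P n| := by
      rw [Real.norm_eq_abs, abs_mul, abs_pow]
      calc |dispGen μ P n| * |x| ^ n ≤ |dispGen μ P n| * 1 :=
            mul_le_mul_of_nonneg_left (pow_le_one₀ (abs_nonneg x) hx) (abs_nonneg _)
        _ = |dispGen μ P n| := mul_one _
    have hb2 : ‖P n * ((n : ℝ) * x ^ (n - 1) * (-m))‖ ≤ 2 * ((n : ℝ) * P n) := by
      rw [Real.norm_eq_abs, abs_mul, abs_mul, abs_mul, abs_neg,
        abs_of_nonneg (hpos n), abs_of_nonneg hm0, abs_of_nonneg (Nat.cast_nonneg n : (0:ℝ) ≤ n),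
        abs_pow]
      calc P n * ((n : ℝ) * |x| ^ (n - 1) * m) ≤ P n * ((n : ℝ) * 1 * 2) := by
            refine mul_le_mul_of_nonneg_left ?_ (hpos n)
            refine mul_le_mul ?_ hm2 hm0 (by positivity)
            exact mul_le_mul_of_nonneg_left (pow_le_one₀ (abs_nonneg x) hx) (Nat.cast_nonneg n)
        _ = 2 * ((n : ℝ) * P n) := by ring
    calc ‖dispGen μ P n * x ^ n + P n * ((n : ℝ) * x ^ (n - 1) * (-m))‖
        ≤ ‖dispGen μ P n * x ^ n‖ + ‖P n * ((n : ℝ) * x ^ (n - 1) * (-m))‖ := norm_add_le _ _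
      _ ≤ |dispGen μ P n| + 2 * ((n : ℝ) * P n) := add_le_add hb1 hb2
      _ ≤ U n := by
          rw [hUdef]
          have := habs n
          dsimp only
          linarith
  have hsummable : Summable
      (fun n : ℕ => ‖dispGen μ P n * x ^ n + P n * ((n : ℝ) * x ^ (n - 1) * (-m))‖) :=
    Summable.of_nonneg_of_le (fun n => norm_nonneg _) hUb hU.summable
  refine ⟨hsummable, ?_⟩
  calc ∑' n : ℕ, ‖dispGen μ P n * x ^ n + P n * ((n : ℝ) * x ^ (n - 1) * (-m))‖
      ≤ ∑' n, U n := hsummable.tsum_le_tsum hUb hU.summable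
    _ = μ + μ + μ * 1 + μ * 1 + (P 1 + P 1) + 2 * μ := hU.tsum_eq
    _ ≤ 6 * μ + 2 := by linarith

end DispAux


namespace DispAux

section main
variable {μ : ℝ} {p : ℝ → ℕ → ℝ}

lemma pcont (hp : IsSol μ p) (n : ℕ) : ContinuousOn (fun t => p t n) (Ici 0) :=
  fun t ht => (hp.2.2.2 t ht n).continuousWithinAt

lemma qcont (hp : IsSol μ p) (n : ℕ) :
    ContinuousOn (fun t => dispGen μ (p t) n) (Ici 0) := by
  rcases n with _ | _ | n
  · exact ((continuousOn_const.sub (pcont hp 1)).neg).mul (pcont hp 0)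
  · exact ((continuousOn_const.mul (pcont hp 2)).sub
      ((continuousOn_const.sub (pcont hp 1)).mul ((pcont hp 1).sub (pcont hp 0))))
  · exact (((continuousOn_const.mul (pcont hp (n + 3))).sub
      (continuousOn_const.mul (pcont hp (n + 2)))).sub
      ((continuousOn_const.sub (pcont hp 1)).mul ((pcont hp (n + 2)).sub (pcont hp (n + 1)))))

theorem main (hμ : 0 < μ) (hp : IsSol μ p) :
    ∀ z ∈ Set.Icc (0:ℝ) 2, ∀ t : ℝ, 0 ≤ t →
      pgf p t (1 - z) = 1 +
        (pgf p 0 (1 - z * Real.exp (-t)) - 1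
          - μ * z * ∫ s in (0:ℝ)..t,
              (auxv μ p s) ^ (z * Real.exp (-t + s)) * Real.exp (-t + s))
        * (auxv μ p t) ^ (-z) := by
  obtain ⟨hpos, hsum1, hsumn, hpderiv⟩ := hp
  have hp' : IsSol μ p := ⟨hpos, hsum1, hsumn, hpderiv⟩
  rintro z ⟨hz0, hz2⟩ t ht
  set c : ℝ := z * Real.exp (-t) with hc
  have hc0 : 0 ≤ c := mul_nonneg hz0 (Real.exp_pos _).le
  have hce2 : ∀ r : ℝ, r ≤ t → c * Real.exp r ≤ 2 := by
    intro r hr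
    have : c * Real.exp r = z * Real.exp (r - t) := by
      rw [hc, mul_assoc, ← Real.exp_add]; ring_nf
    rw [this]
    have h1 : Real.exp (r - t) ≤ 1 := Real.exp_le_one_iff.mpr (by linarith)
    nlinarith [Real.exp_pos (r - t)]
  set φ : ℝ → ℝ := fun s => 1 - c * Real.exp s with hφ
  set h : ℝ → ℝ := fun s => ∑' n : ℕ, p s n * φ s ^ n with hh
  set ψ : ℕ → ℝ → ℝ := fun n r => dispGen μ (p r) n * φ r ^ n
      + p r n * ((n : ℝ) * φ r ^ (n - 1) * (-(c * Real.exp r))) with hψ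
  set w : ℝ → ℝ := fun r => -(c * Real.exp r) * (p r 1 + (μ - p r 1) * h r) with hw
  set J : ℝ → ℝ := fun s => ∫ r in (0:ℝ)..s, Real.exp r * (μ - p r 1) with hJ
  set V : ℝ → ℝ := fun s => Real.exp (c * J s) with hV
  set K : ℝ → ℝ := fun s => ∫ r in (0:ℝ)..s, Real.exp r * V r with hK
  have hφabs : ∀ r ∈ Icc (0:ℝ) t, |φ r| ≤ 1 := by
    intro r hr
    have h2 := hce2 r hr.2
    have h0 : 0 ≤ c * Real.exp r := mul_nonneg hc0 (Real.exp_pos r).le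
    rw [abs_le]; constructor <;> simp only [hφ] <;> linarith
  have hφm : ∀ r : ℝ, c * Real.exp r = 1 - φ r := by intro r; simp [hφ]
  have hφcont : Continuous φ := continuous_const.sub (continuous_const.mul Real.continuous_exp)
  -- pointwise sum of the derivative series
  have hψsum : ∀ r ∈ Icc (0:ℝ) t, HasSum (fun n => ψ n r) (w r) := by
    intro r hr
    have := hasSum_psi μ (p r) (hsum1 r hr.1) (hsumn r hr.1) (φ r) (c * Real.exp r)
      (hφabs r hr) (hφm r)
    exact this
  -- uniform bound
  have hψbnd : ∀ r ∈ Icc (0:ℝ) t, Summable (fun n => ‖ψ n r‖)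
      ∧ ∑' n : ℕ, ‖ψ n r‖ ≤ 6 * μ + 2 := by
    intro r hr
    exact psi_bound μ (p r) (hpos r hr.1) (hsum1 r hr.1) (hsumn r hr.1) (φ r)
      (c * Real.exp r) (hφabs r hr) (mul_nonneg hc0 (Real.exp_pos r).le) (hce2 r hr.2)
  -- continuity of ψ n
  have hψcont : ∀ n, ContinuousOn (ψ n) (Ici 0) := by
    intro n
    refine ((qcont hp' n).mul (hφcont.pow n).continuousOn).add ?_
    exact (pcont hp' n).mul (((continuous_const.mul (hφcont.pow (n - 1))).mul
      ((continuous_const.mul Real.continuous_exp).neg)).continuousOn)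
  -- FTC for each coordinate
  have hftc : ∀ s ∈ Icc (0:ℝ) t, ∀ n : ℕ,
      p s n * φ s ^ n - p 0 n * φ 0 ^ n = ∫ r in (0:ℝ)..s, ψ n r := by
    intro s hs n
    have hd : ∀ x ∈ Ioo (0:ℝ) s, HasDerivAt (fun r => p r n * φ r ^ n) (ψ n x) x := by
      intro x hx
      have hpd : HasDerivAt (fun r => p r n) (dispGen μ (p x) n) x :=
        (hpderiv x hx.1.le n).hasDerivAt (Ici_mem_nhds hx.1)
      have hφd : HasDerivAt φ (-(c * Real.exp x)) x := by
        simpa using ((Real.hasDerivAt_exp x).const_mul c).const_sub 1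
      exact hpd.mul (hφd.pow n)
    have hcont : ContinuousOn (fun r => p r n * φ r ^ n) (Icc 0 s) :=
      ((pcont hp' n).mono (Icc_subset_Ici_self)).mul (hφcont.pow n).continuousOn
    have hint : IntervalIntegrable (ψ n) volume 0 s :=
      ContinuousOn.intervalIntegrable_of_Icc hs.1
        ((hψcont n).mono (Icc_subset_Ici_self))
    exact (integral_eq_sub_of_hasDeriv_right_of_le hs.1 hcont
      (fun x hx => (hd x hx).hasDerivWithinAt) hint).symm
  -- measurability of ψ n on Ioc 0 s
  have hmeas : ∀ s ∈ Icc (0:ℝ) t, ∀ n : ℕ,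
      AEStronglyMeasurable (ψ n) (volume.restrict (Ioc 0 s)) := by
    intro s _ n
    exact ((hψcont n).mono (Ioc_subset_Icc_self.trans Icc_subset_Ici_self)).aestronglyMeasurable measurableSet_Ioc
  -- the lintegral bound
  have hlint : ∀ s ∈ Icc (0:ℝ) t,
      ∑' n : ℕ, ∫⁻ r in Ioc (0:ℝ) s, ‖ψ n r‖₊ ≠ ⊤ := by
    intro s hs
    rw [← MeasureTheory.lintegral_tsum (fun n => (hmeas s hs n).nnnorm.aemeasurable.coe_nnreal_ennreal)]
    have hb : ∫⁻ r in Ioc (0:ℝ) s, (∑' n : ℕ, (‖ψ n r‖₊ : ℝ≥0∞))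
        ≤ ∫⁻ _r in Ioc (0:ℝ) s, ENNReal.ofReal (6 * μ + 2) := by
      refine lintegral_mono_ae ((ae_restrict_iff' measurableSet_Ioc).mpr
        (Filter.Eventually.of_forall (fun r hr => ?_)))
      have hr' : r ∈ Icc (0:ℝ) t := ⟨hr.1.le, hr.2.trans hs.2⟩
      obtain ⟨hsumm, hle⟩ := hψbnd r hr'
      have e1 : (∑' n : ℕ, (‖ψ n r‖₊ : ℝ≥0∞)) = ENNReal.ofReal (∑' n : ℕ, ‖ψ n r‖) := by
        rw [ENNReal.ofReal_tsum_of_nonneg (fun n => norm_nonneg _) hsumm]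
        congr 1; funext n; rw [ofReal_norm, enorm_eq_nnnorm]
      rw [e1]
      exact ENNReal.ofReal_le_ofReal hle
    refine ne_top_of_le_ne_top ?_ hb
    rw [MeasureTheory.setLIntegral_const]
    exact ENNReal.mul_ne_top ENNReal.ofReal_ne_top (by simp [Real.volume_Ioc])
  -- representation of h via the series of primitives
  have hrep : ∀ s ∈ Icc (0:ℝ) t, h s = h 0 + ∑' n : ℕ, ∫ r in Ioc (0:ℝ) s, ψ n r := by
    intro s hs
    have hxs := (summable_px (p s) (hsum1 s hs.1).summable (φ s) (hφabs s hs)).hasSum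
    have hx0 := (summable_px (p 0) (hsum1 0 le_rfl).summable (φ 0)
      (hφabs 0 ⟨le_rfl, ht⟩)).hasSum
    have hdiff : HasSum (fun n => p s n * φ s ^ n - p 0 n * φ 0 ^ n) (h s - h 0) :=
      hxs.sub hx0
    have e1 : h s - h 0 = ∑' n : ℕ, (p s n * φ s ^ n - p 0 n * φ 0 ^ n) := hdiff.tsum_eq.symm
    have e2 : (∑' n : ℕ, (p s n * φ s ^ n - p 0 n * φ 0 ^ n))
        = ∑' n : ℕ, ∫ r in Ioc (0:ℝ) s, ψ n r := by
      refine tsum_congr (fun n => ?_)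
      rw [hftc s hs n, intervalIntegral.integral_of_le hs.1]
    linarith [e1.trans e2]
  -- swap sum and integral
  have hswap : ∀ s ∈ Icc (0:ℝ) t,
      (∑' n : ℕ, ∫ r in Ioc (0:ℝ) s, ψ n r) = ∫ r in Ioc (0:ℝ) s, w r := by
    intro s hs
    rw [← MeasureTheory.integral_tsum (fun n => hmeas s hs n) (hlint s hs)]
    refine setIntegral_congr_fun measurableSet_Ioc (fun r hr => ?_)
    exact (hψsum r ⟨hr.1.le, hr.2.trans hs.2⟩).tsum_eq
  -- continuity of h on [0, t]
  have hcont_h : ContinuousOn h (Icc 0 t) := by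
    have hc2 : ContinuousOn (fun s => h 0 + ∑' n : ℕ, ∫ r in Ioc (0:ℝ) s, ψ n r)
        (Icc 0 t) := by
      refine continuousOn_const.add (continuousOn_tsum
        (fun n => intervalIntegral.continuousOn_primitive
          (((hψcont n).mono Icc_subset_Ici_self).integrableOn_Icc))
        (ENNReal.summable_toReal (hlint t ⟨ht, le_rfl⟩)) (fun n s hs => ?_))
      have e1 : ‖∫ r in Ioc (0:ℝ) s, ψ n r‖
          ≤ (∫⁻ r in Ioc (0:ℝ) s, (‖ψ n r‖₊ : ℝ≥0∞)).toReal := by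
        have := MeasureTheory.norm_integral_le_lintegral_norm
          (μ := volume.restrict (Ioc (0:ℝ) s)) (ψ n)
        simpa only [ofReal_norm, enorm_eq_nnnorm] using this
      refine e1.trans (ENNReal.toReal_mono (ENNReal.ne_top_of_tsum_ne_top
        (hlint t ⟨ht, le_rfl⟩) n) ?_)
      exact lintegral_mono' (Measure.restrict_mono (Ioc_subset_Ioc_right hs.2) le_rfl) le_rfl
    exact hc2.congr (fun s hs => hrep s hs)
  -- continuity of w
  have hw_cont : ContinuousOn w (Icc 0 t) := by
    refine (((continuous_const.mul Real.continuous_exp).neg).continuousOn).mul ?_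
    exact (((pcont hp' 1).mono Icc_subset_Ici_self).add
      ((continuousOn_const.sub ((pcont hp' 1).mono Icc_subset_Ici_self)).mul hcont_h))
  -- representation via interval integral of w
  have hrep2 : ∀ s ∈ Icc (0:ℝ) t, h s = h 0 + ∫ r in (0:ℝ)..s, w r := by
    intro s hs
    rw [intervalIntegral.integral_of_le hs.1, ← hswap s hs]
    exact hrep s hs
  -- generic right-derivative of primitives
  have primderiv : ∀ f : ℝ → ℝ, ContinuousOn f (Icc 0 t) → ∀ x ∈ Ico (0:ℝ) t,
      HasDerivWithinAt (fun u => ∫ r in (0:ℝ)..u, f r) (f x) (Ici x) x := by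
    intro f hf x hx
    have hmem : Icc (0:ℝ) t ∈ nhdsWithin x (Ici x) := Icc_mem_nhdsGE_of_mem hx
    have hmem' : Icc (0:ℝ) t ∈ nhdsWithin x (Ioi x) :=
      nhdsWithin_mono x Ioi_subset_Ici_self hmem
    refine intervalIntegral.integral_hasDerivWithinAt_right ?_
      ⟨Icc (0:ℝ) t, hmem', hf.aestronglyMeasurable measurableSet_Icc⟩
      ((hf x ⟨hx.1, hx.2.le⟩).mono_of_mem_nhdsWithin hmem')
    exact ContinuousOn.intervalIntegrable_of_Icc hx.1
      (hf.mono (Icc_subset_Icc le_rfl hx.2.le))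
  -- continuity of primitives
  have primcont : ∀ f : ℝ → ℝ, ContinuousOn f (Icc 0 t) →
      ContinuousOn (fun u => ∫ r in (0:ℝ)..u, f r) (Icc 0 t) := by
    intro f hf
    have h1 := intervalIntegral.continuousOn_primitive (f := f) (a := 0) (b := t)
      (μ := volume) (hf.integrableOn_Icc)
    exact h1.congr (fun u hu => intervalIntegral.integral_of_le hu.1)
  -- ODE ingredients
  have hJint : ContinuousOn (fun r => Real.exp r * (μ - p r 1)) (Icc 0 t) :=
    Real.continuous_exp.continuousOn.mul
      (continuousOn_const.sub ((pcont hp' 1).mono Icc_subset_Ici_self))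
  have hJcont : ContinuousOn J (Icc 0 t) := primcont _ hJint
  have hVcont : ContinuousOn V (Icc 0 t) :=
    Real.continuous_exp.comp_continuousOn (continuousOn_const.mul hJcont)
  have hKint : ContinuousOn (fun r => Real.exp r * V r) (Icc 0 t) :=
    Real.continuous_exp.continuousOn.mul hVcont
  have hKcont : ContinuousOn K (Icc 0 t) := primcont _ hKint
  set F : ℝ → ℝ := fun s => V s * (h s - 1) + μ * c * K s with hF
  have hFcont : ContinuousOn F (Icc 0 t) :=
    (hVcont.mul (hcont_h.sub continuousOn_const)).add (continuousOn_const.mul hKcont)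
  have hFderiv : ∀ x ∈ Ico (0:ℝ) t, HasDerivWithinAt F 0 (Ici x) x := by
    intro x hx
    have hmem : Icc (0:ℝ) t ∈ nhdsWithin x (Ici x) := Icc_mem_nhdsGE_of_mem hx
    have hxIcc : x ∈ Icc (0:ℝ) t := ⟨hx.1, hx.2.le⟩
    have hd_J : HasDerivWithinAt J (Real.exp x * (μ - p x 1)) (Ici x) x :=
      primderiv _ hJint x hx
    have hd_V : HasDerivWithinAt V (Real.exp (c * J x) * (c * (Real.exp x * (μ - p x 1))))
        (Ici x) x := (hd_J.const_mul c).exp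
    have hd_K : HasDerivWithinAt K (Real.exp x * V x) (Ici x) x := primderiv _ hKint x hx
    have hd_h : HasDerivWithinAt h (w x) (Ici x) x := by
      have hprim : HasDerivWithinAt (fun u => h 0 + ∫ r in (0:ℝ)..u, w r) (w x) (Ici x) x :=
        ((primderiv _ hw_cont x hx)).const_add (h 0)
      refine hprim.congr_of_eventuallyEq ?_ (hrep2 x hxIcc)
      exact Filter.eventuallyEq_of_mem hmem (fun y hy => hrep2 y hy)
    have hcomb : HasDerivWithinAt F
        (Real.exp (c * J x) * (c * (Real.exp x * (μ - p x 1))) * (h x - 1)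
          + V x * w x + μ * c * (Real.exp x * V x)) (Ici x) x :=
      (hd_V.mul (hd_h.sub_const 1)).add (hd_K.const_mul (μ * c))
    have : Real.exp (c * J x) * (c * (Real.exp x * (μ - p x 1))) * (h x - 1)
        + V x * w x + μ * c * (Real.exp x * V x) = 0 := by
      have hVx : V x = Real.exp (c * J x) := rfl
      rw [hw, ← hVx]
      ring
    rwa [this] at hcomb
  have hF0 : F t = F 0 := by
    have := constant_of_has_deriv_right_zero hFcont hFderiv t ⟨ht, le_rfl⟩
    exact this
  have hJ0 : J 0 = 0 := intervalIntegral.integral_same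
  have hK0 : K 0 = 0 := intervalIntegral.integral_same
  have hV0 : V 0 = 1 := by rw [hV]; simp [hJ0]
  have hF0' : F 0 = h 0 - 1 := by rw [hF]; simp [hV0, hK0]
  have hVt_pos : 0 < V t := Real.exp_pos _
  have hmain : h t = 1 + (h 0 - 1 - μ * c * K t) * (V t)⁻¹ := by
    have hFt : V t * (h t - 1) + μ * c * K t = h 0 - 1 := by rw [← hF0']; exact hF0
    have hdiv : h t - 1 = (h 0 - 1 - μ * c * K t) / V t := by
      rw [eq_div_iff hVt_pos.ne']
      linarith [hFt]
    rw [div_eq_mul_inv] at hdiv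
    linarith [hdiv]
  -- identification with the statement
  have hφt : φ t = 1 - z := by
    have : c * Real.exp t = z := by
      rw [hc, mul_assoc, ← Real.exp_add]; simp
    simp [hφ, this]
  have hlhs : pgf p t (1 - z) = h t := by
    rw [pgf, show h t = ∑' n : ℕ, p t n * φ t ^ n from rfl, hφt]
  have hφ0 : φ 0 = 1 - c := by simp [hφ]
  have hpgf0 : pgf p 0 (1 - c) = h 0 := by
    rw [pgf, show h 0 = ∑' n : ℕ, p 0 n * φ 0 ^ n from rfl, hφ0]
  -- auxv identities
  have hauxv : ∀ s : ℝ, auxv μ p s = Real.exp (Real.exp (-s) * J s) := by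
    intro s
    rw [auxv, hJ]
    congr 1
    rw [← intervalIntegral.integral_const_mul]
    refine intervalIntegral.integral_congr (fun r _ => ?_)
    rw [Real.exp_add]; ring
  have hVs : ∀ s : ℝ, (auxv μ p s) ^ (z * Real.exp (-t + s)) = V s := by
    intro s
    rw [hauxv s, Real.rpow_def_of_pos (Real.exp_pos _), Real.log_exp]
    show Real.exp _ = Real.exp (c * J s)
    congr 1
    have he : Real.exp (-s) * Real.exp (-t + s) = Real.exp (-t) := by
      rw [← Real.exp_add]; ring_nf
    calc Real.exp (-s) * J s * (z * Real.exp (-t + s))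
        = z * (Real.exp (-s) * Real.exp (-t + s)) * J s := by ring
      _ = z * Real.exp (-t) * J s := by rw [he]
      _ = c * J s := by rw [hc]
  have hInt : (∫ s in (0:ℝ)..t, auxv μ p s ^ (z * Real.exp (-t + s)) * Real.exp (-t + s))
      = Real.exp (-t) * K t := by
    show _ = Real.exp (-t) * ∫ r in (0:ℝ)..t, Real.exp r * V r
    rw [← intervalIntegral.integral_const_mul]
    refine intervalIntegral.integral_congr (fun s _ => ?_)
    rw [hVs s, Real.exp_add]
    ring
  have hVtz : auxv μ p t ^ (-z) = (V t)⁻¹ := by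
    rw [hauxv t, Real.rpow_def_of_pos (Real.exp_pos _), Real.log_exp]
    show _ = (Real.exp (c * J t))⁻¹
    rw [← Real.exp_neg]
    congr 1
    rw [hc]; ring
  rw [hlhs, hpgf0, hInt, hVtz, hmain, hc]
  ring

end main
end DispAux

theorem pgf_explicit_formula (μ : ℝ) (hμ : 0 < μ) (p : ℝ → ℕ → ℝ) (hp : IsSol μ p) :
    ∀ z ∈ Set.Icc (0:ℝ) 2, ∀ t : ℝ, 0 ≤ t →
      pgf p t (1 - z) = 1 +
        (pgf p 0 (1 - z * Real.exp (-t)) - 1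
          - μ * z * ∫ s in (0:ℝ)..t,
              (auxv μ p s) ^ (z * Real.exp (-t + s)) * Real.exp (-t + s))
        * (auxv μ p t) ^ (-z) :=
  DispAux.main hμ hp
end
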